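/- arXiv:1310.7558 — 3 statements merged into one kernel-verified Lean document; each statement's English description precedes it below -/
import Mathlib

section
/- Let F be a grounded family, let X, Y, Z ∈ F with X ∩ Y ≠ ∅, and let C₁ and C₂ be two distinct path-connected components of H \ (X ∪ Y). Let z, z′ be distinct points of Z ∩ C₁. If every arc between z and z′ within Z intersects C₂, then every arc between z and z′ within Z intersects both X and Y. -/
open Set

noncomputable section

/-- The closed upper halfplane. -/
def UpperHalf : Set (ℝ × ℝ) := {p | 0 ≤ p.2}

/-- The baseline `ℝ × {0}`. -/
def Baseline : Set (ℝ × ℝ) := {p | p.2 = 0}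

/-- The base of a set: its intersection with the baseline. -/
def base (X : Set (ℝ × ℝ)) : Set (ℝ × ℝ) := X ∩ Baseline

/-- `A` is an arc between `x` and `y`: the image of a continuous injective map on `[0,1]`. -/
def IsArcBetween (A : Set (ℝ × ℝ)) (x y : ℝ × ℝ) : Prop :=
  ∃ φ : ℝ → ℝ × ℝ, ContinuousOn φ (Icc 0 1) ∧ InjOn φ (Icc 0 1) ∧
    φ 0 = x ∧ φ 1 = y ∧ A = φ '' Icc 0 1

/-- A family of sets is simple if the intersection of every nonempty subfamily is
empty or path-connected. -/
def IsSimpleFamily (F : Set (Set (ℝ × ℝ))) : Prop :=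
  ∀ G ⊆ F, G.Nonempty → ⋂₀ G = ∅ ∨ IsPathConnected (⋂₀ G)

/-- A grounded set: a compact path-connected subset of the upper halfplane whose base
is a nonempty segment of the baseline. -/
def Grounded (X : Set (ℝ × ℝ)) : Prop :=
  X ⊆ UpperHalf ∧ IsCompact X ∧ IsPathConnected X ∧
    ∃ a b : ℝ, a ≤ b ∧ base X = Icc a b ×ˢ ({0} : Set ℝ)

/-- A grounded family: a finite simple family of grounded sets with pairwise disjoint bases. -/
def GroundedFamily (F : Set (Set (ℝ × ℝ))) : Prop :=
  F.Finite ∧ (∀ X ∈ F, Grounded X) ∧ IsSimpleFamily F ∧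
    F.Pairwise fun X Y => Disjoint (base X) (base Y)

/-- The intersection graph of `F` is properly colorable with `n` colors. -/
def FamColorable (F : Set (Set (ℝ × ℝ))) (n : ℕ) : Prop :=
  ∃ c : Set (ℝ × ℝ) → ℕ, (∀ X ∈ F, c X < n) ∧
    ∀ X ∈ F, ∀ Y ∈ F, X ≠ Y → (X ∩ Y).Nonempty → c X ≠ c Y

/-- The clique number of the intersection graph of `F` is at most `k`. -/
def CliqueBdd (F : Set (Set (ℝ × ℝ))) (k : ℕ) : Prop :=
  ∀ G ⊆ F, (G.Pairwise fun X Y => (X ∩ Y).Nonempty) → G.ncard ≤ k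

/-- `X ≺ Y` : the base of `X` lies entirely to the left of the base of `Y`. -/
def Before (X Y : Set (ℝ × ℝ)) : Prop :=
  ∀ p ∈ base X, ∀ q ∈ base Y, p.1 < q.1

/-- The exterior of `X`: the unique unbounded path-connected component of
`UpperHalf \ X` (described as the set of points of `UpperHalf \ X` whose
path component therein is unbounded). -/
def extSet (X : Set (ℝ × ℝ)) : Set (ℝ × ℝ) :=
  {p | p ∈ UpperHalf \ X ∧ ¬ Bornology.IsBounded (pathComponentIn (UpperHalf \ X) p)}

/-- `X` is surrounded by `S` if it is disjoint from `S ∪ ext(S)`. -/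
def SurroundedBy (X S : Set (ℝ × ℝ)) : Prop :=
  Disjoint X (S ∪ extSet S)

/-- `cut R S`: the closure of the path-connected component of `R \ S` containing `base R`. -/
def cut (R S : Set (ℝ × ℝ)) : Set (ℝ × ℝ) :=
  closure (⋃ x ∈ base R, pathComponentIn (R \ S) x)

/-- `C` is a path-connected component of `U`. -/
def IsPathComponentOf (C U : Set (ℝ × ℝ)) : Prop :=
  ∃ p ∈ U, C = pathComponentIn U p

/-- The closed region enclosed by a Jordan curve `C`: the union of `C` with all points
whose path component in the complement of `C` is bounded. -/
def JordanRegion (C : Set (ℝ × ℝ)) : Set (ℝ × ℝ) :=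
  C ∪ {x | x ∉ C ∧ Bornology.IsBounded (pathComponentIn Cᶜ x)}

/-- `L` is a line in the plane. -/
def IsLine (L : Set (ℝ × ℝ)) : Prop :=
  ∃ a d : ℝ × ℝ, d ≠ 0 ∧ L = {p | ∃ t : ℝ, p = a + t • d}

/-- `x` is a neighbor of `R i` (within region `J`, among `R 0, …, R (m-1)`). -/
def Nbr (J : Set (ℝ × ℝ)) (m : ℕ) (R : ℕ → Set (ℝ × ℝ)) (i : ℕ) (x : ℝ × ℝ) : Prop :=
  x ∈ J ∧ ∃ A y, y ∈ R i ∧ A ⊆ J ∧ IsArcBetween A x y ∧ ∀ j < m, j ≠ i → Disjoint A (R j)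

/-- `Iset J m R i`: the points of `J` that are neighbors of both `R i` and `R (i+1)`. -/
def Iset (J : Set (ℝ × ℝ)) (m : ℕ) (R : ℕ → Set (ℝ × ℝ)) (i : ℕ) : Set (ℝ × ℝ) :=
  {x | Nbr J m R i x ∧ Nbr J m R (i + 1) x}

/-- The alternating sequence `R 0, I 0, R 1, I 1, …, R (m-1)` (0-based). -/
def seqRI (R I : ℕ → Set (ℝ × ℝ)) (n : ℕ) : Set (ℝ × ℝ) :=
  if n % 2 = 0 then R (n / 2) else I (n / 2)

section ArcLemmaSec

variable {γ : ℝ → ℝ × ℝ}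

def ArcGood (γ : ℝ → ℝ × ℝ) (K : Set ℝ) : Prop :=
  IsClosed K ∧ K ⊆ Icc 0 1 ∧ (0:ℝ) ∈ K ∧ (1:ℝ) ∈ K ∧
    ∀ a ∈ K, ∀ b ∈ K, a < b → Ioo a b ∩ K = ∅ → γ a = γ b

lemma arcGood_Icc (γ : ℝ → ℝ × ℝ) : ArcGood γ (Icc 0 1) := by
  refine ⟨isClosed_Icc, subset_rfl, by norm_num, by norm_num, ?_⟩
  intro a ha b hb hab hgap
  exfalso
  have hmem : (a + b)/2 ∈ Ioo a b ∩ Icc 0 1 := by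
    refine ⟨⟨by linarith, by linarith⟩, ⟨by linarith [ha.1, hb.1], by linarith [ha.2, hb.2]⟩⟩
  rw [hgap] at hmem
  exact hmem

structure MinGood (γ : ℝ → ℝ × ℝ) (K : Set ℝ) : Prop where
  closed : IsClosed K
  sub : K ⊆ Icc 0 1
  mem0 : (0:ℝ) ∈ K
  mem1 : (1:ℝ) ∈ K
  good : ∀ a ∈ K, ∀ b ∈ K, a < b → Ioo a b ∩ K = ∅ → γ a = γ b
  gapOf : ∀ a ∈ K, ∀ b ∈ K, a < b → γ a = γ b → Ioo a b ∩ K = ∅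

lemma exists_minGood (hγ : ContinuousOn γ (Icc 0 1)) : ∃ K, MinGood γ K := by
  classical
  set S : Set (Set ℝ) := {K | ArcGood γ K} with hS
  have hzorn : ∀ c ⊆ S, IsChain (· ⊆ ·) c → c.Nonempty →
      ∃ lb ∈ S, ∀ s ∈ c, lb ⊆ s := by
    intro c hcS hchain hcne
    obtain ⟨K₀, hK₀⟩ := hcne
    have hK₀S : ArcGood γ K₀ := hcS hK₀
    refine ⟨⋂₀ c, ?_, fun s hs => sInter_subset_of_mem hs⟩
    have hclosed : IsClosed (⋂₀ c) := by
      refine isClosed_sInter ?_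
      intro k hk; exact (hcS hk).1
    have hsub : ⋂₀ c ⊆ Icc 0 1 := (sInter_subset_of_mem hK₀).trans hK₀S.2.1
    have h0 : (0:ℝ) ∈ ⋂₀ c := by
      rw [mem_sInter]; intro k hk; exact (hcS hk).2.2.1
    have h1 : (1:ℝ) ∈ ⋂₀ c := by
      rw [mem_sInter]; intro k hk; exact (hcS hk).2.2.2.1
    refine ⟨hclosed, hsub, h0, h1, ?_⟩
    intro a ha b hb hab hgap
    -- key step : for each small ε there is a chain member avoiding the middle interval
    have key : ∀ ε : ℝ, 0 < ε → ε < (b - a)/2 →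
        ∃ aε bε : ℝ, aε ∈ Icc 0 1 ∧ bε ∈ Icc 0 1 ∧ a ≤ aε ∧ aε ≤ a + ε ∧
          b - ε ≤ bε ∧ bε ≤ b ∧ γ aε = γ bε := by
      intro ε hε hεab
      -- find a chain member missing [a+ε, b-ε]
      have hmiss : ∃ k ∈ c, k ∩ Icc (a+ε) (b-ε) = ∅ := by
        by_contra hno
        push_neg at hno
        have hne' : Nonempty c := ⟨⟨K₀, hK₀⟩⟩
        have hdir : Directed (· ⊇ ·) (fun i : c => (i : Set ℝ) ∩ Icc (a+ε) (b-ε)) := by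
          intro i j
          rcases hchain.total i.2 j.2 with h | h
          · exact ⟨i, subset_rfl, inter_subset_inter_left _ h⟩
          · exact ⟨j, inter_subset_inter_left _ h, subset_rfl⟩
        have hnonempty : ∀ i : c, ((i : Set ℝ) ∩ Icc (a+ε) (b-ε)).Nonempty := by
          intro i
          rcases hno i i.2 with ⟨x, hx⟩
          exact ⟨x, hx⟩
        have hcomp : ∀ i : c, IsCompact ((i : Set ℝ) ∩ Icc (a+ε) (b-ε)) := by
          intro i
          exact isCompact_Icc.inter_left (hcS i.2).1
        have hcl : ∀ i : c, IsClosed ((i : Set ℝ) ∩ Icc (a+ε) (b-ε)) := by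
          intro i
          exact ((hcS i.2).1).inter isClosed_Icc
        have hne2 := IsCompact.nonempty_iInter_of_directed_nonempty_isCompact_isClosed
          _ hdir hnonempty hcomp hcl
        obtain ⟨x, hx⟩ := hne2
        rw [mem_iInter] at hx
        have hx1 : x ∈ ⋂₀ c := by
          rw [mem_sInter]
          intro k hk
          exact ((hx ⟨k, hk⟩).1)
        have hx2 : x ∈ Icc (a+ε) (b-ε) := (hx ⟨K₀, hK₀⟩).2
        have : x ∈ Ioo a b ∩ ⋂₀ c := ⟨⟨by linarith [hx2.1], by linarith [hx2.2]⟩, hx1⟩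
        rw [hgap] at this
        exact this
      obtain ⟨k, hkc, hkmiss⟩ := hmiss
      have hkS : ArcGood γ k := hcS hkc
      have hak : a ∈ k := (sInter_subset_of_mem hkc) ha
      have hbk : b ∈ k := (sInter_subset_of_mem hkc) hb
      -- sup of k in [a, a+ε]
      have hsetA : (k ∩ Icc a (a+ε)).Nonempty := ⟨a, hak, le_refl a, by linarith⟩
      have hcompA : IsCompact (k ∩ Icc a (a+ε)) := isCompact_Icc.inter_left hkS.1
      set aε := sSup (k ∩ Icc a (a+ε)) with haε
      have hamem : aε ∈ k ∩ Icc a (a+ε) := hcompA.sSup_mem hsetA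
      have hsetB : (k ∩ Icc (b-ε) b).Nonempty := ⟨b, hbk, by linarith, le_refl b⟩
      have hcompB : IsCompact (k ∩ Icc (b-ε) b) := isCompact_Icc.inter_left hkS.1
      set bε := sInf (k ∩ Icc (b-ε) b) with hbε
      have hbmem : bε ∈ k ∩ Icc (b-ε) b := hcompB.sInf_mem hsetB
      have hlt : aε < bε := by
        have := hamem.2.2; have := hbmem.2.1; linarith
      have hgapk : Ioo aε bε ∩ k = ∅ := by
        ext x
        simp only [mem_inter_iff, mem_Ioo, mem_empty_iff_false, iff_false, not_and, and_imp]
        intro hx1 hx2 hxk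
        have hxa : ¬ (x ≤ a + ε) := by
          intro hle
          have hxA : x ∈ k ∩ Icc a (a+ε) := ⟨hxk, by linarith [hamem.2.1], hle⟩
          have := le_csSup hcompA.bddAbove hxA
          linarith
        have hxb : ¬ (b - ε ≤ x) := by
          intro hle
          have hxB : x ∈ k ∩ Icc (b-ε) b := ⟨hxk, hle, by linarith [hbmem.2.2]⟩
          have := csInf_le hcompB.bddBelow hxB
          linarith
        push_neg at hxa hxb
        have : x ∈ k ∩ Icc (a+ε) (b-ε) := ⟨hxk, le_of_lt hxa, le_of_lt hxb⟩
        rw [hkmiss] at this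
        exact this
      have := hkS.2.2.2.2 aε hamem.1 bε hbmem.1 hlt hgapk
      exact ⟨aε, bε, hkS.2.1 hamem.1, hkS.2.1 hbmem.1, hamem.2.1, hamem.2.2,
        hbmem.2.1, hbmem.2.2, this⟩
    -- now conclude γ a = γ b by continuity
    by_contra hab2
    have hd : 0 < dist (γ a) (γ b) := dist_pos.mpr hab2
    have haI : a ∈ Icc (0:ℝ) 1 := hsub ha
    have hbI : b ∈ Icc (0:ℝ) 1 := hsub hb
    obtain ⟨δ₁, hδ₁, hδ₁p⟩ := Metric.continuousWithinAt_iff.1 (hγ a haI) (dist (γ a) (γ b) / 2)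
      (by linarith)
    obtain ⟨δ₂, hδ₂, hδ₂p⟩ := Metric.continuousWithinAt_iff.1 (hγ b hbI) (dist (γ a) (γ b) / 2)
      (by linarith)
    set ε := min (min δ₁ δ₂) ((b-a)/2) / 2 with hε
    have hε0 : 0 < ε := by
      apply div_pos _ (by norm_num)
      apply lt_min (lt_min hδ₁ hδ₂)
      linarith
    have hεle1 : ε < δ₁ := by
      have h1 : ε ≤ min δ₁ δ₂ / 2 := div_le_div_of_nonneg_right (min_le_left _ _) (by norm_num)
      have h2 : min δ₁ δ₂ ≤ δ₁ := min_le_left _ _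
      have h3 : 0 < min δ₁ δ₂ := lt_min hδ₁ hδ₂
      linarith
    have hεle2 : ε < δ₂ := by
      have h1 : ε ≤ min δ₁ δ₂ / 2 := div_le_div_of_nonneg_right (min_le_left _ _) (by norm_num)
      have h2 : min δ₁ δ₂ ≤ δ₂ := min_le_right _ _
      have h3 : 0 < min δ₁ δ₂ := lt_min hδ₁ hδ₂
      linarith
    have hεab : ε < (b-a)/2 := by
      have h1 : ε ≤ ((b-a)/2) / 2 := div_le_div_of_nonneg_right (min_le_right _ _) (by norm_num)
      linarith
    obtain ⟨aε, bε, haI', hbI', h1, h2, h3, h4, heq⟩ := key ε hε0 hεab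
    have hda : dist (γ aε) (γ a) < dist (γ a) (γ b) / 2 := by
      apply hδ₁p haI'
      rw [Real.dist_eq, abs_lt]
      constructor <;> linarith
    have hdb : dist (γ bε) (γ b) < dist (γ a) (γ b) / 2 := by
      apply hδ₂p hbI'
      rw [Real.dist_eq, abs_lt]
      constructor <;> linarith
    have : dist (γ a) (γ b) ≤ dist (γ a) (γ aε) + dist (γ bε) (γ b) := by
      calc dist (γ a) (γ b) ≤ dist (γ a) (γ aε) + dist (γ aε) (γ b) := dist_triangle _ _ _
        _ = dist (γ a) (γ aε) + dist (γ bε) (γ b) := by rw [heq]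
    rw [dist_comm (γ a) (γ aε)] at this
    linarith
  obtain ⟨m, hmsub, hmin⟩ := zorn_superset_nonempty S hzorn (Icc 0 1) (arcGood_Icc γ)
  have hmS : ArcGood γ m := hmin.1
  refine ⟨m, hmS.1, hmS.2.1, hmS.2.2.1, hmS.2.2.2.1, hmS.2.2.2.2, ?_⟩
  -- gapOf from minimality
  intro a ha b hb hab heq
  set K' := m \ Ioo a b with hK'
  have hK'S : ArcGood γ K' := by
    refine ⟨hmS.1.inter (isOpen_Ioo.isClosed_compl), (diff_subset).trans hmS.2.1, ?_, ?_, ?_⟩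
    · refine ⟨hmS.2.2.1, ?_⟩
      simp only [mem_Ioo, not_and, not_lt]
      intro h0a
      exact absurd h0a (not_lt.2 (hmS.2.1 ha).1)
    · refine ⟨hmS.2.2.2.1, ?_⟩
      simp only [mem_Ioo, not_and, not_lt]
      intro _
      exact (hmS.2.1 hb).2
    · intro a' ha' b' hb' hlt hgap'
      by_cases hemp : Ioo a' b' ∩ m = ∅
      · exact hmS.2.2.2.2 a' ha'.1 b' hb'.1 hlt hemp
      · obtain ⟨x, hx1, hx2⟩ := nonempty_iff_ne_empty.2 hemp
        have hxK' : x ∉ K' := by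
          intro hxK'
          have : x ∈ Ioo a' b' ∩ K' := ⟨hx1, hxK'⟩
          rw [hgap'] at this; exact this
        have hxab : x ∈ Ioo a b := by
          by_contra hxab
          exact hxK' ⟨hx2, hxab⟩
        have ha'a : a' ≤ a := by
          by_contra hcon
          push_neg at hcon
          have : a' ∈ Ioo a b ∨ b ≤ a' := by
            rcases lt_or_ge a' b with h | h
            · exact Or.inl ⟨hcon, h⟩
            · exact Or.inr h
          rcases this with h | h
          · exact ha'.2 h
          · have := hx1.1; have := hxab.2; linarith
        have hbb' : b ≤ b' := by
          by_contra hcon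
          push_neg at hcon
          have : b' ∈ Ioo a b ∨ b' ≤ a := by
            rcases lt_or_ge a b' with h | h
            · exact Or.inl ⟨h, hcon⟩
            · exact Or.inr h
          rcases this with h | h
          · exact hb'.2 h
          · have := hx1.2; have := hxab.1; linarith
        have hga : γ a' = γ a := by
          rcases eq_or_lt_of_le ha'a with h | h
          · rw [h]
          · apply hmS.2.2.2.2 a' ha'.1 a ha h
            ext y
            simp only [mem_inter_iff, mem_Ioo, mem_empty_iff_false, iff_false, not_and, and_imp]
            intro hy1 hy2 hym
            have hyK' : y ∈ K' := ⟨hym, by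
              simp only [mem_Ioo, not_and, not_lt]
              intro h'; exfalso; linarith⟩
            have : y ∈ Ioo a' b' ∩ K' := ⟨⟨hy1, by
              have := hxab.1; have := hx1.2; linarith⟩, hyK'⟩
            rw [hgap'] at this; exact this
        have hgb : γ b = γ b' := by
          rcases eq_or_lt_of_le hbb' with h | h
          · rw [h]
          · apply hmS.2.2.2.2 b hb b' hb'.1 h
            ext y
            simp only [mem_inter_iff, mem_Ioo, mem_empty_iff_false, iff_false, not_and, and_imp]
            intro hy1 hy2 hym
            have hyK' : y ∈ K' := ⟨hym, by
              simp only [mem_Ioo, not_and, not_lt]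
              intro h'; linarith⟩
            have : y ∈ Ioo a' b' ∩ K' := ⟨⟨by
              have := hxab.2; have := hx1.1; linarith, hy2⟩, hyK'⟩
            rw [hgap'] at this; exact this
        exact hga.trans (heq.trans hgb)
  have hK'm : K' ⊆ m := diff_subset
  have : m ⊆ K' := hmin.2 hK'S hK'm
  ext x
  simp only [mem_inter_iff, mem_empty_iff_false, iff_false, not_and]
  intro hx1 hx2
  exact (this hx2).2 hx1


def rK (K : Set ℝ) (t : ℝ) : ℝ := sSup (K ∩ Icc 0 t)

def aK (γ : ℝ → ℝ × ℝ) (K : Set ℝ) (t : ℝ) : ℝ × ℝ := γ (rK K t)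

variable {K : Set ℝ}

lemma rK_nonpos (h : MinGood γ K) {t : ℝ} (ht : t ≤ 0) : rK K t = 0 := by
  rcases eq_or_lt_of_le ht with h0 | h0
  · have hset : K ∩ Icc 0 t = {0} := by
      ext x
      simp only [mem_inter_iff, mem_Icc, mem_singleton_iff]
      constructor
      · rintro ⟨_, hx0, hxt⟩; have ht0 : t = 0 := h0; linarith [hx0, hxt]
      · rintro rfl; exact ⟨h.mem0, le_refl 0, le_of_eq h0.symm⟩
    rw [rK, hset, csSup_singleton]
  · have hset : K ∩ Icc 0 t = ∅ := by
      ext x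
      simp only [mem_inter_iff, mem_Icc, mem_empty_iff_false, iff_false, not_and]
      intro _ hx0 hxt
      linarith
    rw [rK, hset, Real.sSup_empty]

lemma rK_mem (h : MinGood γ K) {t : ℝ} (ht : 0 ≤ t) : rK K t ∈ K ∩ Icc 0 t := by
  have hne : (K ∩ Icc 0 t).Nonempty := ⟨0, h.mem0, le_refl 0, ht⟩
  have hcomp : IsCompact (K ∩ Icc 0 t) := isCompact_Icc.inter_left h.closed
  exact hcomp.sSup_mem hne

lemma rK_inK (h : MinGood γ K) (t : ℝ) : rK K t ∈ K := by
  rcases le_or_gt t 0 with ht | ht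
  · rw [rK_nonpos h ht]; exact h.mem0
  · exact (rK_mem h ht.le).1

lemma rK_mem01 (h : MinGood γ K) (t : ℝ) : rK K t ∈ Icc (0:ℝ) 1 := h.sub (rK_inK h t)

lemma rK_le (h : MinGood γ K) {t : ℝ} (ht : 0 ≤ t) : rK K t ≤ t := (rK_mem h ht).2.2

lemma le_rK (h : MinGood γ K) {x t : ℝ} (hx : x ∈ K) (h0 : 0 ≤ x) (hxt : x ≤ t) :
    x ≤ rK K t :=
  le_csSup ⟨t, fun y hy => hy.2.2⟩ ⟨hx, h0, hxt⟩

lemma rK_self (h : MinGood γ K) {t : ℝ} (ht : t ∈ K) : rK K t = t :=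
  le_antisymm (rK_le h (h.sub ht).1) (le_rK h ht (h.sub ht).1 le_rfl)

lemma rK_one (h : MinGood γ K) {t : ℝ} (ht : 1 ≤ t) : rK K t = 1 :=
  le_antisymm (rK_mem01 h t).2 (le_rK h h.mem1 zero_le_one ht)

lemma rK_mono (h : MinGood γ K) : Monotone (rK K) := by
  intro s t hst
  rcases le_or_gt s 0 with hs | hs
  · rw [rK_nonpos h hs]; exact (rK_mem01 h t).1
  · exact csSup_le_csSup ⟨t, fun y hy => hy.2.2⟩ ⟨0, h.mem0, le_refl 0, by linarith⟩
      (inter_subset_inter_right K (Icc_subset_Icc_right hst))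

lemma aK_K (h : MinGood γ K) {t : ℝ} (ht : t ∈ K) : aK γ K t = γ t := by
  rw [aK, rK_self h ht]

lemma aK_gap (h : MinGood γ K) {a b : ℝ} (ha : a ∈ K) (hb : b ∈ K) (hab : a < b)
    (hgap : Ioo a b ∩ K = ∅) {x : ℝ} (hx : x ∈ Icc a b) : aK γ K x = γ a := by
  rcases eq_or_lt_of_le hx.2 with hxb | hxb
  · rw [hxb, aK_K h hb]
    exact (h.good a ha b hb hab hgap).symm
  · have h0a : 0 ≤ a := (h.sub ha).1
    have hr : rK K x = a := by
      apply le_antisymm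
      · by_contra hc
        push_neg at hc
        have h1 : rK K x ∈ K := rK_inK h x
        have h2 : rK K x ≤ x := rK_le h (le_trans h0a hx.1)
        have : rK K x ∈ Ioo a b ∩ K := ⟨⟨hc, lt_of_le_of_lt h2 hxb⟩, h1⟩
        rw [hgap] at this
        exact this
      · exact le_rK h ha h0a hx.1
    rw [aK, hr]

lemma aK_cont (h : MinGood γ K) (hγ : ContinuousOn γ (Icc 0 1)) :
    Continuous (aK γ K) := by
  rw [Metric.continuous_iff]
  intro t₀ ε hε
  have hcont : ∀ c ∈ Icc (0:ℝ) 1, ∃ δ > 0, ∀ s ∈ Icc (0:ℝ) 1,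
      dist s c < δ → dist (γ s) (γ c) < ε :=
    fun c hc => Metric.continuousWithinAt_iff.1 (hγ c hc) ε hε
  rcases lt_or_ge 1 t₀ with ht₀1 | ht₀1
  · -- t₀ > 1 : locally constant
    refine ⟨t₀ - 1, by linarith, ?_⟩
    intro t ht
    rw [Real.dist_eq] at ht
    have h1t : 1 ≤ t := by
      rcases abs_lt.1 ht with ⟨h1, _⟩; linarith
    rw [aK, aK, rK_one h h1t, rK_one h ht₀1.le]
    simpa using hε
  -- t₀ ≤ 1; build right and left moduli
  have hR : ∃ δ > 0, ∀ t, t₀ ≤ t → t - t₀ < δ → dist (aK γ K t) (aK γ K t₀) < ε := by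
    have hne : (K ∩ Ici t₀).Nonempty := ⟨1, h.mem1, ht₀1⟩
    have hclosed : IsClosed (K ∩ Ici t₀) := h.closed.inter isClosed_Ici
    have hcomp : IsCompact (K ∩ Ici t₀) :=
      IsCompact.of_isClosed_subset isCompact_Icc hclosed
        (fun x hx => h.sub hx.1)
    set c := sInf (K ∩ Ici t₀) with hc
    have hcK : c ∈ K ∩ Ici t₀ := hcomp.sInf_mem hne
    have hc0 : 0 ≤ c := (h.sub hcK.1).1
    have hac : γ (rK K t₀) = γ c := by
      have ha₀K : rK K t₀ ∈ K := rK_inK h t₀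
      have ha₀c : rK K t₀ ≤ c := by
        rcases lt_or_ge t₀ 0 with ht0 | ht0
        · rw [rK_nonpos h ht0.le]; exact hc0
        · exact le_trans (rK_le h ht0) hcK.2
      rcases eq_or_lt_of_le ha₀c with heq | hlt
      · rw [heq]
      · apply h.good _ ha₀K _ hcK.1 hlt
        ext x
        simp only [mem_inter_iff, mem_Ioo, mem_empty_iff_false, iff_false, not_and, and_imp]
        intro hx1 hx2 hxK
        rcases le_or_gt t₀ x with hx3 | hx3
        · have : c ≤ x := csInf_le hcomp.bddBelow ⟨hxK, hx3⟩
          linarith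
        · have hx0 : 0 ≤ x := le_trans (rK_mem01 h t₀).1 hx1.le
          have : x ≤ rK K t₀ := le_rK h hxK hx0 hx3.le
          linarith
    obtain ⟨δc, hδc, hcc⟩ := hcont c (h.sub hcK.1)
    refine ⟨(c - t₀) + δc, by have h' : t₀ ≤ c := hcK.2; linarith, ?_⟩
    intro t htt₀ htd
    rcases lt_or_ge t c with htc | htc
    · have hsets : K ∩ Icc 0 t = K ∩ Icc 0 t₀ := by
        ext x
        simp only [mem_inter_iff, mem_Icc]
        constructor
        · rintro ⟨hxK, hx0, hxt⟩
          refine ⟨hxK, hx0, ?_⟩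
          by_contra hcon
          push_neg at hcon
          have : c ≤ x := csInf_le hcomp.bddBelow ⟨hxK, hcon.le⟩
          linarith
        · rintro ⟨hxK, hx0, hxt⟩
          exact ⟨hxK, hx0, by linarith⟩
      rw [aK, aK, rK, rK, hsets]
      simpa using hε
    · have h1 : c ≤ rK K t := le_rK h hcK.1 hc0 htc
      have h2 : rK K t ≤ t := rK_le h (le_trans hc0 htc)
      have hdist : dist (rK K t) c < δc := by
        rw [Real.dist_eq, abs_lt]
        constructor <;> linarith
      have := hcc (rK K t) (rK_mem01 h t) hdist
      rw [aK, aK, hac]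
      exact this
  have hL : ∃ δ > 0, ∀ t, t < t₀ → t₀ - t < δ → dist (aK γ K t) (aK γ K t₀) < ε := by
    rcases le_or_gt t₀ 0 with ht₀0 | ht₀0
    · refine ⟨1, one_pos, ?_⟩
      intro t htlt _
      have e1 : rK K t = 0 := rK_nonpos h (by linarith)
      have e2 : rK K t₀ = 0 := rK_nonpos h ht₀0
      rw [aK, aK, e1, e2]
      simpa using hε
    · by_cases hB : ∃ δ₀ > 0, Ioo (t₀ - δ₀) t₀ ∩ K = ∅
      · obtain ⟨δ₀, hδ₀, hgap₀⟩ := hB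
        have hδ' : 0 < min δ₀ t₀ := lt_min hδ₀ ht₀0
        refine ⟨min δ₀ t₀, hδ', ?_⟩
        intro t htlt htd
        have htlow : t₀ - min δ₀ t₀ < t := by linarith
        have ht0 : 0 < t := by
          have : t₀ - min δ₀ t₀ ≥ 0 := by
            have := min_le_right δ₀ t₀; linarith
          linarith
        have heqv : aK γ K t = aK γ K t₀ := by
          by_cases ht₀K : t₀ ∈ K
          · -- use the gap between rK t and t₀
            have hmK : rK K t ∈ K := rK_inK h t
            have hm0 : 0 ≤ rK K t := (rK_mem01 h t).1
            have hmt : rK K t ≤ t := rK_le h ht0.le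
            have hgap2 : Ioo (rK K t) t₀ ∩ K = ∅ := by
              ext x
              simp only [mem_inter_iff, mem_Ioo, mem_empty_iff_false, iff_false,
                not_and, and_imp]
              intro hx1 hx2 hxK
              rcases le_or_gt x t with hx3 | hx3
              · have hx0 : 0 ≤ x := le_trans hm0 hx1.le
                have : x ≤ rK K t := le_rK h hxK hx0 hx3
                linarith
              · have hmin : min δ₀ t₀ ≤ δ₀ := min_le_left _ _
                have : x ∈ Ioo (t₀ - δ₀) t₀ ∩ K := ⟨⟨by linarith, hx2⟩, hxK⟩
                rw [hgap₀] at this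
                exact this
            have hmlt : rK K t < t₀ := lt_of_le_of_lt hmt htlt
            have := h.good _ hmK _ ht₀K hmlt hgap2
            rw [aK, aK, rK_self h ht₀K]
            rw [this]
          · -- sets agree
            have hsets : K ∩ Icc 0 t = K ∩ Icc 0 t₀ := by
              ext x
              simp only [mem_inter_iff, mem_Icc]
              constructor
              · rintro ⟨hxK, hx0, hxt⟩
                exact ⟨hxK, hx0, by linarith⟩
              · rintro ⟨hxK, hx0, hxt⟩
                refine ⟨hxK, hx0, ?_⟩
                by_contra hcon
                push_neg at hcon
                rcases eq_or_lt_of_le hxt with hx4 | hx4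
                · exact ht₀K (hx4 ▸ hxK)
                · have hmin : min δ₀ t₀ ≤ δ₀ := min_le_left _ _
                  have : x ∈ Ioo (t₀ - δ₀) t₀ ∩ K := ⟨⟨by linarith, hx4⟩, hxK⟩
                  rw [hgap₀] at this
                  exact this
            rw [aK, aK, rK, rK, hsets]
        rw [heqv]
        simpa using hε
      · push_neg at hB
        have ht₀K : t₀ ∈ K := by
          have hcl : t₀ ∈ closure K := by
            rw [Metric.mem_closure_iff]
            intro δ hδ
            obtain ⟨x, hx1, hx2⟩ := hB δ hδ
            exact ⟨x, hx2, by rw [dist_comm, Real.dist_eq, abs_lt]; constructor <;>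
              [linarith [hx1.1, hx1.2]; linarith [hx1.1, hx1.2]]⟩
          rwa [h.closed.closure_eq] at hcl
        obtain ⟨δc, hδc, hcc⟩ := hcont t₀ (h.sub ht₀K)
        obtain ⟨x₀, hx₀1, hx₀2⟩ := hB (min δc t₀) (lt_min hδc ht₀0)
        refine ⟨t₀ - x₀, by linarith [hx₀1.2], ?_⟩
        intro t htlt htd
        have hx₀t : x₀ ≤ t := by linarith
        have hx₀0 : 0 ≤ x₀ := (h.sub hx₀2).1
        have h1 : x₀ ≤ rK K t := le_rK h hx₀2 hx₀0 hx₀t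
        have h2 : rK K t ≤ t := rK_le h (le_trans hx₀0 hx₀t)
        have hdist : dist (rK K t) t₀ < δc := by
          rw [Real.dist_eq, abs_lt]
          have hmin : min δc t₀ ≤ δc := min_le_left _ _
          constructor <;> linarith [hx₀1.1, hx₀1.2]
        have := hcc (rK K t) (rK_mem01 h t) hdist
        rw [aK, aK, rK_self h ht₀K]
        exact this
  obtain ⟨δR, hδR, hRp⟩ := hR
  obtain ⟨δL, hδL, hLp⟩ := hL
  refine ⟨min δL δR, lt_min hδL hδR, ?_⟩
  intro t htd
  rw [Real.dist_eq] at htd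
  rcases abs_lt.1 htd with ⟨hd1, hd2⟩
  rcases lt_trichotomy t t₀ with hlt | heq | hgt
  · exact hLp t hlt (by have := min_le_left δL δR; linarith)
  · rw [heq]; simpa using hε
  · exact hRp t hgt.le (by have := min_le_right δL δR; linarith)


lemma aK_const_of_eq (h : MinGood γ K) {t₁ t₂ : ℝ} (h0 : 0 ≤ t₁) (h12 : t₁ ≤ t₂)
    (heq : aK γ K t₁ = aK γ K t₂) : ∀ x ∈ Icc t₁ t₂, aK γ K x = aK γ K t₁ := by
  intro x hx
  have hmono : rK K t₁ ≤ rK K t₂ := rK_mono h h12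
  have h1 : rK K t₁ ≤ rK K x := rK_mono h hx.1
  have h2 : rK K x ≤ rK K t₂ := rK_mono h hx.2
  rcases eq_or_lt_of_le hmono with he | hlt
  · have : rK K x = rK K t₁ := le_antisymm (he ▸ h2) h1
    show γ (rK K x) = γ (rK K t₁)
    rw [this]
  · have hgap : Ioo (rK K t₁) (rK K t₂) ∩ K = ∅ :=
      h.gapOf _ (rK_inK h t₁) _ (rK_inK h t₂) hlt heq
    rcases eq_or_lt_of_le h1 with he1 | hlt1
    · show γ (rK K x) = γ (rK K t₁)
      rw [← he1]
    · have hx2 : rK K x = rK K t₂ := by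
        rcases eq_or_lt_of_le h2 with he2 | hlt2
        · exact he2
        · exfalso
          have : rK K x ∈ Ioo (rK K t₁) (rK K t₂) ∩ K := ⟨⟨hlt1, hlt2⟩, rK_inK h x⟩
          rw [hgap] at this
          exact this
      show γ (rK K x) = γ (rK K t₁)
      rw [hx2]
      exact heq.symm

def dK (γ : ℝ → ℝ × ℝ) (K : Set ℝ) (u v t : ℝ) : ℝ :=
  Metric.diam (aK γ K '' Icc u (max u (min t v)))

lemma dK_nonneg : 0 ≤ dK γ K u v t := Metric.diam_nonneg

lemma dK_mono (h : MinGood γ K) (hγ : ContinuousOn γ (Icc 0 1)) {u v s t : ℝ} (hst : s ≤ t) :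
    dK γ K u v s ≤ dK γ K u v t := by
  apply Metric.diam_mono
  · apply image_mono
    apply Icc_subset_Icc_right
    exact max_le_max le_rfl (min_le_min hst le_rfl)
  · exact ((isCompact_Icc.image_of_continuousOn
      ((aK_cont h hγ).continuousOn)).isBounded)

lemma dK_cont (h : MinGood γ K) (hγ : ContinuousOn γ (Icc 0 1)) (u v : ℝ) :
    Continuous (fun t => dK γ K u v t) := by
  have hα : Continuous (aK γ K) := aK_cont h hγ
  rcases le_or_gt v u with hvu | huv
  · -- degenerate : constant function
    have : ∀ t, dK γ K u v t = Metric.diam (aK γ K '' Icc u u) := by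
      intro t
      have : max u (min t v) = u := max_eq_left ((min_le_right t v).trans hvu)
      rw [dK, this]
    simp only [this]
    exact continuous_const
  · -- main case : u < v
    have hDcont : ContinuousOn (fun s => Metric.diam (aK γ K '' Icc u s)) (Icc u v) := by
      rw [Metric.continuousOn_iff]
      intro s₀ hs₀ ε hε
      have huc : UniformContinuousOn (aK γ K) (Icc u v) :=
        isCompact_Icc.uniformContinuousOn_of_continuous hα.continuousOn
      obtain ⟨δ, hδ, hδp⟩ := Metric.uniformContinuousOn_iff.1 huc (ε/3) (by linarith)
      have hbdd : ∀ w : ℝ, Bornology.IsBounded (aK γ K '' Icc u w) := fun w =>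
        (isCompact_Icc.image_of_continuousOn hα.continuousOn).isBounded
      have key : ∀ s t : ℝ, s ∈ Icc u v → t ∈ Icc u v → s ≤ t → t - s < δ →
          Metric.diam (aK γ K '' Icc u t) ≤ Metric.diam (aK γ K '' Icc u s) + 2*(ε/3) := by
        intro s t hs ht hst hd
        apply Metric.diam_le_of_forall_dist_le
          (by have := Metric.diam_nonneg (s := aK γ K '' Icc u s); linarith)
        rintro x ⟨σ₁, hσ₁, rfl⟩ y ⟨σ₂, hσ₂, rfl⟩
        have hσ₁v : σ₁ ∈ Icc u v := ⟨hσ₁.1, hσ₁.2.trans ht.2⟩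
        have hσ₂v : σ₂ ∈ Icc u v := ⟨hσ₂.1, hσ₂.2.trans ht.2⟩
        have hsv : s ∈ Icc u v := hs
        have e1 : dist (aK γ K σ₁) (aK γ K (min σ₁ s)) ≤ ε/3 := by
          rcases le_total σ₁ s with hcase | hcase
          · rw [min_eq_left hcase, dist_self]; linarith
          · rw [min_eq_right hcase]
            apply le_of_lt
            apply hδp σ₁ hσ₁v s hsv
            rw [Real.dist_eq, abs_lt]
            constructor <;> [linarith [hσ₁.2]; linarith [hσ₁.2]]
        have e2 : dist (aK γ K σ₂) (aK γ K (min σ₂ s)) ≤ ε/3 := by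
          rcases le_total σ₂ s with hcase | hcase
          · rw [min_eq_left hcase, dist_self]; linarith
          · rw [min_eq_right hcase]
            apply le_of_lt
            apply hδp σ₂ hσ₂v s hsv
            rw [Real.dist_eq, abs_lt]
            constructor <;> [linarith [hσ₂.2]; linarith [hσ₂.2]]
        have m1 : min σ₁ s ∈ Icc u s := ⟨le_min hσ₁.1 hs.1, min_le_right _ _⟩
        have m2 : min σ₂ s ∈ Icc u s := ⟨le_min hσ₂.1 hs.1, min_le_right _ _⟩
        have e3 : dist (aK γ K (min σ₁ s)) (aK γ K (min σ₂ s)) ≤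
            Metric.diam (aK γ K '' Icc u s) :=
          Metric.dist_le_diam_of_mem (hbdd s) (mem_image_of_mem _ m1) (mem_image_of_mem _ m2)
        calc dist (aK γ K σ₁) (aK γ K σ₂)
            ≤ dist (aK γ K σ₁) (aK γ K (min σ₁ s)) +
              dist (aK γ K (min σ₁ s)) (aK γ K σ₂) := dist_triangle _ _ _
          _ ≤ dist (aK γ K σ₁) (aK γ K (min σ₁ s)) +
              (dist (aK γ K (min σ₁ s)) (aK γ K (min σ₂ s)) +
               dist (aK γ K (min σ₂ s)) (aK γ K σ₂)) := by
                have := dist_triangle (aK γ K (min σ₁ s)) (aK γ K (min σ₂ s)) (aK γ K σ₂)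
                linarith
          _ ≤ ε/3 + (Metric.diam (aK γ K '' Icc u s) + ε/3) := by
                rw [dist_comm (aK γ K (min σ₂ s)) (aK γ K σ₂)] at *
                gcongr
          _ = Metric.diam (aK γ K '' Icc u s) + 2*(ε/3) := by ring
      refine ⟨δ, hδ, ?_⟩
      intro s hs hds
      rw [Real.dist_eq] at hds ⊢
      rcases abs_lt.1 hds with ⟨hd1, hd2⟩
      rcases le_total s s₀ with hcase | hcase
      · have hmono : Metric.diam (aK γ K '' Icc u s) ≤ Metric.diam (aK γ K '' Icc u s₀) :=
          Metric.diam_mono (image_mono (Icc_subset_Icc_right hcase)) (hbdd s₀)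
        have := key s s₀ hs hs₀ hcase (by linarith)
        rw [abs_lt]
        constructor <;> linarith
      · have hmono : Metric.diam (aK γ K '' Icc u s₀) ≤ Metric.diam (aK γ K '' Icc u s) :=
          Metric.diam_mono (image_mono (Icc_subset_Icc_right hcase)) (hbdd s)
        have := key s₀ s hs₀ hs hcase (by linarith)
        rw [abs_lt]
        constructor <;> linarith
    have hclamp : Continuous (fun t : ℝ => max u (min t v)) :=
      continuous_const.max (continuous_id.min continuous_const)
    have hmaps : ∀ t : ℝ, max u (min t v) ∈ Icc u v := by
      intro t
      exact ⟨le_max_left _ _, max_le huv.le (min_le_right _ _)⟩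
    exact hDcont.comp_continuous hclamp hmaps


lemma dK_eq_of_const (h : MinGood γ K) (hγ : ContinuousOn γ (Icc 0 1)) {u v s t : ℝ}
    (hst : s ≤ t) (hconst : ∀ x ∈ Icc s t, aK γ K x = aK γ K s) :
    dK γ K u v s = dK γ K u v t := by
  set c₁ := max u (min s v) with hc₁
  set c₂ := max u (min t v) with hc₂
  have hc : c₁ ≤ c₂ := max_le_max le_rfl (min_le_min hst le_rfl)
  have himg : aK γ K '' Icc u c₂ = aK γ K '' Icc u c₁ := by
    apply subset_antisymm
    · rintro _ ⟨x, hx, rfl⟩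
      rcases le_or_gt x c₁ with hxc | hxc
      · exact mem_image_of_mem _ ⟨hx.1, hxc⟩
      · have hcc : c₁ < c₂ := lt_of_lt_of_le hxc hx.2
        have h1 : c₂ = min t v := by
          rcases le_total u (min t v) with hh | hh
          · rw [hc₂, max_eq_right hh]
          · exfalso
            have : c₂ = u := max_eq_left hh
            have : c₂ ≤ c₁ := this ▸ le_max_left u (min s v)
            linarith
        have h2 : min s v = s := by
          rcases le_total s v with hh | hh
          · exact min_eq_left hh
          · exfalso
            have hv : min s v = v := min_eq_right hh
            have : c₂ ≤ v := by rw [h1]; exact min_le_right _ _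
            have : c₂ ≤ c₁ := le_trans this (by rw [hc₁, hv]; exact le_max_right _ _)
            linarith
        have hxs : s ≤ x := by
          have : s ≤ c₁ := by rw [hc₁, h2]; exact le_max_right _ _
          linarith
        have hxt : x ≤ t := by
          have : x ≤ min t v := h1 ▸ hx.2
          exact this.trans (min_le_left _ _)
        have hc₁s : s ≤ c₁ := by rw [hc₁, h2]; exact le_max_right _ _
        have hc₁t : c₁ ≤ t := by
          have : c₁ ≤ min t v := h1 ▸ hc
          exact this.trans (min_le_left _ _)
        have e1 : aK γ K x = aK γ K s := hconst x ⟨hxs, hxt⟩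
        have e2 : aK γ K c₁ = aK γ K s := hconst c₁ ⟨hc₁s, hc₁t⟩
        refine ⟨c₁, ⟨le_max_left _ _, le_rfl⟩, ?_⟩
        rw [e2, ← e1]
    · exact image_mono (Icc_subset_Icc_right hc)
  rw [dK, dK, ← hc₁, ← hc₂, himg]

lemma exists_rat_sep (h : MinGood γ K) (hγ : ContinuousOn γ (Icc 0 1)) {s t : ℝ}
    (hnc : ¬ ∀ x ∈ Icc s t, aK γ K x = aK γ K s) :
    ∃ uq vq : ℚ, s ≤ (uq:ℝ) ∧ (uq:ℝ) < (vq:ℝ) ∧ (vq:ℝ) ≤ t ∧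
      aK γ K (uq:ℝ) ≠ aK γ K (vq:ℝ) := by
  push_neg at hnc
  obtain ⟨x, hx, hne⟩ := hnc
  have hsx : s < x := by
    rcases eq_or_lt_of_le hx.1 with he | he
    · exfalso; apply hne; rw [← he]
    · exact he
  have hα : Continuous (aK γ K) := aK_cont h hγ
  have hd1 : 0 < dist (aK γ K x) (aK γ K s) := dist_pos.2 hne
  obtain ⟨δ₁, hδ₁, hδ₁p⟩ := Metric.continuous_iff.1 hα s (dist (aK γ K x) (aK γ K s) / 2)
    (by linarith)
  obtain ⟨uq, huq1, huq2⟩ := exists_rat_btwn (lt_min (by linarith : s < s + δ₁) hsx)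
  have huqd : dist (aK γ K (uq:ℝ)) (aK γ K s) < dist (aK γ K x) (aK γ K s) / 2 := by
    apply hδ₁p
    rw [Real.dist_eq, abs_lt]
    have := lt_of_lt_of_le huq2 (min_le_left _ _)
    constructor <;> linarith
  have hne2 : aK γ K (uq:ℝ) ≠ aK γ K x := by
    intro hcon
    rw [hcon] at huqd
    linarith
  have hd2 : 0 < dist (aK γ K (uq:ℝ)) (aK γ K x) := dist_pos.2 hne2
  obtain ⟨δ₂, hδ₂, hδ₂p⟩ := Metric.continuous_iff.1 hα x (dist (aK γ K (uq:ℝ)) (aK γ K x) / 2)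
    (by linarith)
  have huqx : (uq:ℝ) < x := lt_of_lt_of_le huq2 (min_le_right _ _)
  obtain ⟨vq, hvq1, hvq2⟩ := exists_rat_btwn (max_lt huqx (by linarith : x - δ₂ < x))
  have hvqd : dist (aK γ K (vq:ℝ)) (aK γ K x) < dist (aK γ K (uq:ℝ)) (aK γ K x) / 2 := by
    apply hδ₂p
    rw [Real.dist_eq, abs_lt]
    have := lt_of_le_of_lt (le_max_right ((uq:ℝ)) (x - δ₂)) hvq1
    constructor <;> linarith
  refine ⟨uq, vq, huq1.le, ?_, ?_, ?_⟩
  · exact lt_of_le_of_lt (le_max_left _ _) hvq1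
  · linarith [hx.2]
  · intro hcon
    rw [hcon] at hvqd
    have hnn := dist_nonneg (x := aK γ K (vq:ℝ)) (y := aK γ K x)
    linarith

def pairEnum (n : ℕ) : ℚ × ℚ := (Denumerable.eqv (ℚ × ℚ)).symm n

def gK (γ : ℝ → ℝ × ℝ) (K : Set ℝ) (t : ℝ) : ℝ :=
  ∑' n : ℕ, (1/2:ℝ)^n * min (dK γ K ((pairEnum n).1 : ℝ) ((pairEnum n).2 : ℝ) t) 1

lemma gK_term_nonneg (n : ℕ) (t : ℝ) :
    0 ≤ (1/2:ℝ)^n * min (dK γ K ((pairEnum n).1 : ℝ) ((pairEnum n).2 : ℝ) t) 1 :=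
  mul_nonneg (pow_nonneg (by norm_num) n) (le_min dK_nonneg zero_le_one)

lemma gK_term_le (n : ℕ) (t : ℝ) :
    (1/2:ℝ)^n * min (dK γ K ((pairEnum n).1 : ℝ) ((pairEnum n).2 : ℝ) t) 1 ≤ (1/2:ℝ)^n := by
  nth_rewrite 2 [← mul_one ((1/2:ℝ)^n)]
  exact mul_le_mul_of_nonneg_left (min_le_right _ _) (pow_nonneg (by norm_num) n)

lemma gK_summable (t : ℝ) :
    Summable (fun n : ℕ => (1/2:ℝ)^n *
      min (dK γ K ((pairEnum n).1 : ℝ) ((pairEnum n).2 : ℝ) t) 1) :=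
  Summable.of_nonneg_of_le (fun n => gK_term_nonneg n t) (fun n => gK_term_le n t)
    summable_geometric_two

lemma gK_cont (h : MinGood γ K) (hγ : ContinuousOn γ (Icc 0 1)) : Continuous (gK γ K) := by
  apply continuous_tsum
  · intro n
    exact continuous_const.mul ((dK_cont h hγ _ _).min continuous_const)
  · exact summable_geometric_two
  · intro n t
    rw [Real.norm_eq_abs, abs_of_nonneg (gK_term_nonneg n t)]
    exact gK_term_le n t

lemma gK_mono (h : MinGood γ K) (hγ : ContinuousOn γ (Icc 0 1)) : Monotone (gK γ K) := by
  intro s t hst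
  apply Summable.tsum_le_tsum _ (gK_summable s) (gK_summable t)
  intro n
  exact mul_le_mul_of_nonneg_left (min_le_min (dK_mono h hγ hst) le_rfl)
    (pow_nonneg (by norm_num) n)

lemma gK_eq_of_const (h : MinGood γ K) (hγ : ContinuousOn γ (Icc 0 1)) {s t : ℝ}
    (hst : s ≤ t) (hconst : ∀ x ∈ Icc s t, aK γ K x = aK γ K s) : gK γ K s = gK γ K t := by
  unfold gK
  congr 1
  funext n
  rw [dK_eq_of_const h hγ hst hconst]

lemma gK_lt (h : MinGood γ K) (hγ : ContinuousOn γ (Icc 0 1)) {s t : ℝ} (hst : s < t)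
    (hnc : ¬ ∀ x ∈ Icc s t, aK γ K x = aK γ K s) : gK γ K s < gK γ K t := by
  obtain ⟨uq, vq, h1, h2, h3, h4⟩ := exists_rat_sep h hγ hnc
  set n₀ := (Denumerable.eqv (ℚ × ℚ)) (uq, vq) with hn₀
  have hpe : pairEnum n₀ = (uq, vq) := by
    rw [pairEnum, hn₀, Equiv.symm_apply_apply]
  have main : (1/2:ℝ)^n₀ * min (dK γ K (uq:ℝ) (vq:ℝ) s) 1 <
      (1/2:ℝ)^n₀ * min (dK γ K (uq:ℝ) (vq:ℝ) t) 1 := by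
    have hs0 : dK γ K (uq:ℝ) (vq:ℝ) s = 0 := by
      have hclamp : max (uq:ℝ) (min s (vq:ℝ)) = (uq:ℝ) := by
        rw [min_eq_left (by linarith : s ≤ (vq:ℝ)), max_eq_left h1]
      rw [dK, hclamp, Icc_self, image_singleton, Metric.diam_singleton]
    have ht0 : 0 < dK γ K (uq:ℝ) (vq:ℝ) t := by
      have hclamp : max (uq:ℝ) (min t (vq:ℝ)) = (vq:ℝ) := by
        rw [min_eq_right h3, max_eq_right h2.le]
      rw [dK, hclamp]
      have hbdd : Bornology.IsBounded (aK γ K '' Icc (uq:ℝ) (vq:ℝ)) :=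
        (isCompact_Icc.image_of_continuousOn ((aK_cont h hγ).continuousOn)).isBounded
      have := Metric.dist_le_diam_of_mem hbdd
        (mem_image_of_mem _ (⟨le_rfl, h2.le⟩ : (uq:ℝ) ∈ Icc (uq:ℝ) (vq:ℝ)))
        (mem_image_of_mem _ (⟨h2.le, le_rfl⟩ : (vq:ℝ) ∈ Icc (uq:ℝ) (vq:ℝ)))
      have hdpos : 0 < dist (aK γ K (uq:ℝ)) (aK γ K (vq:ℝ)) := dist_pos.2 h4
      linarith
    rw [hs0]
    have hmin0 : min (0:ℝ) 1 = 0 := min_eq_left zero_le_one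
    rw [hmin0, mul_zero]
    exact mul_pos (pow_pos (by norm_num) n₀) (lt_min ht0 one_pos)
  refine Summable.tsum_lt_tsum_of_nonneg (i := n₀) (fun n => gK_term_nonneg n s)
    (fun n => mul_le_mul_of_nonneg_left (min_le_min (dK_mono h hγ hst.le) le_rfl)
      (pow_nonneg (by norm_num) n)) ?_ (gK_summable t)
  rw [hpe]
  exact main

lemma gK_eq_iff (h : MinGood γ K) (hγ : ContinuousOn γ (Icc 0 1)) {s t : ℝ} (hst : s ≤ t) :
    gK γ K s = gK γ K t ↔ ∀ x ∈ Icc s t, aK γ K x = aK γ K s := by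
  constructor
  · intro heq
    by_contra hnc
    rcases eq_or_lt_of_le hst with he | hlt
    · apply hnc
      intro x hx
      have : x = s := le_antisymm (he ▸ hx.2) hx.1
      rw [this]
    · exact absurd heq (ne_of_lt (gK_lt h hγ hlt hnc))
  · exact gK_eq_of_const h hγ hst


theorem exists_arc (γ : ℝ → ℝ × ℝ) (hγ : ContinuousOn γ (Icc 0 1)) (hne : γ 0 ≠ γ 1) :
    ∃ A, IsArcBetween A (γ 0) (γ 1) ∧ A ⊆ γ '' (Icc 0 1) := by
  obtain ⟨K, h⟩ := exists_minGood hγ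
  have hgc : Continuous (gK γ K) := gK_cont h hγ
  have hmono : Monotone (gK γ K) := gK_mono h hγ
  have hg01 : gK γ K 0 < gK γ K 1 := by
    apply gK_lt h hγ one_pos
    intro hcon
    have h10 := hcon 1 ⟨zero_le_one, le_rfl⟩
    rw [aK_K h h.mem1, aK_K h h.mem0] at h10
    exact hne h10.symm
  have hTclosed : ∀ y : ℝ, IsClosed (Icc (0:ℝ) 1 ∩ gK γ K ⁻¹' {y}) := fun y =>
    isClosed_Icc.inter (isClosed_singleton.preimage hgc)
  have hTne : ∀ y ∈ Icc (gK γ K 0) (gK γ K 1), (Icc (0:ℝ) 1 ∩ gK γ K ⁻¹' {y}).Nonempty := by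
    intro y hy
    obtain ⟨t, ht1, ht2⟩ := intermediate_value_Icc zero_le_one hgc.continuousOn hy
    exact ⟨t, ht1, ht2⟩
  set τ : ℝ → ℝ := fun y => sInf (Icc (0:ℝ) 1 ∩ gK γ K ⁻¹' {y}) with hτ
  have hτmem : ∀ y ∈ Icc (gK γ K 0) (gK γ K 1),
      τ y ∈ Icc (0:ℝ) 1 ∧ gK γ K (τ y) = y := by
    intro y hy
    have := (hTclosed y).csInf_mem (hTne y hy) ⟨0, fun x hx => hx.1.1⟩
    exact ⟨this.1, this.2⟩
  set β : ℝ → ℝ × ℝ := fun y => aK γ K (τ y) with hβ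
  have hβcont : ContinuousOn β (Icc (gK γ K 0) (gK γ K 1)) := by
    rw [continuousOn_iff_isClosed]
    intro C hC
    refine ⟨gK γ K '' (Icc 0 1 ∩ aK γ K ⁻¹' C), ?_, ?_⟩
    · exact ((isCompact_Icc.inter_right (hC.preimage (aK_cont h hγ))).image hgc).isClosed
    · ext y
      simp only [mem_inter_iff, mem_preimage, mem_image]
      constructor
      · rintro ⟨hyC, hyI⟩
        exact ⟨⟨τ y, ⟨(hτmem y hyI).1, hyC⟩, (hτmem y hyI).2⟩, hyI⟩
      · rintro ⟨⟨t, ⟨htI, htC⟩, rfl⟩, hyI⟩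
        refine ⟨?_, hyI⟩
        have ht' := hτmem _ hyI
        have hgt' : gK γ K (τ (gK γ K t)) = gK γ K t := ht'.2
        show aK γ K (τ (gK γ K t)) ∈ C
        rcases le_total (τ (gK γ K t)) t with hcase | hcase
        · have hconst := (gK_eq_iff h hγ hcase).1 hgt'
          have := hconst t ⟨hcase, le_rfl⟩
          rw [← this]
          exact htC
        · have hconst := (gK_eq_iff h hγ hcase).1 hgt'.symm
          have := hconst (τ (gK γ K t)) ⟨hcase, le_rfl⟩
          rw [this]
          exact htC
  have hβinj : ∀ y₁ ∈ Icc (gK γ K 0) (gK γ K 1), ∀ y₂ ∈ Icc (gK γ K 0) (gK γ K 1),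
      y₁ < y₂ → β y₁ ≠ β y₂ := by
    intro y₁ hy₁ y₂ hy₂ hlt hcon
    have h₁ := hτmem y₁ hy₁
    have h₂ := hτmem y₂ hy₂
    have ht12 : τ y₁ < τ y₂ := by
      by_contra hc
      push_neg at hc
      have := hmono hc
      rw [h₁.2, h₂.2] at this
      linarith
    have hconst := aK_const_of_eq h h₁.1.1 ht12.le hcon
    have : gK γ K (τ y₁) = gK γ K (τ y₂) := gK_eq_of_const h hγ ht12.le hconst
    rw [h₁.2, h₂.2] at this
    linarith
  set ℓ : ℝ → ℝ := fun s => gK γ K 0 + s * (gK γ K 1 - gK γ K 0) with hℓ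
  have hℓcont : Continuous ℓ := continuous_const.add (continuous_id.mul continuous_const)
  have hℓmaps : ∀ s ∈ Icc (0:ℝ) 1, ℓ s ∈ Icc (gK γ K 0) (gK γ K 1) := by
    intro s hs
    constructor
    · have : 0 ≤ s * (gK γ K 1 - gK γ K 0) := mul_nonneg hs.1 (by linarith)
      simp only [hℓ]; linarith
    · have : s * (gK γ K 1 - gK γ K 0) ≤ 1 * (gK γ K 1 - gK γ K 0) :=
        mul_le_mul_of_nonneg_right hs.2 (by linarith)
      simp only [hℓ]; linarith
  have hℓlt : ∀ s₁ s₂ : ℝ, s₁ < s₂ → ℓ s₁ < ℓ s₂ := by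
    intro s₁ s₂ hlt
    simp only [hℓ]
    have : s₁ * (gK γ K 1 - gK γ K 0) < s₂ * (gK γ K 1 - gK γ K 0) :=
      mul_lt_mul_of_pos_right hlt (by linarith)
    linarith
  refine ⟨(fun s => β (ℓ s)) '' Icc 0 1, ⟨fun s => β (ℓ s), ?_, ?_, ?_, ?_, rfl⟩, ?_⟩
  · exact hβcont.comp hℓcont.continuousOn hℓmaps
  · intro s₁ hs₁ s₂ hs₂ heq
    by_contra hne'
    rcases lt_or_gt_of_ne hne' with hc | hc
    · exact hβinj _ (hℓmaps s₁ hs₁) _ (hℓmaps s₂ hs₂) (hℓlt _ _ hc) heq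
    · exact hβinj _ (hℓmaps s₂ hs₂) _ (hℓmaps s₁ hs₁) (hℓlt _ _ hc) heq.symm
  · have hℓ0 : ℓ 0 = gK γ K 0 := by simp [hℓ]
    have hmem : gK γ K 0 ∈ Icc (gK γ K 0) (gK γ K 1) := ⟨le_rfl, hg01.le⟩
    have h0T : (0:ℝ) ∈ Icc (0:ℝ) 1 ∩ gK γ K ⁻¹' {gK γ K 0} :=
      ⟨⟨le_rfl, zero_le_one⟩, rfl⟩
    have hτ0 : τ (gK γ K 0) = 0 :=
      le_antisymm (csInf_le ⟨0, fun x hx => hx.1.1⟩ h0T) (hτmem _ hmem).1.1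
    show β (ℓ 0) = γ 0
    rw [hℓ0, hβ]
    simp only
    rw [hτ0, aK_K h h.mem0]
  · have hℓ1 : ℓ 1 = gK γ K 1 := by simp [hℓ]
    have hmem : gK γ K 1 ∈ Icc (gK γ K 0) (gK γ K 1) := ⟨hg01.le, le_rfl⟩
    have ht' := hτmem _ hmem
    show β (ℓ 1) = γ 1
    rw [hℓ1, hβ]
    simp only
    have hconst := (gK_eq_iff h hγ ht'.1.2).1 (by rw [ht'.2])
    have h1c := hconst 1 ⟨ht'.1.2, le_rfl⟩
    rw [← h1c, aK_K h h.mem1]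
  · rintro _ ⟨s, _, rfl⟩
    exact ⟨rK K (τ (ℓ s)), rK_mem01 h _, rfl⟩

end ArcLemmaSec


section GeometrySec

lemma upperHalf_convex : Convex ℝ UpperHalf := by
  intro p hp q hq c d hc hd hcd
  show (0:ℝ) ≤ (c • p + d • q).2
  have : (c • p + d • q).2 = c * p.2 + d * q.2 := rfl
  rw [this]
  exact add_nonneg (mul_nonneg hc hp) (mul_nonneg hd hq)

lemma convex_nbhd {W : Set (ℝ × ℝ)} (hW : IsClosed W) {u : ℝ × ℝ} (hu : u ∈ UpperHalf \ W) :
    ∃ ε > 0, (Metric.ball u ε ∩ UpperHalf ⊆ UpperHalf \ W) ∧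
      Convex ℝ (Metric.ball u ε ∩ UpperHalf) := by
  obtain ⟨ε, hε, hball⟩ := Metric.isOpen_iff.1 hW.isOpen_compl u hu.2
  refine ⟨ε, hε, ?_, (convex_ball u ε).inter upperHalf_convex⟩
  rintro x ⟨hx1, hx2⟩
  exact ⟨hx2, hball hx1⟩

lemma mem_pathComp_of_convex {U V : Set (ℝ × ℝ)} {p u v : ℝ × ℝ}
    (hu : u ∈ pathComponentIn U p) (hV : Convex ℝ V) (hVU : V ⊆ U)
    (huV : u ∈ V) (hvV : v ∈ V) : v ∈ pathComponentIn U p := by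
  have h1 : JoinedIn U p u := hu
  have h2 : JoinedIn V u v := (hV.isPathConnected ⟨u, huV⟩).joinedIn u huV v hvV
  exact h1.trans (h2.mono hVU)

lemma comp_rel_open {W : Set (ℝ × ℝ)} (hW : IsClosed W) {p u : ℝ × ℝ}
    (hu : u ∈ pathComponentIn (UpperHalf \ W) p) :
    ∃ ε > 0, Metric.ball u ε ∩ UpperHalf ⊆ pathComponentIn (UpperHalf \ W) p := by
  have huU : u ∈ UpperHalf \ W := pathComponentIn_subset hu
  obtain ⟨ε, hε, hsub, hconv⟩ := convex_nbhd hW huU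
  refine ⟨ε, hε, ?_⟩
  intro v hv
  exact mem_pathComp_of_convex hu hconv hsub ⟨Metric.mem_ball_self hε, huU.1⟩ hv

lemma closure_comp {W : Set (ℝ × ℝ)} (hW : IsClosed W) {p u : ℝ × ℝ}
    (hu1 : u ∈ UpperHalf \ W) (hu2 : u ∈ closure (pathComponentIn (UpperHalf \ W) p)) :
    u ∈ pathComponentIn (UpperHalf \ W) p := by
  obtain ⟨ε, hε, hsub, hconv⟩ := convex_nbhd hW hu1
  obtain ⟨v, hvC, hdist⟩ := Metric.mem_closure_iff.1 hu2 ε hε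
  have hvV : v ∈ Metric.ball u ε ∩ UpperHalf := by
    refine ⟨?_, (pathComponentIn_subset hvC).1⟩
    rw [Metric.mem_ball, dist_comm]
    exact hdist
  exact mem_pathComp_of_convex hvC hconv hsub hvV ⟨Metric.mem_ball_self hε, hu1.1⟩

lemma comp_eq_of_mem {U : Set (ℝ × ℝ)} {p q x : ℝ × ℝ}
    (hx1 : x ∈ pathComponentIn U p) (hx2 : x ∈ pathComponentIn U q) :
    pathComponentIn U p = pathComponentIn U q := by
  have h1 : JoinedIn U p x := hx1
  have h2 : JoinedIn U q x := hx2
  ext y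
  constructor
  · intro hy
    exact (h2.trans (h1.symm.trans (hy : JoinedIn U p y)) : JoinedIn U q y)
  · intro hy
    exact (h1.trans (h2.symm.trans (hy : JoinedIn U q y)) : JoinedIn U p y)

lemma not_mem_closure_other {W C₁ C₂ : Set (ℝ × ℝ)} (hW : IsClosed W)
    (hC₁ : IsPathComponentOf C₁ (UpperHalf \ W)) (hC₂ : IsPathComponentOf C₂ (UpperHalf \ W))
    (hne : C₁ ≠ C₂) {x : ℝ × ℝ} (hx : x ∈ C₁) : x ∉ closure C₂ := by
  obtain ⟨p₁, hp₁, rfl⟩ := hC₁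
  obtain ⟨p₂, hp₂, rfl⟩ := hC₂
  intro hcl
  have hxU : x ∈ UpperHalf \ W := pathComponentIn_subset hx
  have h2 : x ∈ pathComponentIn (UpperHalf \ W) p₂ := closure_comp hW hxU hcl
  exact hne (comp_eq_of_mem hx h2)

lemma frontier_in_W {W C₂ : Set (ℝ × ℝ)} (hW : IsClosed W)
    (hC₂ : IsPathComponentOf C₂ (UpperHalf \ W)) {x : ℝ × ℝ}
    (hx1 : x ∈ closure C₂) (hx2 : x ∉ C₂) (hx3 : x ∈ UpperHalf) : x ∈ W := by
  by_contra hxW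
  obtain ⟨p₂, hp₂, rfl⟩ := hC₂
  exact hx2 (closure_comp hW ⟨hx3, hxW⟩ hx1)

lemma miss_lemma
    (F : Set (Set (ℝ × ℝ))) (hF : GroundedFamily F)
    (X Y Z : Set (ℝ × ℝ)) (hX : X ∈ F) (hY : Y ∈ F) (hZ : Z ∈ F)
    (C₁ C₂ : Set (ℝ × ℝ))
    (hC₁ : IsPathComponentOf C₁ (UpperHalf \ (X ∪ Y)))
    (hC₂ : IsPathComponentOf C₂ (UpperHalf \ (X ∪ Y)))
    (hCne : C₁ ≠ C₂)
    (z z' : ℝ × ℝ) (hz : z ∈ Z ∩ C₁) (hz' : z' ∈ Z ∩ C₁) (hzz : z ≠ z')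
    (harc : ∀ A ⊆ Z, IsArcBetween A z z' → (A ∩ C₂).Nonempty)
    (A : Set (ℝ × ℝ)) (hAZ : A ⊆ Z) (hA : IsArcBetween A z z')
    (hAX : A ∩ X = ∅) : False := by
  obtain ⟨φ, hφc, hφi, hφ0, hφ1, hφA⟩ := hA
  have hGX : Grounded X := hF.2.1 X hX
  have hGY : Grounded Y := hF.2.1 Y hY
  have hGZ : Grounded Z := hF.2.1 Z hZ
  have hZH : Z ⊆ UpperHalf := hGZ.1
  have hW : IsClosed (X ∪ Y) := hGX.2.1.isClosed.union hGY.2.1.isClosed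
  have hC₂sub : C₂ ⊆ UpperHalf \ (X ∪ Y) := by
    obtain ⟨p₂, hp₂, rfl⟩ := hC₂
    exact pathComponentIn_subset
  have hφmem : ∀ t ∈ Icc (0:ℝ) 1, φ t ∈ Z := fun t ht =>
    hAZ (by rw [hφA]; exact mem_image_of_mem φ ht)
  -- the crossing times of the closure of C₂
  set T : Set ℝ := Icc (0:ℝ) 1 ∩ φ ⁻¹' (closure C₂) with hTdef
  obtain ⟨w, hwA, hwC₂⟩ := harc A hAZ ⟨φ, hφc, hφi, hφ0, hφ1, hφA⟩
  rw [hφA] at hwA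
  obtain ⟨tw, htw, htweq⟩ := hwA
  have hTne : T.Nonempty := ⟨tw, htw, by rw [mem_preimage, htweq]; exact subset_closure hwC₂⟩
  have hTclosed : IsClosed T :=
    hφc.preimage_isClosed_of_isClosed isClosed_Icc isClosed_closure
  have hbddB : BddBelow T := ⟨0, fun t ht => ht.1.1⟩
  have hbddA : BddAbove T := ⟨1, fun t ht => ht.1.2⟩
  set a := sInf T with hadef
  set b := sSup T with hbdef
  have haT : a ∈ T := hTclosed.csInf_mem hTne hbddB
  have hbT : b ∈ T := hTclosed.csSup_mem hTne hbddA
  have hznotin : z ∉ closure C₂ := not_mem_closure_other hW hC₁ hC₂ hCne hz.2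
  have hz'notin : z' ∉ closure C₂ := not_mem_closure_other hW hC₁ hC₂ hCne hz'.2
  have hapos : 0 < a := by
    rcases eq_or_lt_of_le haT.1.1 with he | h
    · exfalso
      have := haT.2
      rw [mem_preimage, ← he, hφ0] at this
      exact hznotin this
    · exact h
  have hblt1 : b < 1 := by
    rcases eq_or_lt_of_le hbT.1.2 with he | h
    · exfalso
      have := hbT.2
      rw [mem_preimage, he, hφ1] at this
      exact hz'notin this
    · exact h
  have hC₂open : ∀ u ∈ C₂, ∃ ε > 0, Metric.ball u ε ∩ UpperHalf ⊆ C₂ := by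
    obtain ⟨p₂, hp₂, rfl⟩ := hC₂
    intro u hu
    exact comp_rel_open hW hu
  have hφaC₂ : φ a ∉ C₂ := by
    intro hmem
    obtain ⟨ε, hε, hsub⟩ := hC₂open _ hmem
    obtain ⟨δ, hδ, hδp⟩ := Metric.continuousWithinAt_iff.1 (hφc a haT.1) ε hε
    set t := a - min δ a / 2 with htdef
    have hmina : min δ a ≤ a := min_le_right _ _
    have hminδ : min δ a ≤ δ := min_le_left _ _
    have hminpos : 0 < min δ a := lt_min hδ hapos
    have ht1 : 0 ≤ t := by rw [htdef]; linarith
    have ht2 : t < a := by rw [htdef]; linarith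
    have htI : t ∈ Icc (0:ℝ) 1 := ⟨ht1, by linarith [haT.1.2]⟩
    have hdist : dist t a < δ := by
      rw [Real.dist_eq, htdef, abs_lt]
      constructor <;> linarith
    have hφt := hδp htI hdist
    have hφtC₂ : φ t ∈ C₂ := hsub ⟨by rw [Metric.mem_ball]; exact hφt, hZH (hφmem t htI)⟩
    have htT : t ∈ T := ⟨htI, by rw [mem_preimage]; exact subset_closure hφtC₂⟩
    have := csInf_le hbddB htT
    rw [← hadef] at this
    linarith
  have hφbC₂ : φ b ∉ C₂ := by
    intro hmem
    obtain ⟨ε, hε, hsub⟩ := hC₂open _ hmem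
    obtain ⟨δ, hδ, hδp⟩ := Metric.continuousWithinAt_iff.1 (hφc b hbT.1) ε hε
    set t := b + min δ (1 - b) / 2 with htdef
    have hmina : min δ (1-b) ≤ 1 - b := min_le_right _ _
    have hminδ : min δ (1-b) ≤ δ := min_le_left _ _
    have hminpos : 0 < min δ (1-b) := lt_min hδ (by linarith)
    have ht2 : b < t := by rw [htdef]; linarith
    have htI : t ∈ Icc (0:ℝ) 1 := ⟨by linarith [hbT.1.1], by rw [htdef]; linarith⟩
    have hdist : dist t b < δ := by
      rw [Real.dist_eq, htdef, abs_lt]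
      constructor <;> linarith
    have hφt := hδp htI hdist
    have hφtC₂ : φ t ∈ C₂ := hsub ⟨by rw [Metric.mem_ball]; exact hφt, hZH (hφmem t htI)⟩
    have htT : t ∈ T := ⟨htI, by rw [mem_preimage]; exact subset_closure hφtC₂⟩
    have := le_csSup hbddA htT
    rw [← hbdef] at this
    linarith
  have haY : φ a ∈ Y := by
    have hmem : φ a ∈ X ∪ Y := frontier_in_W hW hC₂ haT.2 hφaC₂ (hZH (hφmem a haT.1))
    rcases hmem with hmem | hmem
    · exfalso
      have : φ a ∈ A ∩ X := ⟨by rw [hφA]; exact mem_image_of_mem φ haT.1, hmem⟩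
      rw [hAX] at this
      exact this
    · exact hmem
  have hbY : φ b ∈ Y := by
    have hmem : φ b ∈ X ∪ Y := frontier_in_W hW hC₂ hbT.2 hφbC₂ (hZH (hφmem b hbT.1))
    rcases hmem with hmem | hmem
    · exfalso
      have : φ b ∈ A ∩ X := ⟨by rw [hφA]; exact mem_image_of_mem φ hbT.1, hmem⟩
      rw [hAX] at this
      exact this
    · exact hmem
  -- Z ∩ Y is path-connected
  have hZY : IsPathConnected (Z ∩ Y) := by
    have hsub : ({Z, Y} : Set (Set (ℝ × ℝ))) ⊆ F := by
      intro S hS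
      rcases hS with rfl | rfl
      · exact hZ
      · exact hY
    have hne' : ({Z, Y} : Set (Set (ℝ × ℝ))).Nonempty := ⟨Z, mem_insert _ _⟩
    have := hF.2.2.1 ({Z, Y} : Set (Set (ℝ × ℝ))) hsub hne'
    rw [sInter_pair] at this
    rcases this with hemp | hpc
    · exfalso
      have : φ a ∈ Z ∩ Y := ⟨hφmem a haT.1, haY⟩
      rw [hemp] at this
      exact this
    · exact hpc
  obtain ⟨σ, hσmem⟩ : JoinedIn (Z ∩ Y) (φ a) (φ b) :=
    hZY.joinedIn _ ⟨hφmem a haT.1, haY⟩ _ ⟨hφmem b hbT.1, hbY⟩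
  -- build the detour path
  have haI : a ∈ Icc (0:ℝ) 1 := haT.1
  have hbI : b ∈ Icc (0:ℝ) 1 := hbT.1
  have hP1maps : ∀ s : unitInterval, a * (s:ℝ) ∈ Icc (0:ℝ) 1 := by
    intro s
    constructor
    · exact mul_nonneg hapos.le s.2.1
    · calc a * (s:ℝ) ≤ a * 1 := mul_le_mul_of_nonneg_left s.2.2 hapos.le
        _ ≤ 1 := by rw [mul_one]; exact haI.2
  have hP2maps : ∀ s : unitInterval, b + (s:ℝ) * (1 - b) ∈ Icc (0:ℝ) 1 := by
    intro s
    constructor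
    · have : 0 ≤ (s:ℝ) * (1 - b) := mul_nonneg s.2.1 (by linarith)
      linarith [hbI.1]
    · have : (s:ℝ) * (1 - b) ≤ 1 * (1 - b) := mul_le_mul_of_nonneg_right s.2.2 (by linarith)
      linarith
  set P1 : Path z (φ a) :=
    { toFun := fun s => φ (a * (s:ℝ))
      continuous_toFun := hφc.comp_continuous
        (continuous_const.mul continuous_subtype_val) hP1maps
      source' := by simp only [Icc.coe_zero, mul_zero, hφ0]
      target' := by simp only [Icc.coe_one, mul_one] } with hP1def
  set P2 : Path (φ b) z' :=
    { toFun := fun s => φ (b + (s:ℝ) * (1 - b))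
      continuous_toFun := hφc.comp_continuous
        (continuous_const.add (continuous_subtype_val.mul continuous_const)) hP2maps
      source' := by simp only [Icc.coe_zero, zero_mul, add_zero]
      target' := by simp only [Icc.coe_one, one_mul]; rw [show b + (1 - b) = 1 by ring, hφ1] }
    with hP2def
  set Ψ : Path z z' := (P1.trans σ).trans P2 with hΨdef
  have hgoal : ∀ s : unitInterval, Ψ s ∈ Z \ C₂ := by
    intro s
    have hs : Ψ s ∈ range ((P1.trans σ).trans P2) := ⟨s, rfl⟩
    rw [Path.trans_range, Path.trans_range] at hs
    rcases hs with (hs | hs) | hs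
    · obtain ⟨s', hs'⟩ := hs
      have heval : P1 s' = φ (a * (s':ℝ)) := rfl
      rw [heval] at hs'
      set t := a * (s':ℝ) with htdef
      have htI : t ∈ Icc (0:ℝ) 1 := hP1maps s'
      have hta : t ≤ a := by
        calc t ≤ a * 1 := mul_le_mul_of_nonneg_left s'.2.2 hapos.le
          _ = a := mul_one a
      rw [← hs']
      refine ⟨hφmem t htI, ?_⟩
      intro hmem
      have htT : t ∈ T := ⟨htI, by rw [mem_preimage]; exact subset_closure hmem⟩
      have := csInf_le hbddB htT
      rw [← hadef] at this
      have hteq : t = a := le_antisymm hta this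
      rw [hteq] at hmem
      exact hφaC₂ hmem
    · obtain ⟨s', hs'⟩ := hs
      have := hσmem s'
      rw [hs'] at this
      refine ⟨this.1, ?_⟩
      intro hmem
      exact (hC₂sub hmem).2 (mem_union_right X this.2)
    · obtain ⟨s', hs'⟩ := hs
      have heval : P2 s' = φ (b + (s':ℝ) * (1 - b)) := rfl
      rw [heval] at hs'
      set t := b + (s':ℝ) * (1 - b) with htdef
      have htI : t ∈ Icc (0:ℝ) 1 := hP2maps s'
      have htb : b ≤ t := by
        have : 0 ≤ (s':ℝ) * (1 - b) := mul_nonneg s'.2.1 (by linarith)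
        rw [htdef]; linarith
      rw [← hs']
      refine ⟨hφmem t htI, ?_⟩
      intro hmem
      have htT : t ∈ T := ⟨htI, by rw [mem_preimage]; exact subset_closure hmem⟩
      have := le_csSup hbddA htT
      rw [← hbdef] at this
      have hteq : t = b := le_antisymm this htb
      rw [hteq] at hmem
      exact hφbC₂ hmem
  set γc : ℝ → ℝ × ℝ := fun t => Ψ (Set.projIcc 0 1 zero_le_one t) with hγcdef
  have hγccont : Continuous γc := Ψ.continuous.comp continuous_projIcc
  have hγc0 : γc 0 = z := by
    show Ψ (Set.projIcc 0 1 zero_le_one 0) = z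
    rw [Set.projIcc_left]
    exact Ψ.source
  have hγc1 : γc 1 = z' := by
    show Ψ (Set.projIcc 0 1 zero_le_one 1) = z'
    rw [Set.projIcc_right]
    exact Ψ.target
  obtain ⟨A', hA'arc, hA'sub⟩ := exists_arc γc hγccont.continuousOn
    (by rw [hγc0, hγc1]; exact hzz)
  have hA'Z : A' ⊆ Z := by
    intro x hx
    obtain ⟨t, _, rfl⟩ := hA'sub hx
    exact (hgoal _).1
  rw [hγc0, hγc1] at hA'arc
  obtain ⟨x, hx1, hx2⟩ := harc A' hA'Z hA'arc
  obtain ⟨t, _, rfl⟩ := hA'sub hx1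
  exact (hgoal _).2 hx2

end GeometrySec

end
/-- If every arc between `z, z' ∈ Z ∩ C₁` within `Z` meets another component `C₂` of
`H \ (X ∪ Y)`, then every such arc meets both `X` and `Y`. -/
theorem surround_lemma
    (F : Set (Set (ℝ × ℝ))) (hF : GroundedFamily F)
    (X Y Z : Set (ℝ × ℝ)) (hX : X ∈ F) (hY : Y ∈ F) (hZ : Z ∈ F)
    (hXY : (X ∩ Y).Nonempty)
    (C₁ C₂ : Set (ℝ × ℝ))
    (hC₁ : IsPathComponentOf C₁ (UpperHalf \ (X ∪ Y)))
    (hC₂ : IsPathComponentOf C₂ (UpperHalf \ (X ∪ Y)))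
    (hCne : C₁ ≠ C₂)
    (z z' : ℝ × ℝ) (hz : z ∈ Z ∩ C₁) (hz' : z' ∈ Z ∩ C₁) (hzz : z ≠ z')
    (harc : ∀ A ⊆ Z, IsArcBetween A z z' → (A ∩ C₂).Nonempty) :
    ∀ A ⊆ Z, IsArcBetween A z z' → (A ∩ X).Nonempty ∧ (A ∩ Y).Nonempty := by
  intro A hAZ hA
  constructor
  · by_contra hcon
    rw [not_nonempty_iff_eq_empty] at hcon
    exact miss_lemma F hF X Y Z hX hY hZ C₁ C₂ hC₁ hC₂ hCne z z' hz hz' hzz harc A hAZ hA hcon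
  · by_contra hcon
    rw [not_nonempty_iff_eq_empty] at hcon
    have hC₁' : IsPathComponentOf C₁ (UpperHalf \ (Y ∪ X)) := by rwa [union_comm Y X]
    have hC₂' : IsPathComponentOf C₂ (UpperHalf \ (Y ∪ X)) := by rwa [union_comm Y X]
    exact miss_lemma F ⟨hF.1, hF.2.1, hF.2.2.1, hF.2.2.2⟩ Y X Z hY hX hZ C₁ C₂ hC₁' hC₂'
      hCne z z' hz hz' hzz harc A hAZ hA hcon
end

section
/- Let x₁ < x₂ < y₁ < y₂ be real numbers, and consider the points (x₁,0), (x₂,0), (y₁,0), (y₂,0) on the baseline. Then every arc contained in the closed upper halfplane H between (x₁,0) and (y₁,0) intersects every arc contained in H between (x₂,0) and (y₂,0). -/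
open Set

section AuxWind
open Complex Real

private lemma ratio_re_pos' {z w : ℂ} (hz : z ≠ 0) (h : ‖w - z‖ < ‖z‖) :
    0 < (w / z).re := by
  have hzabs : 0 < ‖z‖ := norm_pos_iff.mpr hz
  have hdiv : w / z = 1 + (w - z) / z := by field_simp; ring
  have hre : |((w - z) / z).re| ≤ ‖(w - z) / z‖ := Complex.abs_re_le_norm _
  rw [norm_div] at hre
  have hlt : ‖w - z‖ / ‖z‖ < 1 := (div_lt_one hzabs).2 h
  have := (abs_le.1 hre).1
  rw [hdiv]
  simp only [Complex.add_re, Complex.one_re]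
  linarith

private lemma arg_div_eq_sub' {z₁ z₂ : ℂ} (h1 : z₁ ≠ 0) (h2 : z₂ ≠ 0)
    (i1 : 0 ≤ z₁.im) (i2 : 0 ≤ z₂.im) (hr : 0 < (z₂ / z₁).re) :
    (z₂ / z₁).arg = z₂.arg - z₁.arg := by
  have hrne : z₂ / z₁ ≠ 0 := div_ne_zero h2 h1
  have habs : |(z₂ / z₁).arg| < π / 2 := Complex.abs_arg_lt_pi_div_two_iff.2 (Or.inl hr)
  have hmul : z₂ / z₁ * z₁ = z₂ := div_mul_cancel₀ _ h1
  have hangle := Complex.arg_mul_coe_angle hrne h1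
  rw [hmul, ← Real.Angle.coe_add] at hangle
  obtain ⟨k, hk⟩ := Real.Angle.angle_eq_iff_two_pi_dvd_sub.1 hangle
  have hb1 : 0 ≤ z₁.arg := Complex.arg_nonneg_iff.2 i1
  have hb2 : 0 ≤ z₂.arg := Complex.arg_nonneg_iff.2 i2
  have hc1 : z₁.arg ≤ π := Complex.arg_le_pi _
  have hc2 : z₂.arg ≤ π := Complex.arg_le_pi _
  have hpi := Real.pi_pos
  have habs' := abs_lt.1 habs
  have h2pi : (0 : ℝ) < 2 * π := by linarith
  have hk0 : k = 0 := by
    have hlow : 2 * π * (-1 : ℝ) < 2 * π * k := by linarith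
    have hhigh : 2 * π * (k : ℝ) < 2 * π * 1 := by linarith
    have h1' : (-1 : ℝ) < k := (mul_lt_mul_iff_right₀ h2pi).1 hlow
    have h2' : (k : ℝ) < 1 := (mul_lt_mul_iff_right₀ h2pi).1 hhigh
    exact_mod_cast (by omega : ∀ m : ℤ, (-1 : ℤ) < m → m < 1 → m = 0) k
      (by exact_mod_cast h1') (by exact_mod_cast h2')
  rw [hk0] at hk
  push_cast at hk
  linarith

private lemma arg_inv_of_re_pos' {x : ℂ} (h : 0 < x.re) : x⁻¹.arg = -x.arg := by
  rw [Complex.arg_inv, if_neg]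
  intro hpi
  have h2 : |x.arg| < π / 2 := Complex.abs_arg_lt_pi_div_two_iff.2 (Or.inl h)
  rw [hpi, abs_of_pos Real.pi_pos] at h2
  linarith [Real.pi_pos]

private lemma arg_div_eq_sub_neg' {z₁ z₂ : ℂ} (h1 : z₁ ≠ 0) (h2 : z₂ ≠ 0)
    (i1 : z₁.im ≤ 0) (i2 : z₂.im ≤ 0) (hr : 0 < (z₂ / z₁).re) :
    (z₂ / z₁).arg = (-(starRingEnd ℂ z₂).arg) - (-(starRingEnd ℂ z₁).arg) := by
  have hc1 : (starRingEnd ℂ z₁) ≠ 0 := by simpa using h1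
  have hc2 : (starRingEnd ℂ z₂) ≠ 0 := by simpa using h2
  have hdiv : starRingEnd ℂ z₂ / starRingEnd ℂ z₁ = starRingEnd ℂ (z₂ / z₁) := (map_div₀ _ _ _).symm
  have hre : 0 < (starRingEnd ℂ (z₂ / z₁)).re := by rwa [Complex.conj_re]
  have := arg_div_eq_sub' hc1 hc2 (by simpa using i1) (by simpa using i2) (by rwa [hdiv])
  rw [hdiv] at this
  have hargne : (z₂ / z₁).arg ≠ π := by
    have habs : |(z₂ / z₁).arg| < π / 2 := Complex.abs_arg_lt_pi_div_two_iff.2 (Or.inl hr)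
    intro hpi; rw [hpi, abs_of_pos Real.pi_pos] at habs; linarith [Real.pi_pos]
  rw [Complex.arg_conj, if_neg hargne] at this
  linarith

private lemma square_arg_sum' {a b c d : ℂ} (ha : a ≠ 0) (hb : b ≠ 0) (hc : c ≠ 0) (hd : d ≠ 0)
    (h1 : 0 < (b / a).re) (h2 : 0 < (c / b).re) (h3 : 0 < (d / c).re) (h4 : 0 < (a / d).re) :
    (b / a).arg + (c / b).arg + (d / c).arg + (a / d).arg = 0 := by
  have n1 : b / a ≠ 0 := div_ne_zero hb ha
  have n2 : c / b ≠ 0 := div_ne_zero hc hb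
  have n3 : d / c ≠ 0 := div_ne_zero hd hc
  have n4 : a / d ≠ 0 := div_ne_zero ha hd
  have hprod : b / a * (c / b) * (d / c) * (a / d) = 1 := by field_simp
  have e1 := Complex.arg_mul_coe_angle n1 n2
  have e2 := Complex.arg_mul_coe_angle (mul_ne_zero n1 n2) n3
  have e3 := Complex.arg_mul_coe_angle (mul_ne_zero (mul_ne_zero n1 n2) n3) n4
  rw [hprod, Complex.arg_one] at e3
  rw [e2, e1, ← Real.Angle.coe_add, ← Real.Angle.coe_add, ← Real.Angle.coe_add] at e3
  have : ((0 : ℝ) : Real.Angle) = ((b/a).arg + (c/b).arg + (d/c).arg + (a/d).arg : ℝ) := by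
    rw [← e3]
  obtain ⟨k, hk⟩ := Real.Angle.angle_eq_iff_two_pi_dvd_sub.1 this.symm
  have b1 := abs_lt.1 (Complex.abs_arg_lt_pi_div_two_iff.2 (Or.inl h1))
  have b2 := abs_lt.1 (Complex.abs_arg_lt_pi_div_two_iff.2 (Or.inl h2))
  have b3 := abs_lt.1 (Complex.abs_arg_lt_pi_div_two_iff.2 (Or.inl h3))
  have b4 := abs_lt.1 (Complex.abs_arg_lt_pi_div_two_iff.2 (Or.inl h4))
  have hpi := Real.pi_pos
  have h2pi : (0 : ℝ) < 2 * π := by linarith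
  have hk0 : k = 0 := by
    have hlow : 2 * π * (-1 : ℝ) < 2 * π * k := by linarith
    have hhigh : 2 * π * (k : ℝ) < 2 * π * 1 := by linarith
    have h1' : (-1 : ℝ) < k := (mul_lt_mul_iff_right₀ h2pi).1 hlow
    have h2' : (k : ℝ) < 1 := (mul_lt_mul_iff_right₀ h2pi).1 hhigh
    exact_mod_cast (by omega : ∀ m : ℤ, (-1 : ℤ) < m → m < 1 → m = 0) k
      (by exact_mod_cast h1') (by exact_mod_cast h2')
  rw [hk0] at hk
  push_cast at hk
  linarith
end AuxWind

/-- Arcs in the upper halfplane with interleaved endpoints on the baseline intersect. -/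
theorem interleaved_arcs_intersect
    (x₁ x₂ y₁ y₂ : ℝ) (h₁ : x₁ < x₂) (h₂ : x₂ < y₁) (h₃ : y₁ < y₂)
    (A B : Set (ℝ × ℝ))
    (hA : IsArcBetween A (x₁, 0) (y₁, 0)) (hAH : A ⊆ UpperHalf)
    (hB : IsArcBetween B (x₂, 0) (y₂, 0)) (hBH : B ⊆ UpperHalf) :
    (A ∩ B).Nonempty := by
  classical
  by_contra hne
  rw [Set.not_nonempty_iff_eq_empty] at hne
  obtain ⟨φ, hφc, -, hφ0, hφ1, hAeq⟩ := hA
  obtain ⟨ψ, hψc, -, hψ0, hψ1, hBeq⟩ := hB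
  set e : ℝ × ℝ → ℂ := fun p => (p.1 : ℂ) + (p.2 : ℂ) * Complex.I with he
  have he_re : ∀ p : ℝ × ℝ, (e p).re = p.1 := by intro p; simp [he]
  have he_im : ∀ p : ℝ × ℝ, (e p).im = p.2 := by intro p; simp [he]
  have he_inj : Function.Injective e := by
    intro p q hpq
    have ha := congrArg Complex.re hpq
    have hb := congrArg Complex.im hpq
    rw [he_re, he_re] at ha; rw [he_im, he_im] at hb
    exact Prod.ext ha hb
  have hec : Continuous e := by
    apply Continuous.add
    · exact Complex.continuous_ofReal.comp continuous_fst
    · exact (Complex.continuous_ofReal.comp continuous_snd).mul continuous_const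
  set F : ℝ × ℝ → ℂ := fun p => e (ψ p.2) - e (φ p.1) with hFdef
  set K : Set (ℝ × ℝ) := Icc (0:ℝ) 1 ×ˢ Icc (0:ℝ) 1 with hKdef
  have hKc : IsCompact K := isCompact_Icc.prod isCompact_Icc
  have hφK : ContinuousOn (fun p : ℝ × ℝ => φ p.1) K :=
    hφc.comp continuous_fst.continuousOn (fun p hp => hp.1)
  have hψK : ContinuousOn (fun p : ℝ × ℝ => ψ p.2) K :=
    hψc.comp continuous_snd.continuousOn (fun p hp => hp.2)
  have hFc : ContinuousOn F K :=
    (hec.comp_continuousOn hψK).sub (hec.comp_continuousOn hφK)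
  have hφA : ∀ s ∈ Icc (0:ℝ) 1, φ s ∈ A := fun s hs => hAeq ▸ Set.mem_image_of_mem φ hs
  have hψB : ∀ t ∈ Icc (0:ℝ) 1, ψ t ∈ B := fun t ht => hBeq ▸ Set.mem_image_of_mem ψ ht
  have hF0 : ∀ p ∈ K, F p ≠ 0 := by
    rintro p hp h0
    have hee : e (ψ p.2) = e (φ p.1) := by
      have := sub_eq_zero.1 h0; exact this
    have hpsi : ψ p.2 = φ p.1 := he_inj hee
    have hmemA : φ p.1 ∈ A := hφA _ hp.1
    have hmemB : φ p.1 ∈ B := hpsi ▸ hψB _ hp.2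
    have : φ p.1 ∈ A ∩ B := ⟨hmemA, hmemB⟩
    rw [hne] at this
    exact this
  have hK00 : ((0:ℝ), (0:ℝ)) ∈ K := ⟨⟨le_refl 0, zero_le_one⟩, ⟨le_refl 0, zero_le_one⟩⟩
  obtain ⟨p₀, hp₀K, hp₀min⟩ := hKc.exists_isMinOn ⟨_, hK00⟩
    (continuous_norm.comp_continuousOn hFc)
  set δ : ℝ := ‖F p₀‖ with hδdef
  have hδpos : 0 < δ := norm_pos_iff.mpr (hF0 p₀ hp₀K)
  have hδle : ∀ p ∈ K, δ ≤ ‖F p‖ := fun p hp => isMinOn_iff.1 hp₀min p hp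
  obtain ⟨η, hηpos, hη⟩ := (Metric.uniformContinuousOn_iff.1
    (hKc.uniformContinuousOn_of_continuous hFc)) δ hδpos
  obtain ⟨n, hn⟩ := exists_nat_one_div_lt hηpos
  set N : ℕ := n + 1 with hNdef
  have hNpos : (0:ℝ) < (N:ℝ) := by positivity
  have hNne : (N:ℝ) ≠ 0 := ne_of_gt hNpos
  have hmesh : (1:ℝ) / (N:ℝ) < η := by
    have : ((n:ℝ) + 1) = ((N:ℕ):ℝ) := by push_cast [hNdef]; ring
    rwa [this] at hn
  set q : ℕ → ℕ → ℝ × ℝ := fun i j => ((i:ℝ)/(N:ℝ), (j:ℝ)/(N:ℝ)) with hqdef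
  set z : ℕ → ℕ → ℂ := fun i j => F (q i j) with hzdef
  have hqK : ∀ i ≤ N, ∀ j ≤ N, q i j ∈ K := by
    intro i hi j hj
    refine ⟨⟨by positivity, ?_⟩, ⟨by positivity, ?_⟩⟩
    · exact (div_le_one hNpos).2 (by exact_mod_cast hi)
    · exact (div_le_one hNpos).2 (by exact_mod_cast hj)
  have hzne : ∀ i ≤ N, ∀ j ≤ N, z i j ≠ 0 := fun i hi j hj => hF0 _ (hqK i hi j hj)
  have hzge : ∀ i ≤ N, ∀ j ≤ N, δ ≤ ‖z i j‖ := fun i hi j hj => hδle _ (hqK i hi j hj)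
  have hstep : ∀ a : ℕ, a < N → dist (((a+1:ℕ):ℝ)/(N:ℝ)) ((a:ℝ)/(N:ℝ)) < η := by
    intro a ha
    rw [Real.dist_eq]
    have hd : ((a+1:ℕ):ℝ)/(N:ℝ) - (a:ℝ)/(N:ℝ) = 1/(N:ℝ) := by push_cast; ring
    rw [hd, abs_of_pos (by positivity)]
    exact hmesh
  have hadjH : ∀ i < N, ∀ j ≤ N, ‖z (i+1) j - z i j‖ < δ := by
    intro i hi j hj
    have hd : dist (q (i+1) j) (q i j) < η := by
      rw [Prod.dist_eq]
      have h2 : dist ((j:ℝ)/(N:ℝ)) ((j:ℝ)/(N:ℝ)) = 0 := dist_self _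
      simp only [hqdef]
      rw [h2]
      exact max_lt (hstep i hi) hηpos
    have := hη _ (hqK (i+1) (by omega) j hj) _ (hqK i (by omega) j hj) hd
    rwa [Complex.dist_eq] at this
  have hadjV : ∀ i ≤ N, ∀ j < N, ‖z i (j+1) - z i j‖ < δ := by
    intro i hi j hj
    have hd : dist (q i (j+1)) (q i j) < η := by
      rw [Prod.dist_eq]
      have h2 : dist ((i:ℝ)/(N:ℝ)) ((i:ℝ)/(N:ℝ)) = 0 := dist_self _
      simp only [hqdef]
      rw [h2]
      exact max_lt hηpos (hstep j hj)
    have := hη _ (hqK i hi (j+1) (by omega)) _ (hqK i hi j (by omega)) hd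
    rwa [Complex.dist_eq] at this
  have hH : ∀ i < N, ∀ j ≤ N, 0 < (z (i+1) j / z i j).re := fun i hi j hj =>
    ratio_re_pos' (hzne i (by omega) j hj)
      (lt_of_lt_of_le (hadjH i hi j hj) (hzge i (by omega) j hj))
  have hH' : ∀ i < N, ∀ j ≤ N, 0 < (z i j / z (i+1) j).re := by
    intro i hi j hj
    refine ratio_re_pos' (hzne (i+1) (by omega) j hj) ?_
    rw [← norm_neg, neg_sub]
    exact lt_of_lt_of_le (hadjH i hi j hj) (hzge (i+1) (by omega) j hj)
  have hV : ∀ i ≤ N, ∀ j < N, 0 < (z i (j+1) / z i j).re := fun i hi j hj =>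
    ratio_re_pos' (hzne i hi j (by omega))
      (lt_of_lt_of_le (hadjV i hi j hj) (hzge i hi j (by omega)))
  have hV' : ∀ i ≤ N, ∀ j < N, 0 < (z i j / z i (j+1)).re := by
    intro i hi j hj
    refine ratio_re_pos' (hzne i hi (j+1) (by omega)) ?_
    rw [← norm_neg, neg_sub]
    exact lt_of_lt_of_le (hadjV i hi j hj) (hzge i hi (j+1) (by omega))
  set hh : ℕ → ℕ → ℝ := fun i j => (z (i+1) j / z i j).arg with hhdef
  set vv : ℕ → ℕ → ℝ := fun i j => (z i (j+1) / z i j).arg with hvvdef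
  have hsq : ∀ i < N, ∀ j < N, hh i j - hh i (j+1) = vv i j - vv (i+1) j := by
    intro i hi j hj
    have hs := square_arg_sum' (a := z i j) (b := z (i+1) j) (c := z (i+1) (j+1))
      (d := z i (j+1)) (hzne i (by omega) j (by omega)) (hzne (i+1) (by omega) j (by omega))
      (hzne (i+1) (by omega) (j+1) (by omega)) (hzne i (by omega) (j+1) (by omega))
      (hH i hi j (by omega)) (hV (i+1) (by omega) j hj)
      (by rw [← inv_div, Complex.inv_re]
          exact div_pos (hH i hi (j+1) (by omega)) (Complex.normSq_pos.2
            (div_ne_zero (hzne (i+1) (by omega) (j+1) (by omega)) (hzne i (by omega) (j+1) (by omega)))))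
      (by rw [← inv_div, Complex.inv_re]
          exact div_pos (hV i (by omega) j hj) (Complex.normSq_pos.2
            (div_ne_zero (hzne i (by omega) (j+1) (by omega)) (hzne i (by omega) j (by omega)))))
    have e3 : (z i (j+1) / z (i+1) (j+1)).arg = -hh i (j+1) := by
      rw [← inv_div, arg_inv_of_re_pos' (hH i hi (j+1) (by omega))]
    have e4 : (z i j / z i (j+1)).arg = -vv i j := by
      rw [← inv_div, arg_inv_of_re_pos' (hV i (by omega) j hj)]
    rw [e3, e4] at hs
    simp only [hhdef, hvvdef] at hs ⊢
    linarith
  have hsum : (∑ i ∈ Finset.range N, (hh i 0 - hh i N)) =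
      ∑ j ∈ Finset.range N, (vv 0 j - vv N j) := by
    have lhs : (∑ i ∈ Finset.range N, (hh i 0 - hh i N)) =
        ∑ i ∈ Finset.range N, ∑ j ∈ Finset.range N, (hh i j - hh i (j+1)) :=
      Finset.sum_congr rfl fun i _ => (Finset.sum_range_sub' (fun j => hh i j) N).symm
    have rhs : (∑ j ∈ Finset.range N, (vv 0 j - vv N j)) =
        ∑ j ∈ Finset.range N, ∑ i ∈ Finset.range N, (vv i j - vv (i+1) j) :=
      Finset.sum_congr rfl fun j _ => (Finset.sum_range_sub' (fun i => vv i j) N).symm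
    rw [lhs, rhs, Finset.sum_comm]
    exact Finset.sum_congr rfl fun j hj => Finset.sum_congr rfl fun i hi =>
      hsq i (Finset.mem_range.1 hi) j (Finset.mem_range.1 hj)
  -- imaginary parts on the four sides
  have him : ∀ i ≤ N, ∀ j ≤ N, (z i j).im = (ψ ((j:ℝ)/(N:ℝ))).2 - (φ ((i:ℝ)/(N:ℝ))).2 := by
    intro i hi j hj
    simp only [hzdef, hqdef, hFdef, Complex.sub_im, he_im]
  have hmemI : ∀ a : ℕ, a ≤ N → ((a:ℝ)/(N:ℝ)) ∈ Icc (0:ℝ) 1 := by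
    intro a ha
    exact ⟨by positivity, (div_le_one hNpos).2 (by exact_mod_cast ha)⟩
  have hφim : ∀ a : ℕ, a ≤ N → 0 ≤ (φ ((a:ℝ)/(N:ℝ))).2 := fun a ha =>
    hAH (hφA _ (hmemI a ha))
  have hψim : ∀ a : ℕ, a ≤ N → 0 ≤ (ψ ((a:ℝ)/(N:ℝ))).2 := fun a ha =>
    hBH (hψB _ (hmemI a ha))
  have hcast0 : ((0:ℕ):ℝ)/(N:ℝ) = 0 := by simp
  have hcastN : ((N:ℕ):ℝ)/(N:ℝ) = 1 := div_self hNne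
  have hbot_im : ∀ i ≤ N, (z i 0).im ≤ 0 := by
    intro i hi
    rw [him i hi 0 (by omega), hcast0, hψ0]
    simpa using hφim i hi
  have htop_im : ∀ i ≤ N, (z i N).im ≤ 0 := by
    intro i hi
    rw [him i hi N (by omega), hcastN, hψ1]
    simpa using hφim i hi
  have hleft_im : ∀ j ≤ N, 0 ≤ (z 0 j).im := by
    intro j hj
    rw [him 0 (by omega) j hj, hcast0, hφ0]
    simpa using hψim j hj
  have hright_im : ∀ j ≤ N, 0 ≤ (z N j).im := by
    intro j hj
    rw [him N (by omega) j hj, hcastN, hφ1]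
    simpa using hψim j hj
  -- corner values
  have hcorner : ∀ a b : ℝ × ℝ, e a - e b = ((a.1 - b.1 : ℝ) : ℂ) + ((a.2 - b.2 : ℝ) : ℂ) * Complex.I := by
    intro a b
    simp only [he]
    push_cast
    ring
  have hz00 : z 0 0 = ((x₂ - x₁ : ℝ) : ℂ) := by
    simp only [hzdef, hqdef, hFdef, hcast0, hψ0, hφ0, hcorner]
    norm_num
  have hzN0 : z N 0 = ((x₂ - y₁ : ℝ) : ℂ) := by
    simp only [hzdef, hqdef, hFdef, hcast0, hcastN, hψ0, hφ1, hcorner]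
    norm_num
  have hz0N : z 0 N = ((y₂ - x₁ : ℝ) : ℂ) := by
    simp only [hzdef, hqdef, hFdef, hcast0, hcastN, hψ1, hφ0, hcorner]
    norm_num
  have hzNN : z N N = ((y₂ - y₁ : ℝ) : ℂ) := by
    simp only [hzdef, hqdef, hFdef, hcastN, hψ1, hφ1, hcorner]
    norm_num
  -- side sums
  have hbot : (∑ i ∈ Finset.range N, hh i 0) =
      (-(starRingEnd ℂ (z N 0)).arg) - (-(starRingEnd ℂ (z 0 0)).arg) := by
    rw [← Finset.sum_range_sub (fun i => -(starRingEnd ℂ (z i 0)).arg) N]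
    refine Finset.sum_congr rfl fun i hi => ?_
    have hi' := Finset.mem_range.1 hi
    exact arg_div_eq_sub_neg' (hzne i (by omega) 0 (by omega)) (hzne (i+1) (by omega) 0 (by omega))
      (hbot_im i (by omega)) (hbot_im (i+1) (by omega)) (hH i hi' 0 (by omega))
  have htop : (∑ i ∈ Finset.range N, hh i N) =
      (-(starRingEnd ℂ (z N N)).arg) - (-(starRingEnd ℂ (z 0 N)).arg) := by
    rw [← Finset.sum_range_sub (fun i => -(starRingEnd ℂ (z i N)).arg) N]
    refine Finset.sum_congr rfl fun i hi => ?_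
    have hi' := Finset.mem_range.1 hi
    exact arg_div_eq_sub_neg' (hzne i (by omega) N (by omega)) (hzne (i+1) (by omega) N (by omega))
      (htop_im i (by omega)) (htop_im (i+1) (by omega)) (hH i hi' N (by omega))
  have hleft : (∑ j ∈ Finset.range N, vv 0 j) = (z 0 N).arg - (z 0 0).arg := by
    rw [← Finset.sum_range_sub (fun j => (z 0 j).arg) N]
    refine Finset.sum_congr rfl fun j hj => ?_
    have hj' := Finset.mem_range.1 hj
    exact arg_div_eq_sub' (hzne 0 (by omega) j (by omega)) (hzne 0 (by omega) (j+1) (by omega))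
      (hleft_im j (by omega)) (hleft_im (j+1) (by omega)) (hV 0 (by omega) j hj')
  have hright : (∑ j ∈ Finset.range N, vv N j) = (z N N).arg - (z N 0).arg := by
    rw [← Finset.sum_range_sub (fun j => (z N j).arg) N]
    refine Finset.sum_congr rfl fun j hj => ?_
    have hj' := Finset.mem_range.1 hj
    exact arg_div_eq_sub' (hzne N (by omega) j (by omega)) (hzne N (by omega) (j+1) (by omega))
      (hright_im j (by omega)) (hright_im (j+1) (by omega)) (hV N (by omega) j hj')
  -- evaluate corner args
  have a00 : (z 0 0).arg = 0 := by rw [hz00]; exact Complex.arg_ofReal_of_nonneg (by linarith)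
  have aN0 : (z N 0).arg = Real.pi := by rw [hzN0]; exact Complex.arg_ofReal_of_neg (by linarith)
  have a0N : (z 0 N).arg = 0 := by rw [hz0N]; exact Complex.arg_ofReal_of_nonneg (by linarith)
  have aNN : (z N N).arg = 0 := by rw [hzNN]; exact Complex.arg_ofReal_of_nonneg (by linarith)
  have c00 : (starRingEnd ℂ (z 0 0)).arg = 0 := by
    rw [hz00, Complex.conj_ofReal]; exact Complex.arg_ofReal_of_nonneg (by linarith)
  have cN0 : (starRingEnd ℂ (z N 0)).arg = Real.pi := by
    rw [hzN0, Complex.conj_ofReal]; exact Complex.arg_ofReal_of_neg (by linarith)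
  have c0N : (starRingEnd ℂ (z 0 N)).arg = 0 := by
    rw [hz0N, Complex.conj_ofReal]; exact Complex.arg_ofReal_of_nonneg (by linarith)
  have cNN : (starRingEnd ℂ (z N N)).arg = 0 := by
    rw [hzNN, Complex.conj_ofReal]; exact Complex.arg_ofReal_of_nonneg (by linarith)
  rw [Finset.sum_sub_distrib, Finset.sum_sub_distrib, hbot, htop, hleft, hright,
    a00, aN0, a0N, aNN, c00, cN0, c0N, cNN] at hsum
  have := Real.pi_pos
  linarith
end

section
/- Let x and y be two distinct points on the baseline and let A be an arc in the closed upper halfplane H between x and y such that A \ {x, y} ⊆ ℝ × (0,∞). Then H \ A has exactly two path-connected components, exactly one of which is bounded. -/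
open Set

noncomputable section JUH
open Complex


/-- telescoping product -/
lemma JUH_tele (g : ℕ → ℂ) (n : ℕ) (hg : ∀ j, j ≤ n → g j ≠ 0) :
    ∏ j ∈ Finset.range n, (g (j+1) / g j) = g n / g 0 := by
  induction n with
  | zero => simp [div_self (hg 0 le_rfl)]
  | succ k ih =>
    rw [Finset.prod_range_succ, ih (fun j hj => hg j (hj.trans k.le_succ))]
    rw [div_mul_div_comm, mul_comm (g 0) (g k), mul_div_mul_left _ _ (hg k k.le_succ)]

lemma JUH_re_pos_of_close {w v : ℂ} (hv : v ≠ 0) (h : ‖w - v‖ < ‖v‖) :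
    0 < (w / v).re := by
  have h1 : ‖w / v - 1‖ < 1 := by
    have : w / v - 1 = (w - v) / v := by field_simp
    rw [this, norm_div]
    rw [div_lt_one (norm_pos_iff.mpr hv)]
    exact h
  have h2 : (1 - w / v).re ≤ ‖1 - w / v‖ := Complex.re_le_norm _
  have h3 : ‖1 - w / v‖ = ‖w / v - 1‖ := by
    rw [← norm_neg]; ring_nf
  have : (1 - w/v).re = 1 - (w/v).re := by simp
  linarith [this ▸ h2, h3 ▸ h1]

/-- The square. -/
def JUHQ : Set (ℝ × ℝ) := Icc 0 1 ×ˢ Icc 0 1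

lemma JUH_mem_Q {a b : ℝ} (ha : a ∈ Icc (0:ℝ) 1) (hb : b ∈ Icc (0:ℝ) 1) : (a, b) ∈ JUHQ :=
  ⟨ha, hb⟩

/-- Square log-lifting lemma: a continuous nonvanishing function on the unit square
is `exp` of a continuous function. -/
lemma JUH_sqLift (F : ℝ × ℝ → ℂ) (hc : ContinuousOn F JUHQ)
    (h0 : ∀ p ∈ JUHQ, F p ≠ 0) :
    ∃ g : ℝ × ℝ → ℂ, ContinuousOn g JUHQ ∧ ∀ p ∈ JUHQ, F p = Complex.exp (g p) := by
  have hQcomp : IsCompact JUHQ := isCompact_Icc.prod isCompact_Icc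
  have hQne : JUHQ.Nonempty := ⟨(0,0), ⟨⟨le_refl 0, zero_le_one⟩, ⟨le_refl 0, zero_le_one⟩⟩⟩
  -- minimum of |F|
  obtain ⟨p₀, hp₀Q, hp₀⟩ := hQcomp.exists_isMinOn hQne ((continuous_norm.comp_continuousOn hc))
  rw [isMinOn_iff] at hp₀
  set ε : ℝ := ‖F p₀‖ with hε
  have hεpos : 0 < ε := norm_pos_iff.mpr (h0 p₀ hp₀Q)
  -- uniform continuity
  have huc := hQcomp.uniformContinuousOn_of_continuous hc
  rw [Metric.uniformContinuousOn_iff] at huc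
  obtain ⟨δ, hδpos, hδ⟩ := huc ε hεpos
  obtain ⟨n, hn⟩ := exists_nat_one_div_lt hδpos
  have hnpos : (0:ℝ) < n + 1 := by positivity
  set N : ℕ := n + 1 with hN
  have hNR : (1:ℝ)/N < δ := by exact_mod_cast hn
  have hNpos : (0:ℝ) < N := by exact_mod_cast Nat.succ_pos n
  -- the min function
  set u : ℝ → ℕ → ℝ := fun s j => min s (j / N) with hu
  have hu0 : ∀ s ∈ Icc (0:ℝ) 1, u s 0 = 0 := fun s hs => by
    simp [hu, hs.1]
  have huN : ∀ s ∈ Icc (0:ℝ) 1, u s N = s := fun s hs => by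
    simp [hu, div_self (ne_of_gt hNpos), hs.2]
  have humem : ∀ s ∈ Icc (0:ℝ) 1, ∀ j, u s j ∈ Icc (0:ℝ) 1 := by
    intro s hs j
    constructor
    · exact le_min hs.1 (by positivity)
    · exact le_trans (min_le_left _ _) hs.2
  have hustep : ∀ s ∈ Icc (0:ℝ) 1, ∀ j : ℕ, |u s (j+1) - u s j| ≤ 1 / N := by
    intro s hs j
    have hmono : u s j ≤ u s (j+1) := by
      apply min_le_min le_rfl
      apply div_le_div_of_nonneg_right _ hNpos.le
      · exact_mod_cast Nat.le_succ j
    rw [_root_.abs_of_nonneg (by linarith)]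
    have hNinv : (0:ℝ) < 1/N := by positivity
    have : u s (j+1) ≤ u s j + 1/N := by
      rcases le_or_gt s ((j:ℝ)/N) with h | h
      · have h1 : u s (j+1) ≤ s := min_le_left _ _
        have h2 : u s j = s := min_eq_left h
        linarith
      · have h2 : u s j = (j:ℝ)/N := min_eq_right h.le
        have h1 : u s (j+1) ≤ ((j:ℕ)+1 : ℕ)/N := min_le_right _ _
        have h3 : (((j:ℕ)+1 : ℕ):ℝ)/N = (j:ℝ)/N + 1/N := by push_cast; ring
        rw [h2]
        rw [h3] at h1
        linarith
    linarith
  have h01 : (0:ℝ) ∈ Icc (0:ℝ) 1 := ⟨le_refl 0, zero_le_one⟩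
  -- key closeness fact
  have hkey : ∀ a ∈ JUHQ, ∀ b ∈ JUHQ, dist a b < δ → 0 < (F a / F b).re := by
    intro a ha b hb hab
    apply JUH_re_pos_of_close (h0 b hb)
    rw [← Complex.dist_eq]
    exact lt_of_lt_of_le (hδ a ha b hb hab) (hp₀ b hb)
  have hdist1 : ∀ s ∈ Icc (0:ℝ) 1, ∀ j : ℕ, ∀ c : ℝ,
      dist ((u s (j+1), c) : ℝ × ℝ) ((u s j, c) : ℝ × ℝ) < δ := by
    intro s hs j c
    rw [Prod.dist_eq]
    simp only [dist_self, Real.dist_eq]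
    rw [sup_eq_left.mpr (abs_nonneg _)]
    exact lt_of_le_of_lt (hustep s hs j) hNR
  have hdist2 : ∀ t ∈ Icc (0:ℝ) 1, ∀ j : ℕ, ∀ c : ℝ,
      dist ((c, u t (j+1)) : ℝ × ℝ) ((c, u t j) : ℝ × ℝ) < δ := by
    intro t ht j c
    rw [Prod.dist_eq]
    simp only [dist_self, Real.dist_eq]
    rw [sup_eq_right.mpr (abs_nonneg _)]
    exact lt_of_le_of_lt (hustep t ht j) hNR
  have hmem1 : ∀ p ∈ JUHQ, ∀ j : ℕ, ((u p.1 j, 0) : ℝ × ℝ) ∈ JUHQ := by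
    intro p hp j; exact ⟨humem p.1 hp.1 j, h01⟩
  have hmem2 : ∀ p ∈ JUHQ, ∀ j : ℕ, ((p.1, u p.2 j) : ℝ × ℝ) ∈ JUHQ := by
    intro p hp j; exact ⟨hp.1, humem p.2 hp.2 j⟩
  have hre1 : ∀ p ∈ JUHQ, ∀ j : ℕ, 0 < (F (u p.1 (j+1), 0) / F (u p.1 j, 0)).re := by
    intro p hp j
    exact hkey _ (hmem1 p hp (j+1)) _ (hmem1 p hp j) (hdist1 p.1 hp.1 j 0)
  have hre2 : ∀ p ∈ JUHQ, ∀ j : ℕ, 0 < (F (p.1, u p.2 (j+1)) / F (p.1, u p.2 j)).re := by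
    intro p hp j
    exact hkey _ (hmem2 p hp (j+1)) _ (hmem2 p hp j) (hdist2 p.2 hp.2 j p.1)
  refine ⟨fun p =>
    Complex.log (F (0,0)) + (∑ j ∈ Finset.range N, Complex.log (F (u p.1 (j+1), 0) / F (u p.1 j, 0)))
      + (∑ j ∈ Finset.range N, Complex.log (F (p.1, u p.2 (j+1)) / F (p.1, u p.2 j))), ?_, ?_⟩
  · -- continuity
    have hFc : ∀ (m1 m2 : ℝ × ℝ → ℝ), Continuous m1 → Continuous m2 →
        (∀ p ∈ JUHQ, ((m1 p, m2 p) : ℝ × ℝ) ∈ JUHQ) →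
        ContinuousOn (fun p => F (m1 p, m2 p)) JUHQ := by
      intro m1 m2 h1 h2 hm
      exact hc.comp ((h1.prodMk h2).continuousOn) hm
    apply ContinuousOn.add
    apply ContinuousOn.add continuousOn_const
    · apply continuousOn_finset_sum
      intro j _
      apply ContinuousOn.clog
      · apply ContinuousOn.div
        · exact hFc _ _ ((continuous_fst.min continuous_const)) continuous_const
            (fun p hp => hmem1 p hp (j+1))
        · exact hFc _ _ ((continuous_fst.min continuous_const)) continuous_const
            (fun p hp => hmem1 p hp j)
        · intro p hp; exact h0 _ (hmem1 p hp j)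
      · intro p hp
        exact Or.inl (hre1 p hp j)
    · apply continuousOn_finset_sum
      intro j _
      apply ContinuousOn.clog
      · apply ContinuousOn.div
        · exact hFc _ _ continuous_fst ((continuous_snd.min continuous_const))
            (fun p hp => hmem2 p hp (j+1))
        · exact hFc _ _ continuous_fst ((continuous_snd.min continuous_const))
            (fun p hp => hmem2 p hp j)
        · intro p hp; exact h0 _ (hmem2 p hp j)
      · intro p hp
        exact Or.inl (hre2 p hp j)
  · -- exp computation
    intro p hp
    have hQ00 : ((0:ℝ), (0:ℝ)) ∈ (JUHQ : Set (ℝ × ℝ)) := ⟨h01, h01⟩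
    rw [Complex.exp_add, Complex.exp_add, Complex.exp_log (h0 _ hQ00),
      Complex.exp_sum, Complex.exp_sum]
    have e1 : ∀ j ∈ Finset.range N,
        Complex.exp (Complex.log (F (u p.1 (j+1), 0) / F (u p.1 j, 0)))
          = F (u p.1 (j+1), 0) / F (u p.1 j, 0) := by
      intro j _
      exact Complex.exp_log (div_ne_zero (h0 _ (hmem1 p hp (j+1))) (h0 _ (hmem1 p hp j)))
    have e2 : ∀ j ∈ Finset.range N,
        Complex.exp (Complex.log (F (p.1, u p.2 (j+1)) / F (p.1, u p.2 j)))
          = F (p.1, u p.2 (j+1)) / F (p.1, u p.2 j) := by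
      intro j _
      exact Complex.exp_log (div_ne_zero (h0 _ (hmem2 p hp (j+1))) (h0 _ (hmem2 p hp j)))
    rw [Finset.prod_congr rfl e1, Finset.prod_congr rfl e2,
      JUH_tele (fun j => F (u p.1 j, 0)) N (fun j _ => h0 _ (hmem1 p hp j)),
      JUH_tele (fun j => F (p.1, u p.2 j)) N (fun j _ => h0 _ (hmem2 p hp j))]
    rw [hu0 p.1 hp.1, huN p.1 hp.1, hu0 p.2 hp.2, huN p.2 hp.2]
    have hne1 : F ((0:ℝ),(0:ℝ)) ≠ 0 := h0 _ hQ00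
    have hne2 : F (p.1, (0:ℝ)) ≠ 0 := h0 _ ⟨hp.1, h01⟩
    have hne1' : F (0 : ℝ × ℝ) ≠ 0 := hne1
    have hpp : ((p.1, p.2) : ℝ × ℝ) = p := rfl
    rw [hpp]
    field_simp

/-- Interval log-lifting. -/
lemma JUH_iccLift (f : ℝ → ℂ) (hc : ContinuousOn f (Icc 0 1))
    (h0 : ∀ t ∈ Icc (0:ℝ) 1, f t ≠ 0) :
    ∃ h : ℝ → ℂ, ContinuousOn h (Icc 0 1) ∧ ∀ t ∈ Icc (0:ℝ) 1, f t = Complex.exp (h t) := by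
  have h01 : (0:ℝ) ∈ Icc (0:ℝ) 1 := ⟨le_refl 0, zero_le_one⟩
  obtain ⟨g, hgc, hge⟩ := JUH_sqLift (fun p => f p.2)
    (hc.comp continuous_snd.continuousOn (fun p hp => hp.2)) (fun p hp => h0 _ hp.2)
  exact ⟨fun t => g (0, t),
    hgc.comp ((continuous_const.prodMk continuous_id).continuousOn) (fun t ht => ⟨h01, ht⟩),
    fun t ht => hge (0,t) ⟨h01, ht⟩⟩

/-- Uniqueness of lifts: equal exponentials on `[0,1]` give equal increments. -/
lemma JUH_liftUnique {f g : ℝ → ℂ} (hf : ContinuousOn f (Icc 0 1)) (hg : ContinuousOn g (Icc 0 1))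
    (h : ∀ t ∈ Icc (0:ℝ) 1, Complex.exp (f t) = Complex.exp (g t)) :
    f 1 - f 0 = g 1 - g 0 := by
  have h0m' : (0:ℝ) ∈ Icc (0:ℝ) 1 := ⟨le_refl 0, zero_le_one⟩
  have h1m' : (1:ℝ) ∈ Icc (0:ℝ) 1 := ⟨zero_le_one, le_refl 1⟩
  set d : ℝ → ℂ := fun t => f t - g t with hd_def
  have hd : ContinuousOn d (Icc 0 1) := hf.sub hg
  have hlat : ∀ t ∈ Icc (0:ℝ) 1, ∃ k : ℤ, d t = k * (2 * Real.pi * I) := by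
    intro t ht
    obtain ⟨k, hk⟩ := Complex.exp_eq_exp_iff_exists_int.mp (h t ht)
    exact ⟨k, by simp only [hd_def]; rw [hk]; ring⟩
  suffices hsub : d 1 = d 0 by
    have : f 1 - g 1 = f 0 - g 0 := hsub
    linear_combination this
  by_contra hne
  have himg : IsPreconnected (d '' Icc 0 1) := (isPreconnected_Icc).image d hd
  obtain ⟨k1, hk1⟩ := hlat 1 h1m'
  obtain ⟨k0, hk0⟩ := hlat 0 h0m'
  have hkne : k0 ≠ k1 := by
    intro hEq; apply hne; rw [hk1, hk0, hEq]
  set m : ℤ := min k0 k1 with hm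
  set c : ℝ := 2 * Real.pi * m + Real.pi with hc
  have hπ := Real.pi_pos
  have hucover : ∀ w ∈ d '' Icc 0 1, w.im ≠ c := by
    rintro w ⟨t, ht, rfl⟩ hEq
    obtain ⟨k, hk⟩ := hlat t ht
    rw [hk] at hEq
    simp only [Complex.mul_im, Complex.intCast_re, Complex.intCast_im] at hEq
    -- (k:ℝ) * (2π) = 2π m + π
    have h2 : (k:ℝ) * (2 * Real.pi) = 2 * Real.pi * m + Real.pi := by
      have := hEq
      simp [Complex.mul_im, Complex.mul_re, Complex.I_re, Complex.I_im] at this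
      linarith [this]
    have h3 : Real.pi * (2*k - 2*m - 1) = 0 := by linarith
    have h4 : (2*(k:ℝ) - 2*(m:ℝ) - 1) = 0 := by
      rcases mul_eq_zero.mp h3 with h | h
      · exact absurd h (ne_of_gt hπ)
      · exact h
    have h5 : (2*k - 2*m - 1 : ℤ) = 0 := by exact_mod_cast h4
    omega
  set U : Set ℂ := {z : ℂ | z.im < c} with hU
  set V : Set ℂ := {z : ℂ | c < z.im} with hV
  have hop1 : IsOpen U := isOpen_lt Complex.continuous_im continuous_const
  have hop2 : IsOpen V := isOpen_lt continuous_const Complex.continuous_im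
  have hmin_mem : (↑m * (2 * Real.pi * I) : ℂ) ∈ d '' Icc 0 1 := by
    rcases min_choice k0 k1 with hEq | hEq
    · rw [hm, hEq]; exact ⟨0, h0m', hk0⟩
    · rw [hm, hEq]; exact ⟨1, h1m', hk1⟩
  have hmax_mem : (↑(max k0 k1) * (2 * Real.pi * I) : ℂ) ∈ d '' Icc 0 1 := by
    rcases max_choice k0 k1 with hEq | hEq
    · rw [hEq]; exact ⟨0, h0m', hk0⟩
    · rw [hEq]; exact ⟨1, h1m', hk1⟩
  have him : ∀ k : ℤ, ((k:ℂ) * (2 * Real.pi * I)).im = (k:ℝ) * (2*Real.pi) := by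
    intro k
    simp [Complex.mul_im, Complex.mul_re, Complex.I_re, Complex.I_im]
  have hmlt : m < max k0 k1 := by
    rcases lt_or_gt_of_ne hkne with h' | h'
    · rw [hm, min_eq_left h'.le, max_eq_right h'.le]; exact h'
    · rw [hm, min_eq_right h'.le, max_eq_left h'.le]; exact h'
  have hminU : (↑m * (2 * Real.pi * I) : ℂ) ∈ U := by
    simp only [hU, mem_setOf_eq, him m, hc]
    linarith
  have hmaxV : (↑(max k0 k1) * (2 * Real.pi * I) : ℂ) ∈ V := by
    simp only [hV, mem_setOf_eq, him (max k0 k1), hc]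
    have h6 : (m + 1 : ℤ) ≤ max k0 k1 := Int.add_one_le_iff.mpr hmlt
    have h7 : ((m:ℝ) + 1) ≤ ((max k0 k1 : ℤ) : ℝ) := by exact_mod_cast h6
    nlinarith
  obtain ⟨w, hwim, hwU, hwV⟩ := himg U V hop1 hop2
    (fun w hw => by
      rcases lt_or_gt_of_ne (hucover w hw) with h' | h'
      · exact Or.inl h'
      · exact Or.inr h')
    ⟨_, hmin_mem, hminU⟩ ⟨_, hmax_mem, hmaxV⟩
  simp only [hU, hV, mem_setOf_eq] at hwU hwV
  exact absurd (hwV.trans hwU) (lt_irrefl _)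

/-- Preconnected set with nonneg sine stays in one period interval. -/
lemma JUH_sin_piece {W : Set ℝ} (hW : IsPreconnected W) (hsin : ∀ w ∈ W, 0 ≤ Real.sin w)
    (k : ℤ) {c : ℝ} (hc : c ∈ W) (hck : c ∈ Icc (2*k*Real.pi) ((2*k+1)*Real.pi)) :
    W ⊆ Icc (2*k*Real.pi) ((2*k+1)*Real.pi) := by
  have hord := hW.ordConnected
  have hπ := Real.pi_pos
  have hper : ∀ x : ℝ, Real.sin (x + k * (2*Real.pi)) = Real.sin x :=
    fun x => Real.sin_add_int_mul_two_pi x k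
  intro w hw
  constructor
  · by_contra hlt
    push_neg at hlt
    set u := max w (2*k*Real.pi - Real.pi/2) with hu
    have huW : u ∈ W := hord.out hw hc ⟨le_max_left _ _, max_le (by linarith [hck.1]) (by linarith [hck.1])⟩
    have h1 : 2*k*Real.pi - Real.pi/2 ≤ u := le_max_right _ _
    have h2 : u < 2*k*Real.pi := max_lt hlt (by linarith)
    have hsu : Real.sin u < 0 := by
      have e1 : Real.sin u = Real.sin ((u - 2*k*Real.pi) + k * (2*Real.pi)) := by ring_nf
      rw [e1, hper]
      have e2 : Real.sin (u - 2*k*Real.pi) = - Real.sin (-(u - 2*k*Real.pi)) := by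
        rw [Real.sin_neg, neg_neg]
      rw [e2, neg_lt, neg_zero]
      apply Real.sin_pos_of_pos_of_lt_pi <;> [linarith; linarith]
    linarith [hsin u huW]
  · by_contra hlt
    push_neg at hlt
    set u := min w ((2*k+1)*Real.pi + Real.pi/2) with hu
    have huW : u ∈ W := hord.out hc hw ⟨le_min (by linarith [hck.2]) (by linarith [hck.2]), min_le_left _ _⟩
    have h1 : u ≤ (2*k+1)*Real.pi + Real.pi/2 := min_le_right _ _
    have h2 : (2*k+1)*Real.pi < u := lt_min hlt (by linarith)
    have hsu : Real.sin u < 0 := by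
      have e1 : Real.sin u = Real.sin ((u - 2*k*Real.pi) + k * (2*Real.pi)) := by ring_nf
      rw [e1, hper]
      have e2 : Real.sin (u - 2*k*Real.pi) = - Real.sin ((u - 2*k*Real.pi) - Real.pi) := by
        rw [← Real.sin_add_pi]; ring_nf
      rw [e2, neg_lt, neg_zero]
      apply Real.sin_pos_of_pos_of_lt_pi <;> [linarith; linarith]
    linarith [hsin u huW]

/-- On a preconnected set where sine is strictly positive, any two points are
within distance < π. -/
lemma JUH_sin_pos_close {W : Set ℝ} (hW : IsPreconnected W) (hsin : ∀ w ∈ W, 0 < Real.sin w) :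
    ∀ w₁ ∈ W, ∀ w₂ ∈ W, |w₁ - w₂| < Real.pi := by
  have hπ := Real.pi_pos
  have key : ∀ a ∈ W, ∀ b ∈ W, a ≤ b → b - a < Real.pi := by
    intro a ha b hb hab
    by_contra hge
    push_neg at hge
    set k : ℤ := ⌈a / Real.pi⌉ with hk
    have h1 : a ≤ k * Real.pi := by
      rw [← div_le_iff₀]
      · exact Int.le_ceil _
      · exact hπ
    have h2 : (k:ℝ) * Real.pi < a + Real.pi := by
      have := Int.ceil_lt_add_one (a / Real.pi)
      calc (k:ℝ) * Real.pi < (a / Real.pi + 1) * Real.pi := by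
            apply mul_lt_mul_of_pos_right this hπ
        _ = a + Real.pi := by field_simp
    have hkW : (k:ℝ) * Real.pi ∈ W := hW.ordConnected.out ha hb ⟨h1, by linarith⟩
    have := hsin _ hkW
    rw [Real.sin_int_mul_pi] at this
    exact lt_irrefl 0 this
  intro w₁ h1 w₂ h2
  rcases le_total w₁ w₂ with h | h
  · rw [abs_sub_comm, _root_.abs_of_nonneg (by linarith)]
    exact key w₁ h1 w₂ h2 h
  · rw [_root_.abs_of_nonneg (by linarith)]
    exact key w₂ h2 w₁ h1 h

/-- Embedding of the plane into ℂ. -/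
def cC : ℝ × ℝ → ℂ := fun p => (p.1 : ℂ) + (p.2 : ℂ) * I

lemma cC_re (p : ℝ × ℝ) : (cC p).re = p.1 := by simp [cC]
lemma cC_im (p : ℝ × ℝ) : (cC p).im = p.2 := by simp [cC]
lemma cC_cont : Continuous cC := by unfold cC; fun_prop
lemma cC_sub (p q : ℝ × ℝ) : cC p - cC q = cC (p - q) := by
  simp [cC]; ring
lemma cC_inj {p q : ℝ × ℝ} (h : cC p = cC q) : p = q := by
  have h1 := congrArg Complex.re h
  have h2 := congrArg Complex.im h
  rw [cC_re, cC_re] at h1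
  rw [cC_im, cC_im] at h2
  exact Prod.ext h1 h2
lemma cC_ne {p q : ℝ × ℝ} (h : p ≠ q) : cC p - cC q ≠ 0 := by
  intro h0
  exact h (cC_inj (by linear_combination h0))

lemma JUH_joinedIn_segment {S : Set (ℝ × ℝ)} {p q : ℝ × ℝ}
    (h : ∀ t ∈ Icc (0:ℝ) 1, ((1-t) • p + t • q) ∈ S) : JoinedIn S p q := by
  refine ⟨⟨⟨fun t => (1 - (t:ℝ)) • p + (t:ℝ) • q, by fun_prop⟩, by simp, by simp⟩,
    fun t => h t t.2⟩

lemma JUH_pcIn_eq {U : Set (ℝ × ℝ)} {p q : ℝ × ℝ} (h : JoinedIn U p q) :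
    pathComponentIn U p = pathComponentIn U q := by
  ext w
  constructor
  · intro hw
    exact (h.symm).trans hw
  · intro hw
    exact h.trans hw

lemma JUH_mem_pcIn {U : Set (ℝ × ℝ)} {p q : ℝ × ℝ} (h : JoinedIn U p q) :
    q ∈ pathComponentIn U p := h

/-- First exit to the baseline: a path in `F` from the open upper halfplane to the
open lower halfplane can be truncated at its first baseline crossing. -/
lemma JUH_first_exit {p q : ℝ × ℝ} {F : Set (ℝ × ℝ)} (h : JoinedIn F p q)
    (hp : 0 < p.2) (hq : q.2 < 0) :
    ∃ w : ℝ × ℝ, w.2 = 0 ∧ JoinedIn (F ∩ {r | 0 ≤ r.2}) p w := by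
  obtain ⟨γ, hγ⟩ := h
  have hce : Continuous (fun s : ℝ => (γ.extend s).2) := (γ.continuous_extend).snd
  set T : Set ℝ := {s : ℝ | s ∈ Icc (0:ℝ) 1 ∧ (γ.extend s).2 ≤ 0} with hT
  have hTclosed : IsClosed T := by
    apply IsClosed.inter isClosed_Icc
    exact isClosed_le hce continuous_const
  have hTne : T.Nonempty := ⟨1, ⟨zero_le_one, le_refl 1⟩, by rw [γ.extend_one]; exact hq.le⟩
  have hTbdd : BddBelow T := ⟨0, fun s hs => hs.1.1⟩
  set τ := sInf T with hτ
  have hτT : τ ∈ T := hTclosed.csInf_mem hTne hTbdd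
  have hτmem : τ ∈ Icc (0:ℝ) 1 := hτT.1
  have hτpos : 0 < τ := by
    rcases lt_or_eq_of_le hτmem.1 with h' | h'
    · exact h'
    · exfalso
      have := hτT.2
      rw [← h', γ.extend_zero] at this
      linarith
  have hzero : (γ.extend τ).2 = 0 := by
    rcases lt_or_eq_of_le hτT.2 with hlt | hEq
    · exfalso
      have hopen : IsOpen {s : ℝ | (γ.extend s).2 < 0} := isOpen_lt hce continuous_const
      obtain ⟨ε, hε, hball⟩ := Metric.isOpen_iff.mp hopen τ hlt
      set s := max 0 (τ - ε/2) with hs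
      have hs1 : s < τ := max_lt hτpos (by linarith)
      have hs2 : s ∈ Metric.ball τ ε := by
        rw [Metric.mem_ball, Real.dist_eq, _root_.abs_of_nonpos (by linarith)]
        have : τ - ε/2 ≤ s := le_max_right _ _
        linarith
      have hsT : s ∈ T := by
        refine ⟨⟨le_max_left _ _, ?_⟩, (hball hs2).le⟩
        calc s ≤ τ := hs1.le
          _ ≤ 1 := hτmem.2
      exact absurd (csInf_le hTbdd hsT) (not_le.mpr hs1)
    · exact hEq
  refine ⟨γ.extend τ, hzero, ?_⟩
  refine ⟨⟨⟨fun s => γ.extend ((s:ℝ) * τ), (γ.continuous_extend).comp (by fun_prop)⟩,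
    by simp, by simp⟩, ?_⟩
  intro s
  have hsτ : (s:ℝ) * τ ∈ Icc (0:ℝ) 1 := by
    constructor
    · exact mul_nonneg s.2.1 hτpos.le
    · calc (s:ℝ) * τ ≤ 1 * τ := by
            apply mul_le_mul_of_nonneg_right s.2.2 hτpos.le
        _ = τ := one_mul τ
        _ ≤ 1 := hτmem.2
  constructor
  · show γ.extend ((s:ℝ) * τ) ∈ F
    rw [γ.extend_apply hsτ]
    exact hγ _
  · show 0 ≤ (γ.extend ((s:ℝ)*τ)).2
    rcases lt_or_eq_of_le (show (s:ℝ)*τ ≤ τ by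
      calc (s:ℝ)*τ ≤ 1*τ := mul_le_mul_of_nonneg_right s.2.2 hτpos.le
        _ = τ := one_mul τ) with hlt | hEq
    · by_contra hneg
      push_neg at hneg
      have : (s:ℝ)*τ ∈ T := ⟨hsτ, hneg.le⟩
      exact absurd (csInf_le hTbdd this) (not_le.mpr hlt)
    · rw [hEq, hzero]

/-- frontier of a path component of the complement of a closed set. -/
lemma JUH_frontier_pc {A : Set (ℝ × ℝ)} (hA : IsClosed A) {z : ℝ × ℝ} (hz : z ∉ A) :
    frontier (pathComponentIn Aᶜ z) ⊆ A := by
  set B := pathComponentIn Aᶜ z with hB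
  have hBopen : IsOpen B := (hA.isOpen_compl).pathComponentIn z
  intro w hw
  by_contra hwA
  rw [hBopen.frontier_eq] at hw
  obtain ⟨hwcl, hwB⟩ := hw
  obtain ⟨ε, hε, hball⟩ := Metric.isOpen_iff.mp hA.isOpen_compl w hwA
  obtain ⟨v, hvB, hvball⟩ := Metric.mem_closure_iff.mp hwcl ε hε
  have hjoin : JoinedIn (Metric.ball w ε) w v := by
    apply ((convex_ball w ε).isPathConnected ⟨w, Metric.mem_ball_self hε⟩).joinedIn
    · exact Metric.mem_ball_self hε
    · rw [Metric.mem_ball]; rw [dist_comm]; exact hvball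
  have h1 : JoinedIn Aᶜ w v := hjoin.mono hball
  have h2 : JoinedIn Aᶜ z v := hvB
  exact hwB (h2.trans h1.symm)

/-- Rotation path to the north, preserving the (squared) radius, and the upper halfplane. -/
lemma JUH_rotate_north (p : ℝ × ℝ) (hp0 : p ≠ (0,0)) :
    ∃ γ : Path p ((0 : ℝ), Real.sqrt (p.1^2+p.2^2)),
      ∀ t : unitInterval, ((γ t).1^2 + (γ t).2^2 = p.1^2 + p.2^2) ∧ (0 ≤ p.2 → 0 ≤ (γ t).2) := by
  set z : ℂ := cC p with hz
  have hz0 : z ≠ 0 := by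
    have : cC p - cC (0,0) ≠ 0 := cC_ne hp0
    rw [hz]; simpa [cC] using this
  set θ : ℝ := z.arg with hθ
  set w : ℝ → ℂ := fun t => z * Complex.exp ((↑(t * (Real.pi/2 - θ)) : ℂ) * I) with hw
  have hwc : Continuous w := by
    apply continuous_const.mul
    apply Complex.continuous_exp.comp
    apply Continuous.mul _ continuous_const
    exact Complex.continuous_ofReal.comp (by fun_prop)
  have hwabs : ∀ t : ℝ, w t = (↑(‖z‖) : ℂ)
      * Complex.exp ((↑(θ + t * (Real.pi/2 - θ)) : ℂ) * I) := by
    intro t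
    have e : w t = (↑(‖z‖) * Complex.exp ((↑z.arg) * I))
        * Complex.exp ((↑(t * (Real.pi/2 - θ)) : ℂ) * I) := by
      rw [Complex.norm_mul_exp_arg_mul_I]
    rw [e, mul_assoc, ← Complex.exp_add, ← hθ]
    congr 2
    push_cast
    ring
  have habs : ‖z‖ = Real.sqrt (p.1^2 + p.2^2) := by
    rw [Complex.norm_def, Complex.normSq_apply]
    congr 1
    rw [hz, cC_re, cC_im]
    ring
  have hre : ∀ t : ℝ, (w t).re = ‖z‖ * Real.cos (θ + t * (Real.pi/2 - θ)) := by
    intro t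
    rw [hwabs t, Complex.mul_re, Complex.ofReal_re, Complex.ofReal_im,
      Complex.exp_ofReal_mul_I_re, Complex.exp_ofReal_mul_I_im]
    ring
  have him : ∀ t : ℝ, (w t).im = ‖z‖ * Real.sin (θ + t * (Real.pi/2 - θ)) := by
    intro t
    rw [hwabs t, Complex.mul_im, Complex.ofReal_re, Complex.ofReal_im,
      Complex.exp_ofReal_mul_I_re, Complex.exp_ofReal_mul_I_im]
    ring
  refine ⟨⟨⟨fun t => ((w t).re, (w t).im), by fun_prop⟩, ?_, ?_⟩, ?_⟩
  · show ((w 0).re, (w 0).im) = p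
    have : w 0 = z := by rw [hw]; simp
    rw [this, hz, cC_re, cC_im]
  · show ((w 1).re, (w 1).im) = ((0:ℝ), Real.sqrt (p.1^2+p.2^2))
    have h1 : θ + 1 * (Real.pi/2 - θ) = Real.pi/2 := by ring
    rw [Prod.mk.injEq, hre 1, him 1, h1, Real.cos_pi_div_two, Real.sin_pi_div_two,
      mul_zero, mul_one]
    exact ⟨rfl, habs⟩
  · intro t
    constructor
    · show (w t).re^2 + (w t).im^2 = p.1^2 + p.2^2
      rw [hre t, him t]
      have h2 : (‖z‖)^2 = p.1^2 + p.2^2 := by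
        rw [Complex.sq_norm, Complex.normSq_apply, hz, cC_re, cC_im]
        ring
      have h3 := Real.sin_sq_add_cos_sq (θ + (t:ℝ) * (Real.pi/2 - θ))
      nlinarith [h3, h2]
    · intro hp2
      show 0 ≤ (w t).im
      rw [him t]
      apply mul_nonneg (norm_nonneg z)
      apply Real.sin_nonneg_of_nonneg_of_le_pi
      · have hθ0 : 0 ≤ θ := Complex.arg_nonneg_iff.mpr (by rw [hz, cC_im]; exact hp2)
        have ht0 := t.2.1
        have ht1 := t.2.2
        have hπ := Real.pi_pos
        nlinarith [ht0, ht1, hθ0]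
      · have hθπ : θ ≤ Real.pi := Complex.arg_le_pi z
        have hθ0 : 0 ≤ θ := Complex.arg_nonneg_iff.mpr (by rw [hz, cC_im]; exact hp2)
        have ht0 := t.2.1
        have ht1 := t.2.2
        have hπ := Real.pi_pos
        nlinarith [ht0, ht1, hθπ]

lemma JUH_far_plane (r : ℝ) (hr : 0 < r) {p : ℝ × ℝ} (hp : r^2 < p.1^2 + p.2^2) :
    JoinedIn {q : ℝ × ℝ | r^2 < q.1^2 + q.2^2} p ((0:ℝ), r+1) := by
  have hp0 : p ≠ (0,0) := by
    intro hEq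
    rw [hEq] at hp
    simp at hp
    nlinarith
  obtain ⟨γ, hγ⟩ := JUH_rotate_north p hp0
  have hρ : r < Real.sqrt (p.1^2 + p.2^2) := by
    rw [show r = Real.sqrt (r^2) by rw [Real.sqrt_sq hr.le]]
    exact Real.sqrt_lt_sqrt (by positivity) hp
  have J1 : JoinedIn {q : ℝ × ℝ | r^2 < q.1^2 + q.2^2} p ((0:ℝ), Real.sqrt (p.1^2+p.2^2)) :=
    ⟨γ, fun t => by rw [mem_setOf_eq, (hγ t).1]; exact hp⟩
  have J2 : JoinedIn {q : ℝ × ℝ | r^2 < q.1^2 + q.2^2}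
      ((0:ℝ), Real.sqrt (p.1^2+p.2^2)) ((0:ℝ), r+1) := by
    apply JUH_joinedIn_segment
    intro t ht
    rw [mem_setOf_eq]
    have e1 : ((1-t) • ((0:ℝ), Real.sqrt (p.1^2+p.2^2)) + t • ((0:ℝ), r+1) : ℝ × ℝ)
        = ((0:ℝ), (1-t) * Real.sqrt (p.1^2+p.2^2) + t * (r+1)) := by
      simp [Prod.ext_iff]
    rw [e1]
    simp only
    have key : r < (1-t) * Real.sqrt (p.1^2+p.2^2) + t * (r+1) := by
      rcases eq_or_lt_of_le ht.1 with h0 | h0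
      · rw [← h0]; simpa using hρ
      · nlinarith [ht.2, hρ, mul_le_mul_of_nonneg_left hρ.le (by linarith [ht.2] : (0:ℝ) ≤ 1 - t)]
    nlinarith
  exact J1.trans J2

lemma JUH_far_upper (r : ℝ) (hr : 0 < r) {p : ℝ × ℝ} (h2 : 0 ≤ p.2)
    (hp : r^2 < p.1^2 + p.2^2) :
    JoinedIn {q : ℝ × ℝ | 0 ≤ q.2 ∧ r^2 < q.1^2 + q.2^2} p ((0:ℝ), r+1) := by
  have hp0 : p ≠ (0,0) := by
    intro hEq
    rw [hEq] at hp
    simp at hp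
    nlinarith
  obtain ⟨γ, hγ⟩ := JUH_rotate_north p hp0
  have J1 : JoinedIn {q : ℝ × ℝ | 0 ≤ q.2 ∧ r^2 < q.1^2 + q.2^2} p
      ((0:ℝ), Real.sqrt (p.1^2+p.2^2)) :=
    ⟨γ, fun t => ⟨(hγ t).2 h2, by rw [(hγ t).1]; exact hp⟩⟩
  have hρ : r < Real.sqrt (p.1^2 + p.2^2) := by
    rw [show r = Real.sqrt (r^2) by rw [Real.sqrt_sq hr.le]]
    exact Real.sqrt_lt_sqrt (by positivity) hp
  have J2 : JoinedIn {q : ℝ × ℝ | 0 ≤ q.2 ∧ r^2 < q.1^2 + q.2^2}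
      ((0:ℝ), Real.sqrt (p.1^2+p.2^2)) ((0:ℝ), r+1) := by
    apply JUH_joinedIn_segment
    intro t ht
    have e1 : ((1-t) • ((0:ℝ), Real.sqrt (p.1^2+p.2^2)) + t • ((0:ℝ), r+1) : ℝ × ℝ)
        = ((0:ℝ), (1-t) * Real.sqrt (p.1^2+p.2^2) + t * (r+1)) := by
      simp [Prod.ext_iff]
    rw [e1]
    have hy : r < (1-t) * Real.sqrt (p.1^2+p.2^2) + t * (r+1) := by
      rcases eq_or_lt_of_le ht.1 with h0 | h0
      · rw [← h0]; simpa using hρ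
      · nlinarith [ht.2, hρ, mul_le_mul_of_nonneg_left hρ.le (by linarith [ht.2] : (0:ℝ) ≤ 1 - t)]
    exact ⟨by simp only; nlinarith, by simp only; nlinarith⟩
  exact J1.trans J2

/-- The separation lemma: no path in the upper halfplane avoiding the arc joins the
midpoint of the baseline segment to a point above the arc. -/
lemma JUH_separation (φ : ℝ → ℝ × ℝ) (hφc : ContinuousOn φ (Icc 0 1))
    (a b M : ℝ) (hab : a < b)
    (hφ0 : φ 0 = (a, 0)) (hφ1 : φ 1 = (b, 0))
    (hM : ∀ t ∈ Icc (0:ℝ) 1, (φ t).2 ≤ M)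
    (hup : ∀ t ∈ Icc (0:ℝ) 1, 0 ≤ (φ t).2)
    (q₀ : ℝ × ℝ) (hq₀ : M < q₀.2)
    (h : JoinedIn ({q : ℝ × ℝ | 0 ≤ q.2} \ (φ '' Icc 0 1)) (((a+b)/2, 0)) q₀) : False := by
  obtain ⟨γ, hγ⟩ := h
  have h01 : (0:ℝ) ∈ Icc (0:ℝ) 1 := ⟨le_refl 0, zero_le_one⟩
  have h11 : (1:ℝ) ∈ Icc (0:ℝ) 1 := ⟨zero_le_one, le_refl 1⟩
  have hγU : ∀ s ∈ Icc (0:ℝ) 1, γ.extend s ∈ {q : ℝ × ℝ | 0 ≤ q.2} \ (φ '' Icc 0 1) := by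
    intro s hs
    rw [γ.extend_apply hs]
    exact hγ _
  set F : ℝ × ℝ → ℂ := fun sp => cC (γ.extend sp.1) - cC (φ sp.2) with hF
  have hFc : ContinuousOn F JUHQ := by
    apply ContinuousOn.sub
    · exact ((cC_cont.comp γ.continuous_extend).comp continuous_fst).continuousOn
    · exact (cC_cont.comp_continuousOn
        (hφc.comp continuous_snd.continuousOn (fun p hp => hp.2)))
  have hF0 : ∀ sp ∈ JUHQ, F sp ≠ 0 := by
    rintro ⟨s, t⟩ ⟨hs, ht⟩
    apply cC_ne
    intro hEq
    exact (hγU s hs).2 (hEq ▸ ⟨t, ht, rfl⟩)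
  obtain ⟨g, hgc, hge⟩ := JUH_sqLift F hFc hF0
  -- compute the corner
  have hQ00 : ((0:ℝ),(0:ℝ)) ∈ JUHQ := ⟨h01, h01⟩
  have hQ01 : ((0:ℝ),(1:ℝ)) ∈ JUHQ := ⟨h01, h11⟩
  have hQ10 : ((1:ℝ),(0:ℝ)) ∈ JUHQ := ⟨h11, h01⟩
  have hQ11 : ((1:ℝ),(1:ℝ)) ∈ JUHQ := ⟨h11, h11⟩
  have hext0 : γ.extend 0 = ((a+b)/2, 0) := γ.extend_zero
  have hext1 : γ.extend 1 = q₀ := γ.extend_one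
  have hF00 : F (0,0) = (((b-a)/2 : ℝ) : ℂ) := by
    rw [hF]
    simp only
    rw [hext0, hφ0]
    simp [cC]
    push_cast
    ring
  have hF01 : F (0,1) = (((a-b)/2 : ℝ) : ℂ) := by
    rw [hF]
    simp only
    rw [hext0, hφ1]
    simp [cC]
    push_cast
    ring
  -- the corner normalizing integer
  have hsin00 : Real.sin ((g (0,0)).im) = 0 := by
    have e := hge _ hQ00
    have := congrArg Complex.im e
    rw [hF00, Complex.exp_im, Complex.ofReal_im] at this
    have hexp : (0:ℝ) < Real.exp ((g (0,0)).re) := Real.exp_pos _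
    by_contra hne
    rcases lt_or_gt_of_ne hne with h' | h' <;> nlinarith
  have hcos00 : 0 < Real.cos ((g (0,0)).im) := by
    have e := hge _ hQ00
    have := congrArg Complex.re e
    rw [hF00, Complex.exp_re, Complex.ofReal_re] at this
    have hexp : (0:ℝ) < Real.exp ((g (0,0)).re) := Real.exp_pos _
    nlinarith [hab, this]
  obtain ⟨k, hk⟩ : ∃ k : ℤ, (g (0,0)).im = k * (2*Real.pi) := by
    obtain ⟨n, hn⟩ := (Real.sin_eq_zero_iff).mp hsin00
    rcases Int.even_or_odd n with ⟨m, hm⟩ | ⟨m, hm⟩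
    · exact ⟨m, by rw [← hn, hm]; push_cast; ring⟩
    · exfalso
      have : Real.cos ((g (0,0)).im) = -1 := by
        rw [← hn, hm]
        push_cast
        rw [show ((2:ℝ)*m+1)*Real.pi = Real.pi + m * (2*Real.pi) by ring,
          Real.cos_add_int_mul_two_pi, Real.cos_pi]
      rw [this] at hcos00
      linarith
  set Θ : ℝ × ℝ → ℝ := fun sp => (g sp).im - k * (2*Real.pi) with hΘ
  have hΘc : ContinuousOn Θ JUHQ :=
    (Complex.continuous_im.comp_continuousOn hgc).sub continuousOn_const
  have hΘ00 : Θ (0,0) = 0 := by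
    show (g (0,0)).im - ↑k * (2*Real.pi) = 0
    rw [hk]; ring
  -- sine and cosine sign transfer
  have hsinΘ : ∀ sp ∈ JUHQ, (F sp).im = Real.exp ((g sp).re) * Real.sin (Θ sp) := by
    intro sp hsp
    have e := congrArg Complex.im (hge sp hsp)
    rw [Complex.exp_im] at e
    rw [hΘ]
    simp only
    rw [show (g sp).im - ↑k * (2*Real.pi) = (g sp).im + (↑(-k) : ℝ) * (2*Real.pi) by push_cast; ring,
      Real.sin_add_int_mul_two_pi]
    exact e
  have hcosΘ : ∀ sp ∈ JUHQ, (F sp).re = Real.exp ((g sp).re) * Real.cos (Θ sp) := by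
    intro sp hsp
    have e := congrArg Complex.re (hge sp hsp)
    rw [Complex.exp_re] at e
    rw [hΘ]
    simp only
    rw [show (g sp).im - ↑k * (2*Real.pi) = (g sp).im + (↑(-k) : ℝ) * (2*Real.pi) by push_cast; ring,
      Real.cos_add_int_mul_two_pi]
    exact e
  have hFim : ∀ sp : ℝ × ℝ, (F sp).im = (γ.extend sp.1).2 - (φ sp.2).2 := by
    intro sp
    rw [hF]
    simp only
    rw [← cC_im (γ.extend sp.1), ← cC_im (φ sp.2)]
    simp
  have hexpos : ∀ sp : ℝ × ℝ, (0:ℝ) < Real.exp ((g sp).re) := fun sp => Real.exp_pos _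
  -- edge s = 0
  set W0 : Set ℝ := (fun t => Θ ((0:ℝ), t)) '' Icc 0 1 with hW0
  have hW0pc : IsPreconnected W0 := isPreconnected_Icc.image _
    (hΘc.comp ((continuous_const.prodMk continuous_id).continuousOn)
      (fun t ht => ⟨h01, ht⟩))
  have hW0sin : ∀ w ∈ W0, Real.sin w ≤ 0 := by
    rintro w ⟨t, ht, rfl⟩
    have h1 := hsinΘ ((0:ℝ), t) ⟨h01, ht⟩
    have h2 : (F ((0:ℝ), t)).im ≤ 0 := by
      rw [hFim]
      simp only
      rw [hext0]
      simp only
      linarith [hup t ht]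
    nlinarith [hexpos ((0:ℝ), t)]
  have hW0sub : W0 ⊆ Icc (-Real.pi) 0 := by
    have hWneg : IsPreconnected ((fun x : ℝ => -x) '' W0) :=
      hW0pc.image _ continuous_neg.continuousOn
    have hnegsin : ∀ w ∈ (fun x : ℝ => -x) '' W0, 0 ≤ Real.sin w := by
      rintro w ⟨v, hv, rfl⟩
      rw [Real.sin_neg]
      linarith [hW0sin v hv]
    have h0mem : (0:ℝ) ∈ (fun x : ℝ => -x) '' W0 :=
      ⟨Θ ((0:ℝ),(0:ℝ)), ⟨0, h01, rfl⟩, by rw [hΘ00]; ring⟩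
    have hsub := JUH_sin_piece hWneg hnegsin 0 h0mem
      (by constructor <;> simp [Real.pi_pos.le])
    intro w hw
    have := hsub ⟨w, hw, rfl⟩
    simp only [Int.cast_zero, mem_Icc] at this ⊢
    constructor <;> linarith [this.1, this.2]
  -- value at corner (0,1)
  have hmem01 : Θ ((0:ℝ),(1:ℝ)) ∈ W0 := ⟨1, h11, rfl⟩
  have hb01 := hW0sub hmem01
  have hsin01 : Real.sin (Θ ((0:ℝ),(1:ℝ))) = 0 := by
    have h1 := hsinΘ ((0:ℝ),(1:ℝ)) hQ01
    rw [hF01] at h1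
    have h2 : ((((a-b)/2 : ℝ)) : ℂ).im = 0 := Complex.ofReal_im _
    rw [h2] at h1
    have := hexpos ((0:ℝ),(1:ℝ))
    nlinarith [Real.neg_one_le_sin (Θ ((0:ℝ),(1:ℝ))), Real.sin_le_one (Θ ((0:ℝ),(1:ℝ)))]
  have hcos01 : Real.cos (Θ ((0:ℝ),(1:ℝ))) < 0 := by
    have h1 := hcosΘ ((0:ℝ),(1:ℝ)) hQ01
    rw [hF01] at h1
    have h2 : ((((a-b)/2 : ℝ)) : ℂ).re = (a-b)/2 := Complex.ofReal_re _
    rw [h2] at h1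
    have := hexpos ((0:ℝ),(1:ℝ))
    nlinarith
  have hΘ01 : Θ ((0:ℝ),(1:ℝ)) = -Real.pi := by
    by_contra hne
    have h1 : -Real.pi < Θ ((0:ℝ),(1:ℝ)) := lt_of_le_of_ne hb01.1 (Ne.symm hne)
    rcases lt_or_eq_of_le hb01.2 with h2 | h2
    · have h3 : 0 < Real.sin (-(Θ ((0:ℝ),(1:ℝ)))) :=
        Real.sin_pos_of_pos_of_lt_pi (by linarith) (by linarith)
      rw [Real.sin_neg] at h3
      linarith [hsin01]
    · rw [h2, Real.cos_zero] at hcos01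
      linarith
  -- edge t = 0
  have hW2pc : IsPreconnected ((fun s => Θ (s, (0:ℝ))) '' Icc 0 1) := isPreconnected_Icc.image _
    (hΘc.comp ((continuous_id.prodMk continuous_const).continuousOn)
      (fun s hs => ⟨hs, h01⟩))
  have hW2sin : ∀ w ∈ (fun s => Θ (s, (0:ℝ))) '' Icc 0 1, 0 ≤ Real.sin w := by
    rintro w ⟨s, hs, rfl⟩
    have h1 := hsinΘ (s, (0:ℝ)) ⟨hs, h01⟩
    have h2 : 0 ≤ (F (s, (0:ℝ))).im := by
      rw [hFim]
      simp only
      rw [hφ0]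
      simp only
      have h3 : 0 ≤ (γ.extend s).2 := (hγU s hs).1
      linarith
    nlinarith [hexpos (s, (0:ℝ))]
  have hW2sub := JUH_sin_piece hW2pc hW2sin 0
    (show Θ ((0:ℝ),(0:ℝ)) ∈ (fun s => Θ (s, (0:ℝ))) '' Icc 0 1 from ⟨0, h01, rfl⟩)
    (by rw [hΘ00]; constructor <;> simp [Real.pi_pos.le])
  have hΘ10 : Θ ((1:ℝ),(0:ℝ)) ∈ Icc (2*((0:ℤ):ℝ)*Real.pi) ((2*((0:ℤ):ℝ)+1)*Real.pi) :=
    hW2sub ⟨1, h11, rfl⟩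
  -- edge t = 1
  have hW3pc : IsPreconnected ((fun s => Θ (s, (1:ℝ))) '' Icc 0 1) := isPreconnected_Icc.image _
    (hΘc.comp ((continuous_id.prodMk continuous_const).continuousOn)
      (fun s hs => ⟨hs, h11⟩))
  have hW3sin : ∀ w ∈ (fun s => Θ (s, (1:ℝ))) '' Icc 0 1, 0 ≤ Real.sin w := by
    rintro w ⟨s, hs, rfl⟩
    have h1 := hsinΘ (s, (1:ℝ)) ⟨hs, h11⟩
    have h2 : 0 ≤ (F (s, (1:ℝ))).im := by
      rw [hFim]
      simp only
      rw [hφ1]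
      simp only
      have h3 : 0 ≤ (γ.extend s).2 := (hγU s hs).1
      linarith
    nlinarith [hexpos (s, (1:ℝ))]
  have hW3sub := JUH_sin_piece hW3pc hW3sin (-1)
    (show Θ ((0:ℝ),(1:ℝ)) ∈ (fun s => Θ (s, (1:ℝ))) '' Icc 0 1 from ⟨0, h01, rfl⟩)
    (by
      rw [hΘ01]
      constructor
      · push_cast
        nlinarith [Real.pi_pos]
      · push_cast
        nlinarith [Real.pi_pos])
  have hΘ11 := hW3sub ⟨1, h11, rfl⟩
  -- edge s = 1
  have hW1pc : IsPreconnected ((fun t => Θ ((1:ℝ), t)) '' Icc 0 1) := isPreconnected_Icc.image _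
    (hΘc.comp ((continuous_const.prodMk continuous_id).continuousOn)
      (fun t ht => ⟨h11, ht⟩))
  have hW1sin : ∀ w ∈ (fun t => Θ ((1:ℝ), t)) '' Icc 0 1, 0 < Real.sin w := by
    rintro w ⟨t, ht, rfl⟩
    have h1 := hsinΘ ((1:ℝ), t) ⟨h11, ht⟩
    have h2 : 0 < (F ((1:ℝ), t)).im := by
      rw [hFim]
      simp only
      rw [hext1]
      linarith [hM t ht]
    nlinarith [hexpos ((1:ℝ), t)]
  have hclose := JUH_sin_pos_close hW1pc hW1sin (Θ ((1:ℝ),(0:ℝ))) ⟨0, h01, rfl⟩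
    (Θ ((1:ℝ),(1:ℝ))) ⟨1, h11, rfl⟩
  have hlow : 0 ≤ Θ ((1:ℝ),(0:ℝ)) := by
    have := hΘ10.1
    simp only [Int.cast_zero] at this
    linarith
  have hhigh : Θ ((1:ℝ),(1:ℝ)) ≤ -Real.pi := by
    have := hΘ11.2
    push_cast at this
    nlinarith [Real.pi_pos]
  have hge : Real.pi ≤ |Θ ((1:ℝ),(0:ℝ)) - Θ ((1:ℝ),(1:ℝ))| := by
    have : Real.pi ≤ Θ ((1:ℝ),(0:ℝ)) - Θ ((1:ℝ),(1:ℝ)) := by linarith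
    calc Real.pi ≤ Θ ((1:ℝ),(0:ℝ)) - Θ ((1:ℝ),(1:ℝ)) := this
      _ ≤ |Θ ((1:ℝ),(0:ℝ)) - Θ ((1:ℝ),(1:ℝ))| := le_abs_self _
  linarith [hclose, hge]

/-- No path component of the complement of an arc is bounded. -/
lemma JUH_unbounded_components
    (φ : ℝ → ℝ × ℝ) (hφc : ContinuousOn φ (Icc 0 1)) (hφinj : InjOn φ (Icc 0 1))
    {z : ℝ × ℝ} (hz : z ∉ φ '' Icc 0 1) :
    ¬ Bornology.IsBounded (pathComponentIn (φ '' Icc 0 1)ᶜ z) := by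
  classical
  intro hbd
  set A := φ '' Icc 0 1 with hA
  have hAcomp : IsCompact A := isCompact_Icc.image_of_continuousOn hφc
  have hAclosed : IsClosed A := hAcomp.isClosed
  set B := pathComponentIn Aᶜ z with hB
  have hBopen : IsOpen B := (hAclosed.isOpen_compl).pathComponentIn z
  have hzB : z ∈ B := mem_pathComponentIn_self hz
  have hfr : frontier B ⊆ A := JUH_frontier_pc hAclosed hz
  -- lift of the arc seen from z
  have harc0 : ∀ t ∈ Icc (0:ℝ) 1, cC (φ t) - cC z ≠ 0 := by
    intro t ht
    apply cC_ne
    intro hEq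
    exact hz (hEq ▸ ⟨t, ht, rfl⟩)
  obtain ⟨h, hhc, hhe⟩ := JUH_iccLift (fun t => cC (φ t) - cC z)
    ((cC_cont.comp_continuousOn hφc).sub continuousOn_const) harc0
  -- the arc is homeomorphic to [0,1]
  haveI : CompactSpace ↥(Icc (0:ℝ) 1) := isCompact_iff_compactSpace.mp isCompact_Icc
  set Φ : ↥(Icc (0:ℝ) 1) → ℝ × ℝ := (Icc (0:ℝ) 1).restrict φ with hΦ
  have hΦc : Continuous Φ := hφc.restrict
  have hΦinj : Function.Injective Φ := fun u v huv => Subtype.ext (hφinj u.2 v.2 huv)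
  have hemb := hΦc.isClosedEmbedding hΦinj
  set e := hemb.toIsEmbedding.toHomeomorph with he
  have hrange : range Φ = A := Set.range_restrict φ (Icc 0 1)
  have hfr' : frontier B ⊆ range Φ := by rw [hrange]; exact hfr
  set θfr : ↥(frontier B) → ℝ := fun w => (h ((e.symm (inclusion hfr' w)) : ℝ)).im with hθfr
  have hθfrc : Continuous θfr := by
    apply Complex.continuous_im.comp
    apply hhc.comp_continuous
    · exact continuous_subtype_val.comp (e.symm.continuous.comp (continuous_inclusion hfr'))
    · intro x
      exact (e.symm (inclusion hfr' x)).2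
  have hθkey : ∀ w : ↥(frontier B), Complex.exp ((θfr w : ℂ) * I)
      = (cC ↑w - cC z) / ‖cC ↑w - cC z‖ := by
    intro w
    set t : ↥(Icc (0:ℝ) 1) := e.symm (inclusion hfr' w) with ht
    have hΦt : Φ t = ↑w := congrArg Subtype.val (e.apply_symm_apply (inclusion hfr' w))
    have hexp : cC (↑w : ℝ × ℝ) - cC z = Complex.exp (h ↑t) := by
      have := hhe ↑t t.2
      rw [← hΦt]
      exact this
    rw [hexp, Complex.norm_exp, Complex.ofReal_exp, ← Complex.exp_sub]
    congr 1
    have := Complex.re_add_im (h ↑t)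
    have hθw : (θfr w : ℂ) = ((h ↑t).im : ℂ) := by rw [hθfr]
    rw [hθw]
    linear_combination this
  -- Tietze extension
  obtain ⟨θext, hθext⟩ := ContinuousMap.exists_restrict_eq (isClosed_frontier (s := B))
    ⟨θfr, hθfrc⟩
  have hθval : ∀ (w : ℝ × ℝ) (hw : w ∈ frontier B), θext w = θfr ⟨w, hw⟩ := by
    intro w hw
    exact congrFun (congrArg ContinuousMap.toFun hθext) ⟨w, hw⟩
  -- the global unit map
  set H : ℝ × ℝ → ℂ := fun p => if p ∈ B then Complex.exp ((θext p : ℂ) * I)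
    else (cC p - cC z) / ‖cC p - cC z‖ with hH
  have hH2 : ∀ p ∉ B, H p = (cC p - cC z) / ‖cC p - cC z‖ := by
    intro p hp
    rw [hH]
    simp only [if_neg hp]
  have hH1 : ∀ p ∈ closure B, H p = Complex.exp ((θext p : ℂ) * I) := by
    intro p hp
    by_cases hpB : p ∈ B
    · rw [hH]; simp only [if_pos hpB]
    · have hpfr : p ∈ frontier B := by rw [hBopen.frontier_eq]; exact ⟨hp, hpB⟩
      rw [hH2 p hpB, hθval p hpfr]
      exact (hθkey ⟨p, hpfr⟩).symm
  have hne_z : ∀ p, p ∉ B → cC p - cC z ≠ 0 := by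
    intro p hp
    apply cC_ne
    intro hEq
    rw [hEq] at hp
    exact hp hzB
  have hHne : ∀ p, H p ≠ 0 := by
    intro p
    by_cases hpB : p ∈ B
    · rw [hH]; simp only [if_pos hpB]; exact Complex.exp_ne_zero _
    · rw [hH2 p hpB]
      apply div_ne_zero (hne_z p hpB)
      rw [Complex.ofReal_ne_zero]
      exact norm_ne_zero_iff.mpr (hne_z p hpB)
  have hucont : ∀ x : ℝ × ℝ, x ≠ z →
      ContinuousAt (fun p => (cC p - cC z) / ‖cC p - cC z‖) x := by
    intro x hx
    have hnum : Continuous fun p : ℝ × ℝ => cC p - cC z := cC_cont.sub continuous_const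
    apply ContinuousAt.div
    · exact hnum.continuousAt
    · exact Complex.continuous_ofReal.continuousAt.comp
        (continuous_norm.continuousAt.comp hnum.continuousAt)
    · rw [Complex.ofReal_ne_zero]
      exact norm_ne_zero_iff.mpr (cC_ne hx)
  have hexpcont : Continuous (fun p : ℝ × ℝ => Complex.exp ((θext p : ℂ) * I)) := by
    apply Complex.continuous_exp.comp
    exact (Complex.continuous_ofReal.comp θext.continuous).mul continuous_const
  have hHcont : Continuous H := by
    rw [continuous_iff_continuousAt]
    intro x
    by_cases hx : x ∈ B
    · apply hexpcont.continuousAt.congr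
      filter_upwards [hBopen.mem_nhds hx] with p hp
      rw [hH]; simp only [if_pos hp]
    · by_cases hx2 : x ∈ closure B
      · -- frontier point
        have CWA1 : ContinuousWithinAt H (closure B) x := by
          apply (hexpcont.continuousAt.continuousWithinAt).congr
          · intro y hy; exact hH1 y hy
          · exact hH1 x hx2
        have CWA2 : ContinuousWithinAt H Bᶜ x := by
          have hxz : x ≠ z := fun hEq => hx (hEq ▸ hzB)
          apply ((hucont x hxz).continuousWithinAt).congr
          · intro y hy; exact hH2 y hy
          · exact hH2 x hx
        have huniv : closure B ∪ Bᶜ = univ := by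
          ext p
          simp only [mem_union, mem_univ, iff_true, mem_compl_iff]
          by_cases hp : p ∈ B
          · exact Or.inl (subset_closure hp)
          · exact Or.inr hp
        have := CWA1.union CWA2
        rw [huniv] at this
        exact continuousWithinAt_univ H x |>.mp this
      · -- exterior point
        have hxz : x ≠ z := fun hEq => hx (hEq ▸ hzB)
        apply (hucont x hxz).congr
        have hopen : IsOpen (closure B)ᶜ := isClosed_closure.isOpen_compl
        filter_upwards [hopen.mem_nhds hx2] with p hp
        exact (hH2 p (fun hpB => hp (subset_closure hpB))).symm
  -- choose the big radius
  obtain ⟨R₀, hR₀⟩ := (hbd.closure).subset_closedBall z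
  set R : ℝ := 2 * max R₀ 0 + 2 with hRdef
  have hRpos : 0 < R := by positivity
  have hcirc : ∀ α : ℝ, ((z.1 + R * Real.cos α, z.2 + R * Real.sin α) : ℝ × ℝ) ∉ B := by
    intro α hmem
    have h1 := hR₀ (subset_closure hmem)
    rw [Metric.mem_closedBall] at h1
    have hmax : 1/2 ≤ max (|Real.cos α|) (|Real.sin α|) := by
      by_contra hlt
      push_neg at hlt
      have hc := lt_of_le_of_lt (le_max_left (|Real.cos α|) (|Real.sin α|)) hlt
      have hs := lt_of_le_of_lt (le_max_right (|Real.cos α|) (|Real.sin α|)) hlt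
      nlinarith [Real.sin_sq_add_cos_sq α, _root_.sq_abs (Real.cos α), _root_.sq_abs (Real.sin α),
        abs_nonneg (Real.cos α), abs_nonneg (Real.sin α)]
    have hd : dist ((z.1 + R * Real.cos α, z.2 + R * Real.sin α) : ℝ × ℝ) z
        = max (|R * Real.cos α|) (|R * Real.sin α|) := by
      rw [Prod.dist_eq]
      simp [Real.dist_eq, abs_mul]
    have hup2 : R * (1/2) ≤ dist ((z.1 + R * Real.cos α, z.2 + R * Real.sin α) : ℝ × ℝ) z := by
      rw [hd]
      rcases le_max_iff.mp hmax with hc | hs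
      · apply le_trans _ (le_max_left _ _)
        rw [abs_mul, _root_.abs_of_pos hRpos]
        nlinarith
      · apply le_trans _ (le_max_right _ _)
        rw [abs_mul, _root_.abs_of_pos hRpos]
        nlinarith
    have : max R₀ 0 + 1 ≤ dist ((z.1 + R * Real.cos α, z.2 + R * Real.sin α) : ℝ × ℝ) z := by
      rw [hRdef] at hup2
      linarith
    linarith [le_max_left R₀ (0:ℝ)]
  -- the polar-coordinates map
  set G : ℝ × ℝ → ℂ := fun q => H (z.1 + q.1 * (R * Real.cos (2*Real.pi*q.2)),
    z.2 + q.1 * (R * Real.sin (2*Real.pi*q.2))) with hG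
  have hGc : ContinuousOn G JUHQ := (hHcont.comp (by fun_prop)).continuousOn
  have hGne : ∀ q ∈ JUHQ, G q ≠ 0 := fun q _ => hHne _
  obtain ⟨Γ, hΓc, hΓe⟩ := JUH_sqLift G hGc hGne
  have hI0 : (0:ℝ) ∈ Icc (0:ℝ) 1 := ⟨le_refl 0, zero_le_one⟩
  have hI1 : (1:ℝ) ∈ Icc (0:ℝ) 1 := ⟨zero_le_one, le_refl 1⟩
  have hG0 : ∀ t : ℝ, G (0, t) = H z := by
    intro t
    rw [hG]
    simp
  have hGs01 : ∀ s : ℝ, G (s, 0) = G (s, 1) := by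
    intro s
    rw [hG]
    simp only [mul_zero, mul_one, Real.cos_zero, Real.sin_zero, Real.cos_two_pi,
      Real.sin_two_pi]
  have hG1 : ∀ t : ℝ, G (1, t) = Complex.exp ((↑(2*Real.pi*t) : ℂ) * I) := by
    intro t
    rw [hG]
    simp only [one_mul]
    rw [hH2 _ (hcirc (2*Real.pi*t))]
    have hcCeq : cC ((z.1 + R * Real.cos (2*Real.pi*t), z.2 + R * Real.sin (2*Real.pi*t)))
        - cC z = (R : ℂ) * Complex.exp ((↑(2*Real.pi*t) : ℂ) * I) := by
      rw [show Complex.exp ((↑(2*Real.pi*t) : ℂ) * I)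
          = ↑(Real.cos (2*Real.pi*t)) + ↑(Real.sin (2*Real.pi*t)) * I by
        rw [Complex.exp_mul_I, Complex.ofReal_cos, Complex.ofReal_sin]]
      simp [cC]
      push_cast
      ring
    rw [hcCeq]
    have habs : ‖(R:ℂ) * Complex.exp ((↑(2*Real.pi*t) : ℂ) * I)‖ = R := by
      rw [norm_mul, Complex.norm_exp_ofReal_mul_I, Complex.norm_real, Real.norm_eq_abs,
        _root_.abs_of_pos hRpos, mul_one]
    rw [habs]
    exact mul_div_cancel_left₀ _ (by exact_mod_cast ne_of_gt hRpos)
  -- edge lifts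
  have hc0 : ContinuousOn (fun t => Γ ((0:ℝ), t)) (Icc 0 1) :=
    hΓc.comp ((continuous_const.prodMk continuous_id).continuousOn) (fun t ht => ⟨hI0, ht⟩)
  have hc1 : ContinuousOn (fun t => Γ ((1:ℝ), t)) (Icc 0 1) :=
    hΓc.comp ((continuous_const.prodMk continuous_id).continuousOn) (fun t ht => ⟨hI1, ht⟩)
  have hcb : ContinuousOn (fun s => Γ (s, (0:ℝ))) (Icc 0 1) :=
    hΓc.comp ((continuous_id.prodMk continuous_const).continuousOn) (fun s hs => ⟨hs, hI0⟩)
  have hct : ContinuousOn (fun s => Γ (s, (1:ℝ))) (Icc 0 1) :=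
    hΓc.comp ((continuous_id.prodMk continuous_const).continuousOn) (fun s hs => ⟨hs, hI1⟩)
  have E1 := JUH_liftUnique hc0 (continuousOn_const (c := Γ ((0:ℝ),(0:ℝ))))
    (fun t ht => by
      rw [← hΓe ((0:ℝ), t) ⟨hI0, ht⟩, ← hΓe ((0:ℝ), (0:ℝ)) ⟨hI0, hI0⟩, hG0 t, hG0 0])
  have E2 := JUH_liftUnique hcb hct
    (fun s hs => by
      rw [← hΓe (s, (0:ℝ)) ⟨hs, hI0⟩, ← hΓe (s, (1:ℝ)) ⟨hs, hI1⟩]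
      exact hGs01 s)
  set gex : ℝ → ℂ := fun t => (↑(2*Real.pi*t) : ℂ) * I with hgex
  have hgexc : ContinuousOn gex (Icc 0 1) := by
    apply ContinuousOn.mul _ continuousOn_const
    exact (Complex.continuous_ofReal.comp (continuous_const.mul continuous_id)).continuousOn
  have E3 := JUH_liftUnique hc1 hgexc
    (fun t ht => by
      rw [← hΓe ((1:ℝ), t) ⟨hI1, ht⟩]
      exact hG1 t)
  have h0 : Γ ((1:ℝ),(1:ℝ)) = Γ ((1:ℝ),(0:ℝ)) := by linear_combination E1 - E2
  rw [hgex] at E3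
  simp only at E3
  have him := congrArg Complex.im E3
  rw [h0] at him
  simp only [sub_self, Complex.zero_im] at him
  have : (0:ℝ) = 2*Real.pi := by
    have h2 : ((↑(2*Real.pi*1) : ℂ) * I - (↑(2*Real.pi*0) : ℂ) * I).im = 2*Real.pi := by
      simp
    rw [h2] at him
    exact him
  linarith [Real.pi_pos]

/-- The complement of an arc in the plane is path-connected. -/
lemma JUH_compl_joined (φ : ℝ → ℝ × ℝ) (hφc : ContinuousOn φ (Icc 0 1))
    (hφinj : InjOn φ (Icc 0 1)) {z w : ℝ × ℝ}
    (hz : z ∉ φ '' Icc 0 1) (hw : w ∉ φ '' Icc 0 1) :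
    JoinedIn (φ '' Icc 0 1)ᶜ z w := by
  set A := φ '' Icc 0 1 with hA
  have hAcomp : IsCompact A := isCompact_Icc.image_of_continuousOn hφc
  obtain ⟨C, hC⟩ := isBounded_iff_forall_norm_le.mp hAcomp.isBounded
  set Cb := max C 0 with hCb
  set r := 2*Cb + 1 with hr
  have hrpos : (0:ℝ) < r := by
    have : (0:ℝ) ≤ Cb := le_max_right _ _
    rw [hr]; linarith
  have hAr : ∀ p ∈ A, p.1^2 + p.2^2 < r^2 := by
    intro p hp
    have h1 := hC p hp
    rw [Prod.norm_def] at h1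
    have h2 : |p.1| ≤ Cb := le_trans (le_trans (le_max_left _ _) h1) (le_max_left C 0)
    have h3 : |p.2| ≤ Cb := le_trans (le_trans (le_max_right _ _) h1) (le_max_left C 0)
    have h4 : (0:ℝ) ≤ Cb := le_max_right _ _
    rw [hr]
    nlinarith [_root_.sq_abs p.1, _root_.sq_abs p.2, abs_nonneg p.1, abs_nonneg p.2]
  have hSA : {q : ℝ × ℝ | r^2 < q.1^2 + q.2^2} ⊆ Aᶜ := by
    intro p hp hpA
    exact absurd (hAr p hpA) (not_lt.mpr (le_of_lt hp))
  have hfar : ∀ v : ℝ × ℝ, v ∉ A → ∃ u, JoinedIn Aᶜ v u ∧ r^2 < u.1^2 + u.2^2 := by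
    intro v hv
    have hub := JUH_unbounded_components φ hφc hφinj hv
    rw [isBounded_iff_forall_norm_le] at hub
    push_neg at hub
    obtain ⟨u, huB, hun⟩ := hub r
    refine ⟨u, huB, ?_⟩
    rw [Prod.norm_def] at hun
    rcases lt_max_iff.mp hun with h' | h'
    · rw [Real.norm_eq_abs] at h'
      nlinarith [_root_.sq_abs u.1, sq_nonneg u.2, abs_nonneg u.1]
    · rw [Real.norm_eq_abs] at h'
      nlinarith [_root_.sq_abs u.2, sq_nonneg u.1, abs_nonneg u.2]
  obtain ⟨uz, hjz, hz2⟩ := hfar z hz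
  obtain ⟨uw, hjw, hw2⟩ := hfar w hw
  have h1 : JoinedIn Aᶜ uz ((0:ℝ), r+1) := (JUH_far_plane r hrpos hz2).mono hSA
  have h2 : JoinedIn Aᶜ uw ((0:ℝ), r+1) := (JUH_far_plane r hrpos hw2).mono hSA
  exact ((hjz.trans h1).trans h2.symm).trans hjw.symm

set_option maxHeartbeats 1000000 in
lemma JUH_main (x y : ℝ × ℝ) (hx : x.2 = 0) (hy : y.2 = 0) (hlt : x.1 < y.1)
    (φ : ℝ → ℝ × ℝ) (hφc : ContinuousOn φ (Icc 0 1)) (hφinj : InjOn φ (Icc 0 1))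
    (hφ0 : φ 0 = x) (hφ1 : φ 1 = y)
    (hup : ∀ t ∈ Icc (0:ℝ) 1, 0 ≤ (φ t).2)
    (hint : ∀ p ∈ φ '' Icc 0 1, p ≠ x → p ≠ y → 0 < p.2) :
    ∃ C₁ C₂ : Set (ℝ × ℝ),
      (∃ p ∈ {q : ℝ × ℝ | 0 ≤ q.2} \ φ '' Icc 0 1,
        C₁ = pathComponentIn ({q : ℝ × ℝ | 0 ≤ q.2} \ φ '' Icc 0 1) p) ∧
      (∃ p ∈ {q : ℝ × ℝ | 0 ≤ q.2} \ φ '' Icc 0 1,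
        C₂ = pathComponentIn ({q : ℝ × ℝ | 0 ≤ q.2} \ φ '' Icc 0 1) p) ∧
      C₁ ≠ C₂ ∧
      (∀ C, (∃ p ∈ {q : ℝ × ℝ | 0 ≤ q.2} \ φ '' Icc 0 1,
        C = pathComponentIn ({q : ℝ × ℝ | 0 ≤ q.2} \ φ '' Icc 0 1) p) → C = C₁ ∨ C = C₂) ∧
      Bornology.IsBounded C₁ ∧ ¬ Bornology.IsBounded C₂ := by
  have hI0 : (0:ℝ) ∈ Icc (0:ℝ) 1 := ⟨le_refl 0, zero_le_one⟩
  have hI1 : (1:ℝ) ∈ Icc (0:ℝ) 1 := ⟨zero_le_one, le_refl 1⟩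
  set A := φ '' Icc 0 1 with hA
  set U := {q : ℝ × ℝ | 0 ≤ q.2} \ A with hUdef
  set a := x.1 with ha
  set b := y.1 with hb
  have hxA : x ∈ A := ⟨0, hI0, hφ0⟩
  have hyA : y ∈ A := ⟨1, hI1, hφ1⟩
  have hAcomp : IsCompact A := isCompact_Icc.image_of_continuousOn hφc
  obtain ⟨C, hC⟩ := isBounded_iff_forall_norm_le.mp hAcomp.isBounded
  set Cb := max C 0 with hCb
  have hCb0 : (0:ℝ) ≤ Cb := le_max_right _ _
  set r := 2*Cb + 1 with hrd
  have hrpos : (0:ℝ) < r := by rw [hrd]; linarith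
  set q₀ : ℝ × ℝ := ((0:ℝ), r+1) with hq₀d
  set m : ℝ × ℝ := ((a+b)/2, (0:ℝ)) with hmd
  have hM : ∀ t ∈ Icc (0:ℝ) 1, (φ t).2 ≤ Cb := by
    intro t ht
    have h1 := hC (φ t) ⟨t, ht, rfl⟩
    rw [Prod.norm_def] at h1
    calc (φ t).2 ≤ |(φ t).2| := le_abs_self _
      _ = ‖(φ t).2‖ := (Real.norm_eq_abs _).symm
      _ ≤ max ‖(φ t).1‖ ‖(φ t).2‖ := le_max_right _ _
      _ ≤ C := h1
      _ ≤ Cb := le_max_left _ _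
  have hAr : ∀ p ∈ A, p.1^2 + p.2^2 < r^2 := by
    intro p hp
    have h1 := hC p hp
    rw [Prod.norm_def] at h1
    have h2 : |p.1| ≤ Cb := le_trans (le_trans (le_max_left _ _) h1) (le_max_left C 0)
    have h3 : |p.2| ≤ Cb := le_trans (le_trans (le_max_right _ _) h1) (le_max_left C 0)
    rw [hrd]
    nlinarith [_root_.sq_abs p.1, _root_.sq_abs p.2, abs_nonneg p.1, abs_nonneg p.2]
  have hφ0' : φ 0 = (a, 0) := by
    rw [hφ0, ha, ← hx]
  have hφ1' : φ 1 = (b, 0) := by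
    rw [hφ1, hb, ← hy]
  have hq₀2 : Cb < q₀.2 := by
    rw [hq₀d]; simp only; rw [hrd]; linarith
  have hsep : ¬ JoinedIn U m q₀ := by
    intro hj
    exact JUH_separation φ hφc a b Cb hlt hφ0' hφ1' hM hup q₀ hq₀2 hj
  have hmU : m ∈ U := by
    constructor
    · show (0:ℝ) ≤ m.2
      rw [hmd]
    · intro hmA
      have := hint m hmA
        (fun hEq => by
          have h1 : m.1 = a := by rw [hEq]
          rw [hmd] at h1
          simp only at h1
          linarith)
        (fun hEq => by
          have h1 : m.1 = b := by rw [hEq]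
          rw [hmd] at h1
          simp only at h1
          linarith)
      rw [hmd] at this
      simp only at this
      linarith
  have hq₀U : q₀ ∈ U := by
    constructor
    · show (0:ℝ) ≤ q₀.2
      rw [hq₀d]; simp only; linarith
    · intro hq₀A
      have := hAr q₀ hq₀A
      rw [hq₀d] at this
      simp only at this
      nlinarith
  set S : Set (ℝ × ℝ) := {p : ℝ × ℝ | 0 ≤ p.2 ∧ r^2 < p.1^2 + p.2^2} with hSdef
  have hSU : S ⊆ U := by
    rintro p ⟨h1, h2⟩
    exact ⟨h1, fun hpA => absurd (hAr p hpA) (not_lt.mpr h2.le)⟩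
  have hSjoin : ∀ p ∈ S, JoinedIn U p q₀ := by
    rintro p ⟨h1, h2⟩
    exact (JUH_far_upper r hrpos h1 h2).mono hSU
  -- every point of U reaches the baseline
  have hbase : ∀ p ∈ U, ∃ w : ℝ × ℝ, w.2 = 0 ∧ w ∈ U ∧ JoinedIn U p w := by
    intro p hpU
    have hp2 : (0:ℝ) ≤ p.2 := hpU.1
    rcases eq_or_lt_of_le hp2 with hEq | hlt2
    · exact ⟨p, hEq.symm, hpU, JoinedIn.refl hpU⟩
    · have hql : ((0:ℝ), (-1:ℝ)) ∉ A := by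
        rintro ⟨t, ht, hEq⟩
        have := hup t ht
        rw [hEq] at this
        norm_num at this
      have J := JUH_compl_joined φ hφc hφinj hpU.2 hql
      obtain ⟨w, hw2, hjw⟩ := JUH_first_exit J hlt2 (by norm_num)
      have hsub : Aᶜ ∩ {q : ℝ × ℝ | 0 ≤ q.2} ⊆ U := by
        rintro q ⟨h1, h2⟩
        exact ⟨h2, h1⟩
      have hjw' : JoinedIn U p w := hjw.mono hsub
      exact ⟨w, hw2, hjw'.target_mem, hjw'⟩
  -- classification
  have hclass : ∀ p ∈ U, JoinedIn U p m ∨ JoinedIn U p q₀ := by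
    intro p hpU
    obtain ⟨w, hw2, hwU, hjpw⟩ := hbase p hpU
    have hwa : w.1 ≠ a := by
      intro hEq
      apply hwU.2
      have : w = x := by
        rw [Prod.ext_iff]
        exact ⟨hEq, by rw [hw2, hx]⟩
      rw [this]
      exact hxA
    have hwb : w.1 ≠ b := by
      intro hEq
      apply hwU.2
      have : w = y := by
        rw [Prod.ext_iff]
        exact ⟨hEq, by rw [hw2, hy]⟩
      rw [this]
      exact hyA
    have hbaseNA : ∀ c : ℝ, c ≠ a → c ≠ b → ((c, (0:ℝ)) : ℝ × ℝ) ∉ A → True := fun _ _ _ _ => trivial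
    have hbaseU : ∀ c : ℝ, c ≠ a → c ≠ b → ((c, (0:ℝ)) : ℝ × ℝ) ∈ U := by
      intro c hca hcb
      refine ⟨by rw [mem_setOf_eq], ?_⟩
      intro hmem
      have := hint _ hmem
        (fun hEq => hca (by rw [show c = ((c,(0:ℝ)) : ℝ × ℝ).1 from rfl, hEq]))
        (fun hEq => hcb (by rw [show c = ((c,(0:ℝ)) : ℝ × ℝ).1 from rfl, hEq]))
      simp only at this
      linarith
    rcases lt_trichotomy w.1 a with hcase | hcase | hcase
    · -- to the far left
      right
      set c := min w.1 0 - (r+1) with hcd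
      have hcw : c ≤ w.1 := by
        have := min_le_left w.1 0
        rw [hcd]; linarith
      have hseg : JoinedIn U w ((c, (0:ℝ)) : ℝ × ℝ) := by
        apply JUH_joinedIn_segment
        intro t ht
        have hpt : ((1-t) • w + t • ((c, (0:ℝ)) : ℝ × ℝ)) = ((1-t)*w.1 + t*c, (0:ℝ)) := by
          rw [Prod.ext_iff]
          constructor
          · rfl
          · show (1-t)*w.2 + t*0 = 0
            rw [hw2]; ring
        rw [hpt]
        have hval : (1-t)*w.1 + t*c ≤ w.1 := by nlinarith [ht.1, ht.2]
        exact hbaseU _ (by intro hEq; nlinarith) (by intro hEq; nlinarith)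
      have hcS : ((c, (0:ℝ)) : ℝ × ℝ) ∈ S := by
        refine ⟨le_refl 0, ?_⟩
        have h1 : c ≤ -(r+1) := by
          have := min_le_right w.1 0
          rw [hcd]; linarith
        simp only
        nlinarith
      exact (hjpw.trans hseg).trans (hSjoin _ hcS)
    · exact absurd hcase hwa
    · rcases lt_trichotomy w.1 b with hc2 | hc2 | hc2
      · -- between: join to m
        left
        apply hjpw.trans
        apply JUH_joinedIn_segment
        intro t ht
        have hpt : ((1-t) • w + t • m) = ((1-t)*w.1 + t*((a+b)/2), (0:ℝ)) := by
          rw [Prod.ext_iff]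
          constructor
          · rfl
          · show (1-t)*w.2 + t*m.2 = 0
            rw [hw2, hmd]; ring
        rw [hpt]
        have hval1 : a < (1-t)*w.1 + t*((a+b)/2) := by nlinarith [ht.1, ht.2]
        have hval2 : (1-t)*w.1 + t*((a+b)/2) < b := by nlinarith [ht.1, ht.2]
        exact hbaseU _ (by intro hEq; linarith) (by intro hEq; linarith)
      · exact absurd hc2 hwb
      · -- to the far right
        right
        set c := max w.1 0 + (r+1) with hcd
        have hcw : w.1 ≤ c := by
          have := le_max_left w.1 0
          rw [hcd]; linarith
        have hseg : JoinedIn U w ((c, (0:ℝ)) : ℝ × ℝ) := by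
          apply JUH_joinedIn_segment
          intro t ht
          have hpt : ((1-t) • w + t • ((c, (0:ℝ)) : ℝ × ℝ)) = ((1-t)*w.1 + t*c, (0:ℝ)) := by
            rw [Prod.ext_iff]
            constructor
            · rfl
            · show (1-t)*w.2 + t*0 = 0
              rw [hw2]; ring
          rw [hpt]
          have hval : w.1 ≤ (1-t)*w.1 + t*c := by nlinarith [ht.1, ht.2]
          exact hbaseU _ (by intro hEq; nlinarith [hlt]) (by intro hEq; nlinarith)
        have hcS : ((c, (0:ℝ)) : ℝ × ℝ) ∈ S := by
          refine ⟨le_refl 0, ?_⟩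
          have h1 : r+1 ≤ c := by
            have := le_max_right w.1 0
            rw [hcd]; linarith
          simp only
          nlinarith
        exact (hjpw.trans hseg).trans (hSjoin _ hcS)
  -- assemble
  refine ⟨pathComponentIn U m, pathComponentIn U q₀, ⟨m, hmU, rfl⟩, ⟨q₀, hq₀U, rfl⟩, ?_, ?_, ?_, ?_⟩
  · -- distinct
    intro hEq
    apply hsep
    have : q₀ ∈ pathComponentIn U m := by
      rw [hEq]
      exact mem_pathComponentIn_self hq₀U
    exact this
  · -- classification of all components
    rintro Cc ⟨p, hpU, rfl⟩
    rcases hclass p hpU with h' | h'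
    · exact Or.inl (JUH_pcIn_eq h')
    · exact Or.inr (JUH_pcIn_eq h')
  · -- C₁ bounded
    by_contra hnb
    rw [isBounded_iff_forall_norm_le] at hnb
    push_neg at hnb
    obtain ⟨u, huC, hun⟩ := hnb r
    have huS : u ∈ S := by
      refine ⟨(pathComponentIn_subset huC).1, ?_⟩
      rw [Prod.norm_def] at hun
      rcases lt_max_iff.mp hun with h' | h'
      · rw [Real.norm_eq_abs] at h'
        nlinarith [_root_.sq_abs u.1, sq_nonneg u.2, abs_nonneg u.1]
      · rw [Real.norm_eq_abs] at h'
        nlinarith [_root_.sq_abs u.2, sq_nonneg u.1, abs_nonneg u.2]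
    exact hsep ((huC : JoinedIn U m u).trans (hSjoin u huS))
  · -- C₂ unbounded
    intro hbd
    rw [isBounded_iff_forall_norm_le] at hbd
    obtain ⟨C', hC'⟩ := hbd
    set y0 := max (r+1) (C'+1) with hy0
    have hptS : ((0:ℝ), y0) ∈ S := by
      constructor
      · show (0:ℝ) ≤ y0
        have := le_max_left (r+1) (C'+1)
        rw [hy0]; linarith
      · show r^2 < (0:ℝ)^2 + y0^2
        have h1 : r + 1 ≤ y0 := le_max_left _ _
        nlinarith
    have hmem : ((0:ℝ), y0) ∈ pathComponentIn U q₀ := (hSjoin _ hptS).symm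
    have := hC' _ hmem
    rw [Prod.norm_def] at this
    have h2 : ‖y0‖ ≤ C' := le_trans (le_max_right _ _) this
    rw [Real.norm_eq_abs] at h2
    have h3 : C' + 1 ≤ y0 := le_max_right _ _
    have h4 : y0 ≤ |y0| := le_abs_self _
    linarith

end JUH


/-- Jordan curve theorem for arcs in the upper halfplane with endpoints on the
baseline: the complement has exactly two path-connected components, exactly one of
which is bounded. -/
theorem jordan_upper_halfplane
    (x y : ℝ × ℝ) (hx : x ∈ Baseline) (hy : y ∈ Baseline) (hxy : x ≠ y)
    (A : Set (ℝ × ℝ)) (hA : IsArcBetween A x y) (hAH : A ⊆ UpperHalf)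
    (hint : ∀ p ∈ A, p ≠ x → p ≠ y → 0 < p.2) :
    ∃ C₁ C₂ : Set (ℝ × ℝ),
      IsPathComponentOf C₁ (UpperHalf \ A) ∧
      IsPathComponentOf C₂ (UpperHalf \ A) ∧
      C₁ ≠ C₂ ∧
      (∀ C, IsPathComponentOf C (UpperHalf \ A) → C = C₁ ∨ C = C₂) ∧
      Bornology.IsBounded C₁ ∧ ¬ Bornology.IsBounded C₂ := by
  obtain ⟨φ, hφc, hφinj, hφ0, hφ1, hAeq⟩ := hA
  have hx2 : x.2 = 0 := hx
  have hy2 : y.2 = 0 := hy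
  have hup : ∀ t ∈ Icc (0:ℝ) 1, 0 ≤ (φ t).2 := by
    intro t ht
    have : φ t ∈ A := by rw [hAeq]; exact ⟨t, ht, rfl⟩
    exact hAH this
  have hint' : ∀ p ∈ φ '' Icc 0 1, p ≠ x → p ≠ y → 0 < p.2 := by
    rw [← hAeq]
    exact hint
  rcases lt_trichotomy x.1 y.1 with hcase | hcase | hcase
  · obtain ⟨C₁, C₂, h1, h2, h3, h4, h5, h6⟩ :=
      JUH_main x y hx2 hy2 hcase φ hφc hφinj hφ0 hφ1 hup hint'
    have hUeq : UpperHalf \ A = {q : ℝ × ℝ | 0 ≤ q.2} \ φ '' Icc 0 1 := by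
      rw [hAeq]; rfl
    refine ⟨C₁, C₂, ?_, ?_, h3, ?_, h5, h6⟩
    · rw [IsPathComponentOf, hUeq]; exact h1
    · rw [IsPathComponentOf, hUeq]; exact h2
    · intro C hC
      apply h4
      rw [IsPathComponentOf, hUeq] at hC
      exact hC
  · exfalso
    apply hxy
    rw [Prod.ext_iff]
    exact ⟨hcase, by rw [hx2, hy2]⟩
  · set ψ : ℝ → ℝ × ℝ := fun t => φ (1 - t) with hψ
    have hmem1 : ∀ t ∈ Icc (0:ℝ) 1, (1 - t) ∈ Icc (0:ℝ) 1 := by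
      intro t ht
      exact ⟨by linarith [ht.2], by linarith [ht.1]⟩
    have hψc : ContinuousOn ψ (Icc 0 1) :=
      hφc.comp ((continuous_const.sub continuous_id).continuousOn) hmem1
    have hψinj : InjOn ψ (Icc 0 1) := by
      intro u hu v hv hEq
      have := hφinj (hmem1 u hu) (hmem1 v hv) hEq
      linarith [this]
    have hψ0 : ψ 0 = y := by
      show φ (1 - 0) = y
      rw [show (1:ℝ) - 0 = 1 by ring, hφ1]
    have hψ1 : ψ 1 = x := by
      show φ (1 - 1) = x
      rw [show (1:ℝ) - 1 = 0 by ring, hφ0]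
    have himg : ψ '' Icc 0 1 = φ '' Icc 0 1 := by
      ext p
      constructor
      · rintro ⟨t, ht, rfl⟩
        exact ⟨1 - t, hmem1 t ht, rfl⟩
      · rintro ⟨t, ht, rfl⟩
        refine ⟨1 - t, hmem1 t ht, ?_⟩
        show φ (1 - (1 - t)) = φ t
        rw [show (1:ℝ) - (1 - t) = t by ring]
    have hup' : ∀ t ∈ Icc (0:ℝ) 1, 0 ≤ (ψ t).2 := fun t ht => hup (1 - t) (hmem1 t ht)
    have hint'' : ∀ p ∈ ψ '' Icc 0 1, p ≠ y → p ≠ x → 0 < p.2 := by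
      rw [himg]
      exact fun p hp h1 h2 => hint' p hp h2 h1
    obtain ⟨C₁, C₂, h1, h2, h3, h4, h5, h6⟩ :=
      JUH_main y x hy2 hx2 hcase ψ hψc hψinj hψ0 hψ1 hup' hint''
    have hUeq : UpperHalf \ A = {q : ℝ × ℝ | 0 ≤ q.2} \ ψ '' Icc 0 1 := by
      rw [hAeq, ← himg]; rfl
    refine ⟨C₁, C₂, ?_, ?_, h3, ?_, h5, h6⟩
    · rw [IsPathComponentOf, hUeq]; exact h1
    · rw [IsPathComponentOf, hUeq]; exact h2
    · intro C hC
      apply h4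
      rw [IsPathComponentOf, hUeq] at hC
      exact hC
end
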